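/- arXiv:2203.13065 — 8 statements merged into one kernel-verified Lean document; each statement's English description precedes it below -/
import Mathlib

section
/- Let A be a 2×2 real matrix with complex eigenvalues α ± iβ where α ≠ 0 and β ≠ 0, let ε > 0, let e be a unit vector in ℝ², and let φ(t) = ε(e^{tA} − I)A⁻¹e. If x(t) = e^{tA}x₀ is any solution of x' = Ax such that sup_{t∈ℝ} ‖φ(t) − x(t)‖_∞ < ∞, then x₀ = εA⁻¹e, and consequently ‖φ(t) − x(t)‖_∞ = ε‖A⁻¹e‖_∞ for all t ∈ ℝ. -/
open Matrix NormedSpace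

noncomputable def myHom (beta : ℝ) (hβ : beta ≠ 0) (B : Matrix (Fin 2) (Fin 2) ℝ)
    (hB : B * B = (-(beta ^ 2)) • 1) : ℂ →ₐ[ℝ] Matrix (Fin 2) (Fin 2) ℝ where
  toFun z := z.re • 1 + (z.im / beta) • B
  map_one' := by simp
  map_mul' z w := by
    simp only [mul_add, add_mul, smul_mul_smul_comm, mul_one, one_mul, hB,
      Complex.mul_re, Complex.mul_im, smul_smul]
    match_scalars <;> field_simp <;> ring
  map_zero' := by simp
  map_add' z w := by
    simp only [Complex.add_re, Complex.add_im, add_div, add_smul]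
    abel
  commutes' r := by
    simp [Algebra.algebraMap_eq_smul_one]

lemma exp_smul_one_eq (c : ℝ) :
    exp (c • (1 : Matrix (Fin 2) (Fin 2) ℝ)) = Real.exp c • 1 := by
  letI : SeminormedRing (Matrix (Fin 2) (Fin 2) ℝ) := Matrix.linftyOpSemiNormedRing
  letI : NormedRing (Matrix (Fin 2) (Fin 2) ℝ) := Matrix.linftyOpNormedRing
  letI : NormedAlgebra ℝ (Matrix (Fin 2) (Fin 2) ℝ) := Matrix.linftyOpNormedAlgebra
  erw [← Algebra.algebraMap_eq_smul_one,
    ← map_exp (algebraMap ℝ (Matrix (Fin 2) (Fin 2) ℝ)) (continuous_algebraMap _ _),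
    ← Real.exp_eq_exp_ℝ, Algebra.algebraMap_eq_smul_one]

lemma exp_key (beta : ℝ) (hβ : beta ≠ 0) (B : Matrix (Fin 2) (Fin 2) ℝ)
    (hB : B * B = (-(beta ^ 2)) • 1) (n : ℤ) :
    exp ((2 * Real.pi * n / beta) • B) = 1 := by
  letI : SeminormedRing (Matrix (Fin 2) (Fin 2) ℝ) := Matrix.linftyOpSemiNormedRing
  letI : NormedRing (Matrix (Fin 2) (Fin 2) ℝ) := Matrix.linftyOpNormedRing
  letI : NormedAlgebra ℝ (Matrix (Fin 2) (Fin 2) ℝ) := Matrix.linftyOpNormedAlgebra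
  have hc : Continuous (myHom beta hβ B hB) := by
    show Continuous fun z : ℂ => z.re • (1 : Matrix (Fin 2) (Fin 2) ℝ) + (z.im / beta) • B
    fun_prop
  have h1 : (2 * Real.pi * n / beta) • B
      = myHom beta hβ B hB ((n : ℂ) * (2 * Real.pi * Complex.I)) := by
    show _ = _ • (1 : Matrix (Fin 2) (Fin 2) ℝ) + _ • B
    simp
    ring_nf
  erw [h1, ← map_exp _ hc, ← Complex.exp_eq_exp_ℂ,
    Complex.exp_int_mul_two_pi_mul_I, _root_.map_one]

theorem stmt_4 (A : Matrix (Fin 2) (Fin 2) ℝ) (alpha beta : ℝ)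
    (halpha : alpha ≠ 0) (hbeta : beta ≠ 0)
    (htr : A.trace = 2 * alpha) (hdet : A.det = alpha ^ 2 + beta ^ 2)
    (ε : ℝ) (hε : 0 < ε) (e : Fin 2 → ℝ) (he : ‖e‖ = 1)
    (φ : ℝ → (Fin 2 → ℝ))
    (hφ : ∀ t : ℝ, φ t = ε • ((NormedSpace.exp (t • A) - 1).mulVec (A⁻¹.mulVec e)))
    (x₀ : Fin 2 → ℝ) (x : ℝ → (Fin 2 → ℝ))
    (hx : ∀ t : ℝ, x t = (NormedSpace.exp (t • A)).mulVec x₀)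
    (hbdd : ∃ C : ℝ, ∀ t : ℝ, ‖φ t - x t‖ ≤ C) :
    x₀ = ε • A⁻¹.mulVec e ∧ ∀ t : ℝ, ‖φ t - x t‖ = ε * ‖A⁻¹.mulVec e‖ := by
  set u : Fin 2 → ℝ := A⁻¹.mulVec e with hu
  set w : Fin 2 → ℝ := ε • u with hw
  set B : Matrix (Fin 2) (Fin 2) ℝ := A - alpha • 1 with hBdef
  have h00 : A 0 0 + A 1 1 = 2 * alpha := by
    simpa [Matrix.trace_fin_two] using htr
  have hd : A 0 0 * A 1 1 - A 0 1 * A 1 0 = alpha ^ 2 + beta ^ 2 := by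
    simpa [Matrix.det_fin_two] using hdet
  have hB : B * B = (-(beta ^ 2)) • 1 := by
    ext i j
    fin_cases i <;> fin_cases j <;>
      simp [hBdef, Matrix.mul_apply, Fin.sum_univ_two, Matrix.one_apply,
        Matrix.sub_apply, Matrix.smul_apply]
    · linear_combination A 0 0 * h00 - hd
    · linear_combination A 0 1 * h00
    · linear_combination A 1 0 * h00
    · linear_combination A 1 1 * h00 - hd
  have hexp : ∀ n : ℤ, NormedSpace.exp ((2 * Real.pi * n / beta) • A)
      = Real.exp (alpha * (2 * Real.pi * n / beta)) • 1 := by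
    intro n
    have hdecomp : (2 * Real.pi * n / beta) • A
        = (2 * Real.pi * n / beta * alpha) • (1 : Matrix (Fin 2) (Fin 2) ℝ)
          + (2 * Real.pi * n / beta) • B := by
      rw [hBdef]; module
    have hcomm : Commute ((2 * Real.pi * n / beta * alpha) • (1 : Matrix (Fin 2) (Fin 2) ℝ))
        ((2 * Real.pi * n / beta) • B) :=
      ((Commute.one_left B).smul_left _).smul_right _
    rw [hdecomp, Matrix.exp_add_of_commute _ _ hcomm, exp_smul_one_eq,
      exp_key beta hbeta B hB n, mul_one, mul_comm]
  have hkey : ∀ s : ℝ, φ s - x s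
      = (NormedSpace.exp (s • A)).mulVec (w - x₀) - w := by
    intro s
    rw [hφ s, hx s, Matrix.sub_mulVec, Matrix.one_mulVec, Matrix.mulVec_sub, hw,
      Matrix.mulVec_smul, smul_sub]
    abel
  have hx0 : x₀ = w := by
    obtain ⟨C, hC⟩ := hbdd
    by_contra hne
    have hpos : 0 < ‖w - x₀‖ := by
      rw [norm_pos_iff]
      exact sub_ne_zero_of_ne fun h => hne h.symm
    set c : ℝ := |2 * Real.pi * alpha / beta| with hc
    have hval : 2 * Real.pi * alpha / beta ≠ 0 :=
      div_ne_zero (mul_ne_zero (mul_ne_zero two_ne_zero Real.pi_ne_zero) halpha) hbeta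
    have hcpos : 0 < c := abs_pos.mpr hval
    obtain ⟨m, hm⟩ := exists_nat_gt (((C + ‖w‖) / ‖w - x₀‖ - 1) / c)
    set n : ℤ := if 0 < 2 * Real.pi * alpha / beta then (m : ℤ) else -(m : ℤ) with hn
    have hmt : alpha * (2 * Real.pi * n / beta) = m * c := by
      by_cases hpos' : 0 < 2 * Real.pi * alpha / beta
      · rw [hn, if_pos hpos', hc, abs_of_pos hpos']
        push_cast
        ring
      · have hneg : 2 * Real.pi * alpha / beta < 0 :=
          lt_of_le_of_ne (not_lt.mp hpos') hval
        rw [hn, if_neg hpos', hc, abs_of_neg hneg]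
        push_cast
        ring
    have hb := hC (2 * Real.pi * n / beta)
    rw [hkey, hexp n, hmt, Matrix.smul_mulVec, Matrix.one_mulVec] at hb
    have h1 : Real.exp (m * c) * ‖w - x₀‖ - ‖w‖ ≤ C := by
      have := norm_sub_norm_le (Real.exp (m * c) • (w - x₀)) w
      rw [norm_smul, Real.norm_eq_abs, abs_of_pos (Real.exp_pos _)] at this
      linarith
    have h2 : (1 + m * c) * ‖w - x₀‖ ≤ Real.exp (m * c) * ‖w - x₀‖ := by
      apply mul_le_mul_of_nonneg_right _ (le_of_lt hpos)
      linarith [Real.add_one_le_exp (m * c)]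
    have e1 : (C + ‖w‖) / ‖w - x₀‖ - 1 < m * c := (div_lt_iff₀ hcpos).mp hm
    have e3 : C + ‖w‖ < (1 + m * c) * ‖w - x₀‖ := by
      have e2 : (C + ‖w‖) / ‖w - x₀‖ < 1 + m * c := by linarith
      exact (div_lt_iff₀ hpos).mp e2
    linarith
  refine ⟨hx0, fun s => ?_⟩
  have hz : w - x₀ = 0 := by rw [hx0, sub_self]
  rw [hkey s, hz, Matrix.mulVec_zero, zero_sub, norm_neg, hw, norm_smul,
    Real.norm_eq_abs, abs_of_pos hε]
end

section
/- Let A be a 2×2 real matrix whose two eigenvalues both have nonzero real part, and suppose the system x' = Ax is Hyers-Ulam stable on ℝ with constant K, i.e., for every ε > 0 and every differentiable φ: ℝ → ℝ² with ‖φ'(t) − Aφ(t)‖_∞ ≤ ε for all t, there exists a solution x of x' = Ax with ‖φ(t) − x(t)‖_∞ ≤ Kε for all t. Then for every unit vector e in ℝ², K ≥ ‖A⁻¹e‖_∞, and in particular K ≥ ‖A⁻¹‖_∞ (the induced max-norm). -/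
open Matrix

/-- Induced matrix max-norm (maximum row sum of absolute values). -/
noncomputable def matNormInf (M : Matrix (Fin 2) (Fin 2) ℝ) : ℝ :=
  max (|M 0 0| + |M 0 1|) (|M 1 0| + |M 1 1|)

section Aux

attribute [local instance] Matrix.linftyOpNormedRing Matrix.linftyOpNormedAlgebra

lemma aux_expDeriv (A : Matrix (Fin 2) (Fin 2) ℝ) (x₀ : Fin 2 → ℝ) (t : ℝ) :
    HasDerivAt (fun u : ℝ => (NormedSpace.exp (u • A)).mulVec x₀)
      (A.mulVec ((NormedSpace.exp (t • A)).mulVec x₀)) t := by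
  let Lx : Matrix (Fin 2) (Fin 2) ℝ →ₗ[ℝ] (Fin 2 → ℝ) :=
    { toFun := fun M => M.mulVec x₀
      map_add' := fun M N => Matrix.add_mulVec M N x₀
      map_smul' := fun r M => by simp [Matrix.smul_mulVec] }
  let Lxc : Matrix (Fin 2) (Fin 2) ℝ →L[ℝ] (Fin 2 → ℝ) :=
    LinearMap.toContinuousLinearMap Lx
  have hE := hasDerivAt_exp_smul_const' (𝕂 := ℝ) A t
  have h := Lxc.hasFDerivAt.comp_hasDerivAt t hE
  have h2 : Lxc (A * NormedSpace.exp (t • A)) =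
      A.mulVec ((NormedSpace.exp (t • A)).mulVec x₀) := by
    show (A * NormedSpace.exp (t • A)).mulVec x₀ = _
    rw [← Matrix.mulVec_mulVec]
  exact h.congr_deriv h2

lemma aux_expCont (A : Matrix (Fin 2) (Fin 2) ℝ) (x₀ : Fin 2 → ℝ) :
    Continuous (fun t : ℝ => (NormedSpace.exp (t • A)).mulVec x₀) := by
  let Lx : Matrix (Fin 2) (Fin 2) ℝ →ₗ[ℝ] (Fin 2 → ℝ) :=
    { toFun := fun M => M.mulVec x₀
      map_add' := fun M N => Matrix.add_mulVec M N x₀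
      map_smul' := fun r M => by simp [Matrix.smul_mulVec] }
  have h1 : Continuous fun t : ℝ => NormedSpace.exp (t • A) :=
    NormedSpace.exp_continuous.comp (continuous_id.smul continuous_const)
  exact (LinearMap.toContinuousLinearMap Lx).continuous.comp h1

end Aux

theorem stmt_5 (A : Matrix (Fin 2) (Fin 2) ℝ)
    (heig : ∀ μ : ℂ, μ ^ 2 - (A.trace : ℂ) * μ + (A.det : ℂ) = 0 → μ.re ≠ 0)
    (K : ℝ)
    (hK : ∀ ε > (0:ℝ), ∀ φ : ℝ → (Fin 2 → ℝ), Differentiable ℝ φ →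
      (∀ t : ℝ, ‖deriv φ t - A.mulVec (φ t)‖ ≤ ε) →
      ∃ x₀ : Fin 2 → ℝ, ∀ t : ℝ,
        ‖φ t - (NormedSpace.exp (t • A)).mulVec x₀‖ ≤ K * ε) :
    (∀ e : Fin 2 → ℝ, ‖e‖ = 1 → K ≥ ‖A⁻¹.mulVec e‖) ∧ K ≥ matNormInf A⁻¹ := by
  have hdet : IsUnit A.det := by
    rw [isUnit_iff_ne_zero]
    intro h
    have := heig 0 (by simp [h])
    simp at this
  have hAinvA : A⁻¹ * A = 1 := Matrix.nonsing_inv_mul A hdet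
  have hAAinv : A * A⁻¹ = 1 := Matrix.mul_nonsing_inv A hdet
  let Linv : (Fin 2 → ℝ) →L[ℝ] (Fin 2 → ℝ) :=
    LinearMap.toContinuousLinearMap (Matrix.mulVecLin A⁻¹)
  have hLinv : ∀ v, Linv v = A⁻¹.mulVec v := fun v => rfl
  set cA : ℝ := ‖Linv‖ with hcA
  have key : ∀ e : Fin 2 → ℝ, ‖e‖ = 1 → ‖A⁻¹.mulVec e‖ ≤ K := by
    intro e he
    set c : Fin 2 → ℝ := A⁻¹.mulVec e with hc
    obtain ⟨x₀, hx₀⟩ := hK 1 one_pos (fun _ => c) (differentiable_const c) (by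
      intro t
      rw [deriv_const]
      have : A.mulVec c = e := by
        rw [hc, Matrix.mulVec_mulVec, hAAinv, Matrix.one_mulVec]
      rw [this, zero_sub, norm_neg, he])
    set f : ℝ → (Fin 2 → ℝ) := fun t => (NormedSpace.exp (t • A)).mulVec x₀ with hf
    have hx : ∀ t, ‖c - f t‖ ≤ K := by
      intro t; have := hx₀ t; rw [mul_one] at this; exact this
    have hfd : ∀ t : ℝ, HasDerivAt f (A.mulVec (f t)) t := fun t => aux_expDeriv A x₀ t
    have hfc : Continuous f := aux_expCont A x₀
    have hhd : ∀ t : ℝ, HasDerivAt (fun u => Linv (f u)) (f t) t := by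
      intro t
      have h := Linv.hasFDerivAt.comp_hasDerivAt t (hfd t)
      have h2 : Linv (A.mulVec (f t)) = f t := by
        rw [hLinv, Matrix.mulVec_mulVec, hAinvA, Matrix.one_mulVec]
      rw [h2] at h
      exact h
    have hbound : ∀ T : ℝ, 1 ≤ T → ‖c‖ ≤ K + 2 * cA * K / T := by
      intro T hT
      have hTpos : (0:ℝ) < T := lt_of_lt_of_le one_pos hT
      have hint : IntervalIntegrable f MeasureTheory.volume 0 T :=
        hfc.intervalIntegrable 0 T
      have hftc : ∫ t in (0:ℝ)..T, f t = Linv (f T) - Linv (f 0) :=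
        intervalIntegral.integral_eq_sub_of_hasDerivAt (fun t _ => hhd t) hint
      have hsub : ∫ t in (0:ℝ)..T, (c - f t) = (T - 0) • c - ∫ t in (0:ℝ)..T, f t := by
        rw [intervalIntegral.integral_sub (intervalIntegrable_const) hint,
          intervalIntegral.integral_const]
      have hnorm1 : ‖∫ t in (0:ℝ)..T, (c - f t)‖ ≤ K * |T - 0| :=
        intervalIntegral.norm_integral_le_of_norm_le_const (fun t _ => hx t)
      have hnorm2 : ‖(∫ t in (0:ℝ)..T, f t)‖ ≤ cA * (2 * K) := by
        rw [hftc, ← map_sub]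
        calc ‖Linv (f T - f 0)‖ ≤ cA * ‖f T - f 0‖ := Linv.le_opNorm _
          _ ≤ cA * (2 * K) := by
            apply mul_le_mul_of_nonneg_left _ (norm_nonneg _)
            have h3 : f T - f 0 = -(c - f T) + (c - f 0) := by abel
            rw [h3]
            calc ‖-(c - f T) + (c - f 0)‖ ≤ ‖-(c - f T)‖ + ‖c - f 0‖ := norm_add_le _ _
              _ ≤ K + K := by rw [norm_neg]; exact add_le_add (hx T) (hx 0)
              _ = 2 * K := by ring
      have hmain : T * ‖c‖ ≤ K * T + cA * (2 * K) := by
        have h4 : ‖(T - 0) • c‖ ≤ K * |T - 0| + cA * (2 * K) := by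
          calc ‖(T - 0) • c‖
              = ‖((T - 0) • c - ∫ t in (0:ℝ)..T, f t) + ∫ t in (0:ℝ)..T, f t‖ := by
                rw [sub_add_cancel]
            _ ≤ ‖(T - 0) • c - ∫ t in (0:ℝ)..T, f t‖ + ‖(∫ t in (0:ℝ)..T, f t)‖ :=
                norm_add_le _ _
            _ ≤ K * |T - 0| + cA * (2 * K) := by
                rw [← hsub]; exact add_le_add hnorm1 hnorm2
        rw [sub_zero, norm_smul, Real.norm_eq_abs, abs_of_pos hTpos] at h4
        linarith [h4]
      calc ‖c‖ ≤ (K * T + cA * (2 * K)) / T := by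
            rw [le_div_iff₀ hTpos]; linarith
        _ = K + 2 * cA * K / T := by field_simp
    have hlim : Filter.Tendsto (fun T : ℝ => K + 2 * cA * K / T) Filter.atTop
        (nhds (K + 0)) :=
      Filter.Tendsto.add tendsto_const_nhds
        (Filter.Tendsto.div_atTop tendsto_const_nhds Filter.tendsto_id)
    have := ge_of_tendsto hlim (Filter.eventually_atTop.2 ⟨1, hbound⟩)
    simpa using this
  constructor
  · intro e he; exact key e he
  · have hrow : ∀ i : Fin 2, |A⁻¹ i 0| + |A⁻¹ i 1| ≤ K := by
      intro i
      set e : Fin 2 → ℝ := fun j => if 0 ≤ A⁻¹ i j then 1 else -1 with he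
      have habs : ∀ j, |e j| = 1 := by
        intro j; by_cases h : 0 ≤ A⁻¹ i j <;> simp [he, h]
      have hne : ‖e‖ = 1 := by
        apply le_antisymm
        · rw [pi_norm_le_iff_of_nonneg zero_le_one]
          intro j; rw [Real.norm_eq_abs, habs j]
        · calc (1:ℝ) = ‖e 0‖ := by rw [Real.norm_eq_abs, habs 0]
            _ ≤ ‖e‖ := norm_le_pi_norm e 0
      have hmul : ∀ x : ℝ, x * (if 0 ≤ x then (1:ℝ) else -1) = |x| := by
        intro x
        by_cases h : 0 ≤ x
        · simp [h, abs_of_nonneg h]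
        · simp [h, abs_of_neg (lt_of_not_ge h)]
      have h2 : (A⁻¹.mulVec e) i = |A⁻¹ i 0| + |A⁻¹ i 1| := by
        simp only [Matrix.mulVec, dotProduct, Fin.sum_univ_two, he]
        rw [hmul, hmul]
      calc |A⁻¹ i 0| + |A⁻¹ i 1| = |(A⁻¹.mulVec e) i| := by
            rw [h2]; exact (abs_of_nonneg (by positivity)).symm
        _ ≤ ‖A⁻¹.mulVec e‖ := by rw [← Real.norm_eq_abs]; exact norm_le_pi_norm _ i
        _ ≤ K := key e hne
    rw [ge_iff_le, matNormInf, max_le_iff]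
    exact ⟨hrow 0, hrow 1⟩
end

section
/- Let A be a 2×2 real matrix with distinct eigenvalues λ₁ > λ₂ > 0 and diagonal entry a satisfying λ₁ ≥ a ≥ λ₂. Then the system x'(t) = Ax(t) is Hyers-Ulam stable on ℝ with constant K = ‖A⁻¹‖_∞: for every ε > 0 and every differentiable φ: ℝ → ℝ² with ‖φ'(t) − Aφ(t)‖_∞ ≤ ε on ℝ, there exists a solution x of x' = Ax with ‖φ(t) − x(t)‖_∞ ≤ ‖A⁻¹‖_∞ · ε for all t ∈ ℝ. -/
open Matrix

open NormedSpace in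
lemma exp_formula (A : Matrix (Fin 2) (Fin 2) ℝ) (p q : ℝ)
    (hCH : A * A = p • A - q • (1 : Matrix (Fin 2) (Fin 2) ℝ))
    (f g : ℝ → ℝ)
    (hf : ∀ t, HasDerivAt f (p * f t + g t) t)
    (hg : ∀ t, HasDerivAt g (-(q * f t)) t)
    (hf0 : f 0 = 0) (hg0 : g 0 = 1) :
    ∀ t : ℝ, exp (t • A) = f t • A + g t • 1 := by
  letI : SeminormedRing (Matrix (Fin 2) (Fin 2) ℝ) := Matrix.linftyOpSemiNormedRing
  letI : NormedRing (Matrix (Fin 2) (Fin 2) ℝ) := Matrix.linftyOpNormedRing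
  letI : NormedAlgebra ℝ (Matrix (Fin 2) (Fin 2) ℝ) := Matrix.linftyOpNormedAlgebra
  set H : ℝ → Matrix (Fin 2) (Fin 2) ℝ :=
    fun t => exp ((-t) • A) * (f t • A + g t • 1) with hHdef
  have hXneg : ∀ t : ℝ, HasDerivAt (fun t : ℝ => exp ((-t) • A))
      ((-1 : ℝ) • (A * exp ((-t) • A))) t := by
    intro t
    exact (hasDerivAt_exp_smul_const' A (-t)).scomp t (hasDerivAt_neg t)
  have hH : ∀ t : ℝ, HasDerivAt H 0 t := by
    intro t
    have hE : HasDerivAt (fun t : ℝ => f t • A + g t • 1)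
        ((p * f t + g t) • A + (-(q * f t)) • 1) t :=
      ((hf t).smul_const A).add ((hg t).smul_const 1)
    have := (hXneg t).mul hE
    refine this.congr_deriv (Eq.symm ?_)
    have hc : A * exp ((-t) • A) = exp ((-t) • A) * A :=
      (((Commute.refl A).smul_right (-t)).exp_right).eq
    rw [neg_one_smul, neg_mul, hc]
    rw [mul_add, mul_add, Matrix.mul_smul, Matrix.mul_smul, Matrix.mul_smul, Matrix.mul_smul,
      mul_one]
    rw [mul_assoc, hCH, mul_sub, Matrix.mul_smul, Matrix.mul_smul, mul_one]
    module
  have hconst : ∀ t : ℝ, H t = H 0 := fun t =>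
    is_const_of_deriv_eq_zero (fun s => (hH s).differentiableAt)
      (fun s => (hH s).deriv) t 0
  have hH0 : H 0 = 1 := by
    simp [hHdef, hf0, hg0]
  intro t
  have h1 : exp (t • A) * exp ((-t) • A) = 1 := by
    rw [← Matrix.exp_add_of_commute _ _ (((Commute.refl A).smul_left t).smul_right (-t))]
    norm_num
  calc exp (t • A) = exp (t • A) * H t := by rw [hconst t, hH0, mul_one]
    _ = (exp (t • A) * exp ((-t) • A)) * (f t • A + g t • 1) := by
        rw [hHdef]; ring_nf; rw [mul_assoc]
    _ = f t • A + g t • 1 := by rw [h1, one_mul]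

lemma key_scalar (lam1 lam2 c1 c2 co ε t : ℝ) (h12 : lam1 > lam2) (h2 : lam2 > 0)
    (χ : ℝ → ℝ) (χ' : ℝ → ℝ) (hχ : ∀ s, HasDerivAt χ (χ' s) s)
    (hbound : ∀ s, t ≤ s → |χ' s| ≤ ε * ((c1 * Real.exp (lam1*(t-s)) + c2 * Real.exp (lam2*(t-s))
      + co * (Real.exp (lam2*(t-s)) - Real.exp (lam1*(t-s)))) / (lam1-lam2))) :
    ∀ n m : ℝ, t ≤ n → n ≤ m → |χ m - χ n| ≤
      ε * ((c1 * Real.exp (lam1*(t-n))/lam1 + c2 * Real.exp (lam2*(t-n))/lam2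
        + co * (Real.exp (lam2*(t-n))/lam2 - Real.exp (lam1*(t-n))/lam1)) / (lam1-lam2))
      - ε * ((c1 * Real.exp (lam1*(t-m))/lam1 + c2 * Real.exp (lam2*(t-m))/lam2
        + co * (Real.exp (lam2*(t-m))/lam2 - Real.exp (lam1*(t-m))/lam1)) / (lam1-lam2)) := by
  have h1 : lam1 > 0 := lt_trans h2 h12
  set P : ℝ → ℝ := fun u => ε * ((c1 * Real.exp (lam1*u)/lam1 + c2 * Real.exp (lam2*u)/lam2
        + co * (Real.exp (lam2*u)/lam2 - Real.exp (lam1*u)/lam1)) / (lam1-lam2)) with hPdef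
  set ρ : ℝ → ℝ := fun u => ε * ((c1 * Real.exp (lam1*u) + c2 * Real.exp (lam2*u)
      + co * (Real.exp (lam2*u) - Real.exp (lam1*u))) / (lam1-lam2)) with hρdef
  have hbound' : ∀ s, t ≤ s → |χ' s| ≤ ρ (t - s) := fun s hs => hbound s hs
  have hexp : ∀ (l : ℝ) (s : ℝ), HasDerivAt (fun s : ℝ => Real.exp (l*(t-s)))
      (-l * Real.exp (l*(t-s))) s := by
    intro l s
    have h := (((hasDerivAt_id s).const_sub t).const_mul l).exp
    simpa [mul_comm] using h
  have hP : ∀ s : ℝ, HasDerivAt (fun s => P (t - s)) (-(ρ (t-s))) s := by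
    intro s
    have h := (((((hexp lam1 s).div_const lam1).const_mul c1).add
      (((hexp lam2 s).div_const lam2).const_mul c2)).add
      ((((hexp lam2 s).div_const lam2).sub ((hexp lam1 s).div_const lam1)).const_mul co)).div_const (lam1 - lam2)
    have h2' := h.const_mul ε
    convert h2' using 1
    · rfl
    · rfl
    · funext u; simp only [hPdef, Pi.add_apply, Pi.sub_apply]; ring
    · simp only [hρdef]
      simp only [neg_mul, neg_div, mul_div_cancel_left₀ _ (ne_of_gt h1),
        mul_div_cancel_left₀ _ (ne_of_gt h2)]
      ring
  have key : ∀ (σ : ℝ), σ = 1 ∨ σ = -1 → AntitoneOn (fun s => σ * χ s + P (t - s)) (Set.Ici t) := by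
    intro σ hσ
    have hG : ∀ s, HasDerivAt (fun s => σ * χ s + P (t - s)) (σ * χ' s + -(ρ (t-s))) s :=
      fun s => ((hχ s).const_mul σ).add (hP s)
    apply antitoneOn_of_deriv_nonpos (convex_Ici t)
    · exact (Differentiable.continuous (fun s => (hG s).differentiableAt)).continuousOn
    · exact fun x _ => (hG x).differentiableAt.differentiableWithinAt
    · intro x hx
      rw [interior_Ici] at hx
      rw [(hG x).deriv]
      have hb := hbound' x (le_of_lt hx)
      rcases hσ with rfl | rfl
      · have := le_abs_self (χ' x); linarith
      · have := neg_abs_le (χ' x); linarith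
  intro n m hn hm
  have hmem : m ∈ Set.Ici t := Set.mem_Ici.2 (le_trans hn hm)
  have k1 := key 1 (Or.inl rfl) (Set.mem_Ici.2 hn) hmem hm
  have k2 := key (-1) (Or.inr rfl) (Set.mem_Ici.2 hn) hmem hm
  simp only [one_mul, neg_one_mul, neg_mul] at k1 k2
  rw [abs_le]
  constructor <;> [skip; skip] <;> simp only [hPdef] at k1 k2 ⊢ <;> linarith

set_option maxHeartbeats 1600000 in
theorem stmt_6 (A : Matrix (Fin 2) (Fin 2) ℝ) (lam1 lam2 : ℝ)
    (h12 : lam1 > lam2) (h2 : lam2 > 0)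
    (htr : A.trace = lam1 + lam2) (hdet : A.det = lam1 * lam2)
    (ha1 : lam1 ≥ A 0 0) (ha2 : A 0 0 ≥ lam2) :
    ∀ ε > (0:ℝ), ∀ φ : ℝ → (Fin 2 → ℝ), Differentiable ℝ φ →
      (∀ t : ℝ, ‖deriv φ t - A.mulVec (φ t)‖ ≤ ε) →
      ∃ x₀ : Fin 2 → ℝ, ∀ t : ℝ,
        ‖φ t - (NormedSpace.exp (t • A)).mulVec x₀‖ ≤ matNormInf A⁻¹ * ε := by
  intro ε hε φ hφ hpert
  have h1 : lam1 > 0 := lt_trans h2 h12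
  have hΔ : lam1 - lam2 > 0 := sub_pos.2 h12
  have hq : lam1 * lam2 > 0 := mul_pos h1 h2
  -- basic entry facts
  have hd : A 1 1 = (lam1 + lam2) - A 0 0 := by
    rw [Matrix.trace_fin_two] at htr; linarith
  have hbc : A 0 1 * A 1 0 = A 0 0 * A 1 1 - lam1 * lam2 := by
    rw [Matrix.det_fin_two] at hdet; linarith
  have hCH : A * A = (lam1 + lam2) • A - (lam1 * lam2) • (1 : Matrix (Fin 2) (Fin 2) ℝ) := by
    ext i j
    fin_cases i <;> fin_cases j <;>
      simp [Matrix.mul_apply, Fin.sum_univ_two, Matrix.one_apply]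
    · linear_combination hbc + A 0 0 * hd
    · linear_combination A 0 1 * hd
    · linear_combination A 1 0 * hd
    · linear_combination hbc + A 1 1 * hd
  -- scalar coefficient functions of the matrix exponential
  set f : ℝ → ℝ := fun u => (Real.exp (lam1*u) - Real.exp (lam2*u)) / (lam1-lam2) with hfdef
  set g : ℝ → ℝ := fun u => (lam1 * Real.exp (lam2*u) - lam2 * Real.exp (lam1*u)) / (lam1-lam2)
    with hgdef
  have hexpd : ∀ (l u : ℝ), HasDerivAt (fun u : ℝ => Real.exp (l*u)) (l * Real.exp (l*u)) u := by
    intro l u; simpa [mul_comm] using ((hasDerivAt_id u).const_mul l).exp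
  have hf' : ∀ u, HasDerivAt f ((lam1+lam2) * f u + g u) u := by
    intro u
    have h := ((hexpd lam1 u).sub (hexpd lam2 u)).div_const (lam1 - lam2)
    refine h.congr_deriv (Eq.symm ?_)
    simp only [hfdef, hgdef]
    ring
  have hg' : ∀ u, HasDerivAt g (-((lam1*lam2) * f u)) u := by
    intro u
    have h := (((hexpd lam2 u).const_mul lam1).sub
      ((hexpd lam1 u).const_mul lam2)).div_const (lam1 - lam2)
    refine h.congr_deriv (Eq.symm ?_)
    simp only [hfdef, hgdef]
    ring
  have hf0 : f 0 = 0 := by simp [hfdef]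
  have hg0 : g 0 = 1 := by
    simp only [hgdef, mul_zero, Real.exp_zero, mul_one]
    exact div_self (ne_of_gt hΔ)
  have hexpA := exp_formula A (lam1+lam2) (lam1*lam2) hCH f g hf' hg' hf0 hg0
  -- the defect
  set h : ℝ → Fin 2 → ℝ := fun s => deriv φ s - A.mulVec (φ s) with hhdef
  have hhb : ∀ (s : ℝ) (k : Fin 2), |h s k| ≤ ε := by
    intro s k
    have h1' : ‖h s k‖ ≤ ‖h s‖ := norm_le_pi_norm (h s) k
    rw [Real.norm_eq_abs] at h1'
    exact le_trans h1' (hpert s)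
  have hphic : ∀ (s : ℝ) (k : Fin 2), HasDerivAt (fun s => φ s k) (deriv φ s k) s :=
    fun s k => hasDerivAt_pi.mp (hφ s).hasDerivAt k
  have hw : ∀ (s : ℝ) (i : Fin 2),
      HasDerivAt (fun s => A.mulVec (φ s) i) (A.mulVec (deriv φ s) i) s := by
    intro s i
    have := ((hphic s 0).const_mul (A i 0)).add ((hphic s 1).const_mul (A i 1))
    simp [Matrix.mulVec, dotProduct, Fin.sum_univ_two]
    exact this
  set χ : ℝ → ℝ → Fin 2 → ℝ := fun t s => f (t - s) • A.mulVec (φ s) + g (t - s) • φ s with hχdef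
  have hχt : ∀ t, χ t t = φ t := by
    intro t
    simp only [hχdef, sub_self, hf0, hg0, zero_smul, one_smul, zero_add]
  have hAA : ∀ v : Fin 2 → ℝ,
      A.mulVec (A.mulVec v) = (lam1+lam2) • A.mulVec v - (lam1*lam2) • v := by
    intro v
    rw [Matrix.mulVec_mulVec, hCH, Matrix.sub_mulVec, Matrix.smul_mulVec,
      Matrix.smul_mulVec, Matrix.one_mulVec]
  have hEmul : ∀ (l t u : ℝ), Real.exp (l*(t+u)) = Real.exp (l*t) * Real.exp (l*u) := by
    intro l t u; rw [← Real.exp_add]; ring_nf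
  have hfg1 : ∀ t u, f t * f u * (lam1+lam2) + f t * g u + g t * f u = f (t + u) := by
    intro t u
    simp only [hfdef, hgdef, hEmul]
    field_simp
    ring
  have hfg2 : ∀ t u, g t * g u - (lam1*lam2) * (f t * f u) = g (t + u) := by
    intro t u
    simp only [hfdef, hgdef, hEmul]
    field_simp
    ring
  have hsemi : ∀ t s : ℝ, (NormedSpace.exp (t • A)).mulVec (χ 0 s) = χ t s := by
    intro t s
    rw [hexpA t, Matrix.add_mulVec, Matrix.smul_mulVec, Matrix.smul_mulVec,
      Matrix.one_mulVec]
    simp only [hχdef]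
    rw [Matrix.mulVec_add, Matrix.mulVec_smul, Matrix.mulVec_smul, hAA (φ s)]
    funext i
    simp only [Pi.add_apply, Pi.smul_apply, Pi.sub_apply, smul_eq_mul]
    have e1 := hfg1 t (0 - s)
    have e2 := hfg2 t (0 - s)
    rw [show t + (0 - s) = t - s by ring] at e1 e2
    linear_combination (A.mulVec (φ s) i) * e1 + (φ s i) * e2
  have hχ' : ∀ (t s : ℝ) (i : Fin 2), HasDerivAt (fun s => χ t s i)
      (f (t - s) * (A.mulVec (h s) i) + g (t - s) * (h s i)) s := by
    intro t s i
    have hid : (fun s => χ t s i)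
        = fun s => f (t - s) * (A.mulVec (φ s) i) + g (t - s) * (φ s i) := by
      funext v; simp only [hχdef, Pi.add_apply, Pi.smul_apply, smul_eq_mul]
    rw [hid]
    have hft : HasDerivAt (fun s : ℝ => f (t - s)) (-((lam1+lam2) * f (t-s) + g (t-s))) s := by
      have := (hf' (t - s)).scomp s ((hasDerivAt_id s).const_sub t)
      simp at this ⊢
      exact this
    have hgt : HasDerivAt (fun s : ℝ => g (t - s)) ((lam1*lam2) * f (t-s)) s := by
      have := (hg' (t - s)).scomp s ((hasDerivAt_id s).const_sub t)
      simp at this ⊢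
      exact this
    have H := (hft.mul (hw s i)).add (hgt.mul (hphic s i))
    refine H.congr_deriv (Eq.symm ?_)
    have hds : deriv φ s = A.mulVec (φ s) + h s := by simp only [hhdef]; abel
    rw [hds, Matrix.mulVec_add]
    have hAAi := congrFun (hAA (φ s)) i
    simp only [Pi.add_apply, Pi.smul_apply, Pi.sub_apply, smul_eq_mul] at hAAi ⊢
    linear_combination (-(f (t - s))) * hAAi
  -- coefficients of the row-sum bounds
  set c1v : Fin 2 → ℝ := ![A 0 0 - lam2, lam1 - A 0 0] with hc1v
  set c2v : Fin 2 → ℝ := ![lam1 - A 0 0, A 0 0 - lam2] with hc2v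
  set cov : Fin 2 → ℝ := ![|A 0 1|, |A 1 0|] with hcov
  have hc1nn : ∀ i, 0 ≤ c1v i := by
    intro i; fin_cases i <;> simp [hc1v] <;> linarith
  have hc2nn : ∀ i, 0 ≤ c2v i := by
    intro i; fin_cases i <;> simp [hc2v] <;> linarith
  have hconn : ∀ i, 0 ≤ cov i := by
    intro i; fin_cases i <;> simp [hcov]
  have hrow : ∀ (t s : ℝ) (i : Fin 2), t ≤ s →
      |f (t - s) * (A.mulVec (h s) i) + g (t - s) * (h s i)| ≤
      ε * ((c1v i * Real.exp (lam1*(t-s)) + c2v i * Real.exp (lam2*(t-s))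
        + cov i * (Real.exp (lam2*(t-s)) - Real.exp (lam1*(t-s)))) / (lam1-lam2)) := by
    intro t s i hts
    have hu0 : t - s ≤ 0 := by linarith
    have he12 : Real.exp (lam1*(t-s)) ≤ Real.exp (lam2*(t-s)) :=
      Real.exp_le_exp.2 (by nlinarith)
    have hep1 : (0:ℝ) < Real.exp (lam1*(t-s)) := Real.exp_pos _
    have hep2 : (0:ℝ) < Real.exp (lam2*(t-s)) := Real.exp_pos _
    have hfabs : |f (t-s)| = (Real.exp (lam2*(t-s)) - Real.exp (lam1*(t-s))) / (lam1-lam2) := by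
      rw [hfdef]
      rw [abs_of_nonpos (div_nonpos_of_nonpos_of_nonneg (by linarith) hΔ.le)]
      ring
    have hi : i = 0 ∨ i = 1 := by fin_cases i; exacts [Or.inl rfl, Or.inr rfl]
    rcases hi with rfl | rfl
    · have hAh : A.mulVec (h s) 0 = A 0 0 * h s 0 + A 0 1 * h s 1 := by
        simp [Matrix.mulVec, dotProduct, Fin.sum_univ_two]
      rw [hAh]
      have hre : f (t-s) * (A 0 0 * h s 0 + A 0 1 * h s 1) + g (t-s) * h s 0
          = (f (t-s) * A 0 0 + g (t-s)) * h s 0 + (f (t-s) * A 0 1) * h s 1 := by ring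
      rw [hre]
      have hB1 : |f (t-s) * A 0 0 + g (t-s)| = ((A 0 0 - lam2) * Real.exp (lam1*(t-s))
          + (lam1 - A 0 0) * Real.exp (lam2*(t-s))) / (lam1-lam2) := by
        have hXid : f (t-s) * A 0 0 + g (t-s) = ((A 0 0 - lam2) * Real.exp (lam1*(t-s))
            + (lam1 - A 0 0) * Real.exp (lam2*(t-s))) / (lam1-lam2) := by
          simp only [hfdef, hgdef]; ring
        rw [hXid, abs_of_nonneg]
        apply div_nonneg _ hΔ.le
        nlinarith
      have hB2 : |f (t-s) * A 0 1| = |A 0 1| * ((Real.exp (lam2*(t-s))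
          - Real.exp (lam1*(t-s))) / (lam1-lam2)) := by
        rw [abs_mul, hfabs]; ring
      calc |(f (t-s) * A 0 0 + g (t-s)) * h s 0 + (f (t-s) * A 0 1) * h s 1|
          ≤ |f (t-s) * A 0 0 + g (t-s)| * |h s 0| + |f (t-s) * A 0 1| * |h s 1| := by
            refine le_trans (abs_add_le _ _) ?_
            rw [abs_mul, abs_mul]
        _ ≤ |f (t-s) * A 0 0 + g (t-s)| * ε + |f (t-s) * A 0 1| * ε := by
            gcongr
            · exact hhb s 0
            · exact hhb s 1
        _ = ε * ((c1v 0 * Real.exp (lam1*(t-s)) + c2v 0 * Real.exp (lam2*(t-s))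
            + cov 0 * (Real.exp (lam2*(t-s)) - Real.exp (lam1*(t-s)))) / (lam1-lam2)) := by
            rw [hB1, hB2]
            simp only [hc1v, hc2v, hcov, Matrix.cons_val_zero]
            ring
    · have hAh : A.mulVec (h s) 1 = A 1 0 * h s 0 + A 1 1 * h s 1 := by
        simp [Matrix.mulVec, dotProduct, Fin.sum_univ_two]
      rw [hAh]
      have hre : f (t-s) * (A 1 0 * h s 0 + A 1 1 * h s 1) + g (t-s) * h s 1
          = (f (t-s) * A 1 1 + g (t-s)) * h s 1 + (f (t-s) * A 1 0) * h s 0 := by ring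
      rw [hre]
      have hB1 : |f (t-s) * A 1 1 + g (t-s)| = ((lam1 - A 0 0) * Real.exp (lam1*(t-s))
          + (A 0 0 - lam2) * Real.exp (lam2*(t-s))) / (lam1-lam2) := by
        have hXid : f (t-s) * A 1 1 + g (t-s) = ((lam1 - A 0 0) * Real.exp (lam1*(t-s))
            + (A 0 0 - lam2) * Real.exp (lam2*(t-s))) / (lam1-lam2) := by
          rw [hd]; simp only [hfdef, hgdef]; ring
        rw [hXid, abs_of_nonneg]
        apply div_nonneg _ hΔ.le
        nlinarith
      have hB2 : |f (t-s) * A 1 0| = |A 1 0| * ((Real.exp (lam2*(t-s))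
          - Real.exp (lam1*(t-s))) / (lam1-lam2)) := by
        rw [abs_mul, hfabs]; ring
      calc |(f (t-s) * A 1 1 + g (t-s)) * h s 1 + (f (t-s) * A 1 0) * h s 0|
          ≤ |f (t-s) * A 1 1 + g (t-s)| * |h s 1| + |f (t-s) * A 1 0| * |h s 0| := by
            refine le_trans (abs_add_le _ _) ?_
            rw [abs_mul, abs_mul]
        _ ≤ |f (t-s) * A 1 1 + g (t-s)| * ε + |f (t-s) * A 1 0| * ε := by
            gcongr
            · exact hhb s 1
            · exact hhb s 0
        _ = ε * ((c1v 1 * Real.exp (lam1*(t-s)) + c2v 1 * Real.exp (lam2*(t-s))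
            + cov 1 * (Real.exp (lam2*(t-s)) - Real.exp (lam1*(t-s)))) / (lam1-lam2)) := by
            rw [hB1, hB2]
            simp only [hc1v, hc2v, hcov, Matrix.cons_val_one, Matrix.head_cons, Matrix.cons_val_zero]
            ring
  -- integrated bound function
  set Pf : Fin 2 → ℝ → ℝ := fun i u => ε * ((c1v i * Real.exp (lam1*u)/lam1
    + c2v i * Real.exp (lam2*u)/lam2
    + cov i * (Real.exp (lam2*u)/lam2 - Real.exp (lam1*u)/lam1)) / (lam1-lam2)) with hPf
  have hKS : ∀ (t : ℝ) (i : Fin 2) (n m : ℝ), t ≤ n → n ≤ m →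
      |χ t m i - χ t n i| ≤ Pf i (t-n) - Pf i (t-m) := by
    intro t i n m hn hm
    exact key_scalar lam1 lam2 (c1v i) (c2v i) (cov i) ε t h12 h2
      (fun s => χ t s i) (fun s => f (t - s) * (A.mulVec (h s) i) + g (t - s) * (h s i))
      (fun s => hχ' t s i) (fun s hs => hrow t s i hs) n m hn hm
  have hdivle : ∀ u : ℝ, u ≤ 0 → Real.exp (lam1*u)/lam1 ≤ Real.exp (lam2*u)/lam2 := by
    intro u hu
    exact div_le_div₀ (Real.exp_pos _).le (Real.exp_le_exp.2 (by nlinarith)) h2 h12.le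
  have hPnn : ∀ (i : Fin 2) (u : ℝ), u ≤ 0 → 0 ≤ Pf i u := by
    intro i u hu
    simp only [hPf]
    apply mul_nonneg hε.le
    apply div_nonneg _ hΔ.le
    have f1 := div_nonneg (mul_nonneg (hc1nn i) (Real.exp_pos (lam1*u)).le) h1.le
    have f2 := div_nonneg (mul_nonneg (hc2nn i) (Real.exp_pos (lam2*u)).le) h2.le
    have f3 := mul_nonneg (hconn i) (sub_nonneg.2 (hdivle u hu))
    rw [mul_div_assoc] at f1 f2 ⊢
    rw [mul_div_assoc]
    linarith
  have hPub : ∀ (i : Fin 2) (u : ℝ), u ≤ 0 →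
      Pf i u ≤ ε * (((c1v i + c2v i + cov i) * (Real.exp (lam2*u)/lam2)) / (lam1-lam2)) := by
    intro i u hu
    simp only [hPf]
    apply mul_le_mul_of_nonneg_left _ hε.le
    rw [div_le_div_iff_of_pos_right hΔ]
    have f1 : c1v i * Real.exp (lam1*u)/lam1 ≤ c1v i * (Real.exp (lam2*u)/lam2) := by
      rw [mul_div_assoc]
      exact mul_le_mul_of_nonneg_left (hdivle u hu) (hc1nn i)
    have f3 : cov i * (Real.exp (lam2*u)/lam2 - Real.exp (lam1*u)/lam1)
        ≤ cov i * (Real.exp (lam2*u)/lam2) := by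
      apply mul_le_mul_of_nonneg_left _ (hconn i)
      have := div_nonneg (Real.exp_pos (lam1*u)).le h1.le
      linarith
    have f2 : c2v i * Real.exp (lam2*u)/lam2 = c2v i * (Real.exp (lam2*u)/lam2) :=
      mul_div_assoc _ _ _
    have f4 : (c1v i + c2v i + cov i) * (Real.exp (lam2*u)/lam2)
        = c1v i * (Real.exp (lam2*u)/lam2) + c2v i * (Real.exp (lam2*u)/lam2)
          + cov i * (Real.exp (lam2*u)/lam2) := by ring
    linarith
  -- the Cauchy sequence and its limit
  set useq : ℕ → Fin 2 → ℝ := fun n => χ 0 (n:ℝ) with huseq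
  have hSnn : ∀ i, 0 ≤ c1v i + c2v i + cov i := by
    intro i
    have := hc1nn i; have := hc2nn i; have := hconn i; linarith
  set Sall : ℝ := c1v 0 + c2v 0 + cov 0 + (c1v 1 + c2v 1 + cov 1) with hSall
  have hSallnn : (0:ℝ) ≤ Sall := by
    have := hSnn 0; have := hSnn 1; simp only [hSall]; linarith
  have hSile : ∀ i : Fin 2, c1v i + c2v i + cov i ≤ Sall := by
    intro i
    have hi : i = 0 ∨ i = 1 := by fin_cases i; exacts [Or.inl rfl, Or.inr rfl]
    have h0 := hSnn 0; have h1' := hSnn 1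
    rcases hi with rfl | rfl <;> simp only [hSall] <;> linarith
  set BN : ℕ → ℝ := fun N => ε * ((Sall * (Real.exp (lam2*(-(N:ℝ)))/lam2)) / (lam1-lam2))
    with hBN
  have hBnn : ∀ N, 0 ≤ BN N := by
    intro N
    simp only [hBN]
    apply mul_nonneg hε.le
    apply div_nonneg _ hΔ.le
    exact mul_nonneg hSallnn (div_nonneg (Real.exp_pos _).le h2.le)
  have hcomp_le : ∀ (i : Fin 2) (N n m : ℕ), N ≤ n → N ≤ m →
      |χ 0 (n:ℝ) i - χ 0 (m:ℝ) i| ≤ BN N := by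
    have main : ∀ (i : Fin 2) (N n m : ℕ), N ≤ n → n ≤ m →
        |χ 0 (m:ℝ) i - χ 0 (n:ℝ) i| ≤ BN N := by
      intro i N n m hNn hnm
      have hb := hKS 0 i (n:ℝ) (m:ℝ) (Nat.cast_nonneg n) (Nat.cast_le.2 hnm)
      have hm0 : (0:ℝ) - (m:ℝ) ≤ 0 := by
        have := Nat.cast_nonneg (α := ℝ) m; linarith
      have hn0 : (0:ℝ) - (n:ℝ) ≤ 0 := by
        have := Nat.cast_nonneg (α := ℝ) n; linarith
      have h1' := hPnn i _ hm0
      have h2' := hPub i _ hn0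
      have h3' : ε * (((c1v i + c2v i + cov i) * (Real.exp (lam2*((0:ℝ)-(n:ℝ)))/lam2))
          / (lam1-lam2)) ≤ BN N := by
        simp only [hBN]
        have hEle : Real.exp (lam2*((0:ℝ)-(n:ℝ))) ≤ Real.exp (lam2*(-(N:ℝ))) := by
          apply Real.exp_le_exp.2
          apply mul_le_mul_of_nonneg_left _ h2.le
          have : (N:ℝ) ≤ (n:ℝ) := Nat.cast_le.2 hNn
          linarith
        gcongr
        all_goals first
          | exact hSile i
          | exact hEle
          | exact hSallnn
          | exact hSnn i
          | positivity
      linarith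
    intro i N n m hn hm
    rcases le_total m n with hnm | hnm
    · exact main i N m n hm hnm
    · rw [abs_sub_comm]; exact main i N n m hn hnm
  have hcs : CauchySeq useq := by
    apply cauchySeq_of_le_tendsto_0 BN
    · intro n m N hn hm
      rw [dist_eq_norm, pi_norm_le_iff_of_nonneg (hBnn N)]
      intro i
      rw [Pi.sub_apply, Real.norm_eq_abs]
      exact hcomp_le i N n m hn hm
    · have hE : Filter.Tendsto (fun N : ℕ => Real.exp (lam2 * (-(N:ℝ))))
          Filter.atTop (nhds 0) := by
        apply Real.tendsto_exp_atBot.comp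
        apply Filter.Tendsto.const_mul_atBot h2
        exact Filter.tendsto_neg_atTop_atBot.comp tendsto_natCast_atTop_atTop
      have h0 := (((hE.div_const lam2).const_mul Sall).div_const (lam1-lam2)).const_mul ε
      simp only [zero_div, mul_zero] at h0
      simpa only [hBN] using h0
  obtain ⟨x₀, hx₀⟩ := cauchySeq_tendsto_of_complete hcs
  -- value of Pf at 0 versus the matrix norm of A⁻¹
  have hinv : A⁻¹ = (lam1*lam2)⁻¹ • !![A 1 1, -(A 0 1); -(A 1 0), A 0 0] := by
    rw [Matrix.inv_def, Matrix.adjugate_fin_two, hdet, Ring.inverse_eq_inv']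
  have hKval : matNormInf A⁻¹ = max ((|A 1 1| + |A 0 1|)/(lam1*lam2))
      ((|A 1 0| + |A 0 0|)/(lam1*lam2)) := by
    rw [hinv]
    unfold matNormInf
    simp only [Matrix.smul_apply, smul_eq_mul, abs_mul, abs_neg,
      abs_of_nonneg (inv_nonneg.2 hq.le), Matrix.cons_val', Matrix.cons_val_zero,
      Matrix.cons_val_one, Matrix.head_cons, Matrix.empty_val', Matrix.cons_val_fin_one,
      Matrix.head_fin_const]
    simp only [Matrix.of_apply, Matrix.cons_val_zero, Matrix.cons_val_one, Matrix.head_cons,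
      Matrix.cons_val', Matrix.empty_val', Matrix.cons_val_fin_one, Matrix.head_fin_const,
      abs_neg]
    congr 1 <;> ring
  have hP0le : ∀ i : Fin 2, Pf i 0 ≤ matNormInf A⁻¹ * ε := by
    intro i
    have hi : i = 0 ∨ i = 1 := by fin_cases i; exacts [Or.inl rfl, Or.inr rfl]
    rcases hi with rfl | rfl
    · have hval : Pf 0 0 = ((|A 1 1| + |A 0 1|)/(lam1*lam2)) * ε := by
        simp only [hPf, hc1v, hc2v, hcov, Matrix.cons_val_zero, mul_zero, Real.exp_zero,
          mul_one]
        rw [abs_of_pos (show (0:ℝ) < A 1 1 by rw [hd]; linarith), hd]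
        field_simp
        ring
      rw [hval, hKval]
      exact mul_le_mul_of_nonneg_right (le_max_left _ _) hε.le
    · have hval : Pf 1 0 = ((|A 1 0| + |A 0 0|)/(lam1*lam2)) * ε := by
        simp only [hPf, hc1v, hc2v, hcov, Matrix.cons_val_one, Matrix.head_cons, Matrix.cons_val_zero, mul_zero,
          Real.exp_zero, mul_one]
        rw [abs_of_pos (show (0:ℝ) < A 0 0 by linarith)]
        field_simp
        ring
      rw [hval, hKval]
      exact mul_le_mul_of_nonneg_right (le_max_right _ _) hε.le
  have hKnn : 0 ≤ matNormInf A⁻¹ := by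
    unfold matNormInf
    positivity
  refine ⟨x₀, fun t => ?_⟩
  rw [pi_norm_le_iff_of_nonneg (mul_nonneg hKnn hε.le)]
  intro i
  rw [Pi.sub_apply, Real.norm_eq_abs]
  have hlim : Filter.Tendsto (fun n : ℕ => χ t (n:ℝ) i) Filter.atTop
      (nhds ((NormedSpace.exp (t • A)).mulVec x₀ i)) := by
    have hrew : ∀ n : ℕ, χ t (n:ℝ) i = (NormedSpace.exp (t • A)) i 0 * useq n 0
        + (NormedSpace.exp (t • A)) i 1 * useq n 1 := by
      intro n
      rw [← hsemi t (n:ℝ)]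
      simp [Matrix.mulVec, dotProduct, Fin.sum_univ_two, huseq]
    have hlim0 := tendsto_pi_nhds.mp hx₀ 0
    have hlim1 := tendsto_pi_nhds.mp hx₀ 1
    have hcomb := (hlim0.const_mul ((NormedSpace.exp (t • A)) i 0)).add
      (hlim1.const_mul ((NormedSpace.exp (t • A)) i 1))
    have hfe : (fun n : ℕ => χ t (n:ℝ) i) = fun n : ℕ =>
        (NormedSpace.exp (t • A)) i 0 * useq n 0
        + (NormedSpace.exp (t • A)) i 1 * useq n 1 := funext hrew
    rw [hfe]
    have hgoalval : (NormedSpace.exp (t • A)).mulVec x₀ i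
        = (NormedSpace.exp (t • A)) i 0 * x₀ 0 + (NormedSpace.exp (t • A)) i 1 * x₀ 1 := by
      simp [Matrix.mulVec, dotProduct, Fin.sum_univ_two]
    rw [hgoalval]
    exact hcomb
  have hev : ∀ᶠ n : ℕ in Filter.atTop, |φ t i - χ t (n:ℝ) i| ≤ matNormInf A⁻¹ * ε := by
    filter_upwards [Filter.eventually_ge_atTop ⌈t⌉₊] with n hn
    have htn : t ≤ (n:ℝ) := le_trans (Nat.le_ceil t) (Nat.cast_le.2 hn)
    have hb := hKS t i t (n:ℝ) le_rfl htn
    rw [hχt t] at hb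
    have h1' : 0 ≤ Pf i (t - (n:ℝ)) := hPnn i _ (by linarith)
    have h2' : Pf i (t - t) ≤ matNormInf A⁻¹ * ε := by
      rw [sub_self]
      exact hP0le i
    calc |φ t i - χ t (n:ℝ) i| = |χ t (n:ℝ) i - φ t i| := abs_sub_comm _ _
      _ ≤ Pf i (t - t) - Pf i (t - (n:ℝ)) := hb
      _ ≤ matNormInf A⁻¹ * ε := by linarith
  exact le_of_tendsto ((tendsto_const_nhds.sub hlim).abs) hev
end

section
/- Let A be a 2×2 real matrix of the form [[a, b],[c, λ₁+λ₂−a]] with distinct positive eigenvalues λ₁ > λ₂ > 0 and λ₁ > λ₂ > a, bc = (λ₁−a)(a−λ₂). Then x' = Ax is Hyers-Ulam stable on ℝ with constant K = max{ (λ₁+λ₂+|b|−a)/(λ₁λ₂), (a+|c|+2(λ₂−a)((λ₁−a)/(λ₂−a))^{−λ₂/(λ₁−λ₂)})/(λ₁λ₂) }. -/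
open Matrix MeasureTheory Set Filter Real
open scoped Topology

noncomputable section

attribute [local instance] Matrix.linftyOpNormedAddCommGroup Matrix.linftyOpNormedRing
  Matrix.linftyOpNormedAlgebra

theorem exp_eq_combo (A : Matrix (Fin 2) (Fin 2) ℝ) (l1 l2 : ℝ) (hne : l1 ≠ l2)
    (hCH : (A - l1 • 1) * (A - l2 • 1) = 0) (t : ℝ) :
    NormedSpace.exp (t • A) =
      Real.exp (l1 * t) • ((l1 - l2)⁻¹ • (A - l2 • (1:Matrix (Fin 2) (Fin 2) ℝ))) +
      Real.exp (l2 * t) • ((l1 - l2)⁻¹ • (l1 • (1:Matrix (Fin 2) (Fin 2) ℝ) - A)) := by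
  set P : Matrix (Fin 2) (Fin 2) ℝ := (l1 - l2)⁻¹ • (A - l2 • 1) with hP
  set Q : Matrix (Fin 2) (Fin 2) ℝ := (l1 - l2)⁻¹ • (l1 • 1 - A) with hQ
  have hsub : l1 - l2 ≠ 0 := sub_ne_zero.mpr hne
  have hPQ : P + Q = 1 := by
    rw [hP, hQ, ← smul_add]
    have : A - l2 • (1:Matrix (Fin 2) (Fin 2) ℝ) + (l1 • 1 - A) = (l1 - l2) • 1 := by
      rw [sub_smul]; abel
    rw [this, smul_smul, inv_mul_cancel₀ hsub, one_smul]
  have expand : (A - l1 • 1) * (A - l2 • 1) = A * A - (l1 + l2) • A + (l1 * l2) • 1 := by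
    rw [Matrix.sub_mul, Matrix.mul_sub, Matrix.smul_mul, Matrix.one_mul, Matrix.mul_smul,
      Matrix.mul_one]
    module
  have hAA : A * A = (l1 + l2) • A - (l1 * l2) • 1 := by
    rw [expand] at hCH
    linear_combination (norm := module) hCH
  have hAP : A * P = l1 • P := by
    rw [hP, Matrix.mul_smul, Matrix.mul_sub, Matrix.mul_smul, Matrix.mul_one]
    linear_combination (norm := module) (l1 - l2)⁻¹ • hAA
  have hAQ : A * Q = l2 • Q := by
    rw [hQ, Matrix.mul_smul, Matrix.mul_sub, Matrix.mul_smul, Matrix.mul_one]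
    linear_combination (norm := module) (-(l1 - l2)⁻¹) • hAA
  set E : ℝ → Matrix (Fin 2) (Fin 2) ℝ := fun u => Real.exp (l1*u) • P + Real.exp (l2*u) • Q
    with hE
  have hEderiv : ∀ s : ℝ, HasDerivAt E (A * E s) s := by
    intro s
    have h1 : HasDerivAt (fun u : ℝ => Real.exp (l1*u) • P)
        ((Real.exp (l1*s) * (l1 * 1)) • P) s :=
      (((hasDerivAt_id s).const_mul l1).exp).smul_const P
    have h2 : HasDerivAt (fun u : ℝ => Real.exp (l2*u) • Q)
        ((Real.exp (l2*s) * (l2 * 1)) • Q) s :=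
      (((hasDerivAt_id s).const_mul l2).exp).smul_const Q
    have := h1.add h2
    refine this.congr_deriv ?_
    rw [hE]
    simp only [mul_add, Matrix.mul_smul, hAP, hAQ]
    module
  have hcomm : ∀ s : ℝ, Commute (s • (-A)) (-A) := fun s => (Commute.refl (-A)).smul_left s
  have hFconst : ∀ s : ℝ, NormedSpace.exp (s • (-A)) * E s = 1 := by
    have hF : ∀ s : ℝ, HasDerivAt (fun u => NormedSpace.exp (u • (-A)) * E u) 0 s := by
      intro s
      have hG : HasDerivAt (fun u : ℝ => NormedSpace.exp (u • (-A)))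
          ((-A) * NormedSpace.exp (s • (-A))) s := hasDerivAt_exp_smul_const' (-A) s
      have := hG.mul (hEderiv s)
      refine this.congr_deriv ?_
      have hc : (-A) * NormedSpace.exp (s • (-A)) = NormedSpace.exp (s • (-A)) * (-A) :=
        ((hcomm s).symm.exp_right).eq
      rw [hc, Matrix.mul_assoc, Matrix.neg_mul, Matrix.mul_neg]
      abel
    have hdiff : Differentiable ℝ (fun u => NormedSpace.exp (u • (-A)) * E u) :=
      fun s => (hF s).differentiableAt
    intro s
    have h0 : (fun u => NormedSpace.exp (u • (-A)) * E u) s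
        = (fun u => NormedSpace.exp (u • (-A)) * E u) 0 :=
      is_const_of_deriv_eq_zero hdiff (fun x => (hF x).deriv) s 0
    simpa [hE, hPQ] using h0
  have hinv : NormedSpace.exp (t • A) * NormedSpace.exp (t • (-A)) = 1 := by
    rw [← Matrix.exp_add_of_commute _ _ (((Commute.refl A).neg_right.smul_left t).smul_right t)]
    simp
  calc NormedSpace.exp (t • A) = NormedSpace.exp (t • A) * (NormedSpace.exp (t • (-A)) * E t) := by
        rw [hFconst t, Matrix.mul_one]
    _ = E t := by rw [← Matrix.mul_assoc, hinv, Matrix.one_mul]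

/-- the linear map sending a matrix to its `mulVec` continuous linear map -/
def LL : Matrix (Fin 2) (Fin 2) ℝ →L[ℝ] ((Fin 2 → ℝ) →L[ℝ] (Fin 2 → ℝ)) :=
  LinearMap.toContinuousLinearMap
  { toFun := fun M => (Matrix.mulVecLin M).toContinuousLinearMap
    map_add' := by
      intro M N; ext v i; simp [Matrix.add_mulVec]
    map_smul' := by
      intro r M; ext v i; simp [Matrix.smul_mulVec] }

@[simp] theorem LL_apply (M : Matrix (Fin 2) (Fin 2) ℝ) (v : Fin 2 → ℝ) :
    LL M v = M.mulVec v := rfl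

theorem psi_deriv (A : Matrix (Fin 2) (Fin 2) ℝ) (φ : ℝ → Fin 2 → ℝ)
    (hφ : Differentiable ℝ φ) (s : ℝ) :
    HasDerivAt (fun u => (NormedSpace.exp ((-u) • A)).mulVec (φ u))
      ((NormedSpace.exp ((-s) • A)).mulVec (deriv φ s - A.mulVec (φ s))) s := by
  have hD0 : HasDerivAt (fun u : ℝ => NormedSpace.exp (u • (-A)))
      ((-A) * NormedSpace.exp (s • (-A))) s := hasDerivAt_exp_smul_const' (-A) s
  have hrw : ∀ u : ℝ, u • (-A) = (-u) • A := by intro u; rw [smul_neg, neg_smul]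
  have hD : HasDerivAt (fun u : ℝ => NormedSpace.exp ((-u) • A))
      ((-A) * NormedSpace.exp ((-s) • A)) s := by
    simpa only [hrw] using hD0
  have hC : HasDerivAt (fun u : ℝ => LL (NormedSpace.exp ((-u) • A)))
      (LL ((-A) * NormedSpace.exp ((-s) • A))) s :=
    LL.hasFDerivAt.comp_hasDerivAt s hD
  have hv : HasDerivAt φ (deriv φ s) s := (hφ s).hasDerivAt
  have := hC.clm_apply hv
  simp only [LL_apply] at this
  refine this.congr_deriv ?_
  have hcomm : (-A) * NormedSpace.exp ((-s) • A) = NormedSpace.exp ((-s) • A) * (-A) := by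
    have h1 : Commute ((-s) • A) (-A) := (((Commute.refl A).smul_left (-s)).neg_right)
    exact (h1.exp_left).symm.eq
  rw [hcomm]
  rw [Matrix.mulVec_sub, Matrix.mul_neg, Matrix.neg_mulVec, Matrix.mulVec_mulVec]
  abel

theorem integrableOn_exp_shift (t c lam : ℝ) (h : 0 < lam) :
    IntegrableOn (fun s => Real.exp (lam * (c - s))) (Ioi t) := by
  have := (exp_neg_integrableOn_Ioi t h).const_mul (Real.exp (lam * c))
  refine IntegrableOn.congr_fun this ?_ measurableSet_Ioi
  intro s _
  simp only [← Real.exp_add]; ring_nf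

theorem hasDerivAt_exp_shift (c lam s : ℝ) (h : lam ≠ 0) :
    HasDerivAt (fun s => -(Real.exp (lam * (c - s)) / lam)) (Real.exp (lam * (c - s))) s := by
  have h1 : HasDerivAt (fun s : ℝ => lam * (c - s)) (-lam) s := by
    simpa using ((hasDerivAt_id s).const_sub c).const_mul lam
  have := ((h1.exp).div_const lam).neg
  refine this.congr_deriv ?_
  field_simp

theorem integral_exp_shift_Ioi (v c lam : ℝ) (h : 0 < lam) :
    ∫ s in Ioi v, Real.exp (lam * (c - s)) = Real.exp (lam * (c - v)) / lam := by
  have hten : Tendsto (fun s => -(Real.exp (lam * (c - s)) / lam)) atTop (𝓝 0) := by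
    have h1 : Tendsto (fun s : ℝ => lam * (c - s)) atTop atBot := by
      apply Tendsto.const_mul_atBot h
      exact tendsto_atBot_add_const_left _ c (tendsto_neg_atTop_atBot.comp tendsto_id) |>.congr' (by filter_upwards with x; simp [Function.comp]; ring)
    have := (Real.tendsto_exp_atBot.comp h1).div_const lam
    simpa using this.neg
  have := integral_Ioi_of_hasDerivAt_of_tendsto' (f' := fun s => Real.exp (lam * (c - s)))
    (fun x _ => hasDerivAt_exp_shift c lam x (ne_of_gt h)) (integrableOn_exp_shift v c lam h) hten
  rw [this]; ring

theorem integral_exp_shift_interval (v1 v2 c lam : ℝ) (h : lam ≠ 0) :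
    ∫ s in v1..v2, Real.exp (lam * (c - s)) =
      (Real.exp (lam * (c - v1)) - Real.exp (lam * (c - v2))) / lam := by
  have := intervalIntegral.integral_eq_sub_of_hasDerivAt
    (f := fun s => -(Real.exp (lam * (c - s)) / lam))
    (f' := fun s => Real.exp (lam * (c - s)))
    (fun x _ => hasDerivAt_exp_shift c lam x h)
    ((Real.continuous_exp.comp (by continuity)).intervalIntegrable v1 v2)
  rw [this]; ring

theorem integral_split (f : ℝ → ℝ) (t : ℝ) (hf : IntegrableOn f (Ioi (min 0 t))) :
    ∫ s in Ioi 0, f s = (∫ s in (0:ℝ)..t, f s) + ∫ s in Ioi t, f s := by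
  rcases le_or_gt 0 t with ht | ht
  · have hmin : min 0 t = 0 := min_eq_left ht
    rw [hmin] at hf
    have hu : Ioc 0 t ∪ Ioi t = Ioi 0 := Ioc_union_Ioi_eq_Ioi ht
    rw [intervalIntegral.integral_of_le ht, ← setIntegral_union
      (Ioc_disjoint_Ioi le_rfl) measurableSet_Ioi
      (hf.mono_set (by rw [← hu]; exact subset_union_left))
      (hf.mono_set (by rw [← hu]; exact subset_union_right)), hu]
  · have hmin : min 0 t = t := min_eq_right ht.le
    rw [hmin] at hf
    have hu : Ioc t 0 ∪ Ioi 0 = Ioi t := Ioc_union_Ioi_eq_Ioi ht.le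
    have := setIntegral_union (f := f) (μ := volume) (Ioc_disjoint_Ioi le_rfl) measurableSet_Ioi
      (hf.mono_set (by rw [← hu]; exact subset_union_left))
      (hf.mono_set (by rw [← hu]; exact subset_union_right))
    rw [hu] at this
    rw [intervalIntegral.integral_symm, intervalIntegral.integral_of_le ht.le, this]
    ring

set_option maxHeartbeats 2000000 in
theorem stmt_7_aux (a b c lam1 lam2 : ℝ)
    (h12 : lam1 > lam2) (h2 : lam2 > 0) (h2a : lam2 > a)
    (hbc : b * c = (lam1 - a) * (a - lam2))
    (A : Matrix (Fin 2) (Fin 2) ℝ) (hA : A = !![a, b; c, lam1 + lam2 - a]) :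
    ∀ ε > (0:ℝ), ∀ φ : ℝ → (Fin 2 → ℝ), Differentiable ℝ φ →
      (∀ t : ℝ, ‖deriv φ t - A.mulVec (φ t)‖ ≤ ε) →
      ∃ x₀ : Fin 2 → ℝ, ∀ t : ℝ,
        ‖φ t - (NormedSpace.exp (t • A)).mulVec x₀‖ ≤
          max ((lam1 + lam2 + |b| - a) / (lam1 * lam2))
              ((a + |c| + 2 * (lam2 - a) *
                ((lam1 - a) / (lam2 - a)) ^ (-lam2 / (lam1 - lam2)))
                / (lam1 * lam2)) * ε := by
  intro ε hε φ hφ hpert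
  have h1 : (0:ℝ) < lam1 := h2.trans h12
  have hμ : (0:ℝ) < lam1 - lam2 := sub_pos.mpr h12
  have h2a' : (0:ℝ) < lam2 - a := sub_pos.mpr h2a
  have h1a' : (0:ℝ) < lam1 - a := by linarith
  -- Cayley–Hamilton for A
  have hCH : (A - lam1 • 1) * (A - lam2 • 1) = 0 := by
    rw [hA]; ext i j
    fin_cases i <;> fin_cases j <;>
      simp [Matrix.mul_apply, Fin.sum_univ_two, Matrix.one_apply] <;> nlinarith [hbc]
  -- entries of exp(v • A)
  set p11 : ℝ → ℝ := fun v => ((a-lam2)*Real.exp (lam1*v) + (lam1-a)*Real.exp (lam2*v))/(lam1-lam2) with hp11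
  set p12 : ℝ → ℝ := fun v => b*(Real.exp (lam1*v) - Real.exp (lam2*v))/(lam1-lam2) with hp12
  set p21 : ℝ → ℝ := fun v => c*(Real.exp (lam1*v) - Real.exp (lam2*v))/(lam1-lam2) with hp21
  set p22 : ℝ → ℝ := fun v => ((lam1-a)*Real.exp (lam1*v) + (a-lam2)*Real.exp (lam2*v))/(lam1-lam2) with hp22
  have hexpM : ∀ v : ℝ, NormedSpace.exp (v • A) = !![p11 v, p12 v; p21 v, p22 v] := by
    intro v
    rw [exp_eq_combo A lam1 lam2 (ne_of_gt h12) hCH v, hA]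
    ext i j
    fin_cases i <;> fin_cases j <;>
      · simp [hp11, hp12, hp21, hp22, Matrix.one_apply]
        ring
  -- exponential addition
  have hmul_exp : ∀ u v : ℝ, NormedSpace.exp (u • A) * NormedSpace.exp (v • A)
      = NormedSpace.exp ((u+v) • A) := by
    intro u v
    rw [← Matrix.exp_add_of_commute _ _ (((Commute.refl A).smul_left u).smul_right v), ← add_smul]
  -- the perturbation g
  set g : ℝ → Fin 2 → ℝ := fun s => deriv φ s - A.mulVec (φ s) with hg
  have hgbdd : ∀ s j, |g s j| ≤ ε := by
    intro s j
    have := norm_le_pi_norm (deriv φ s - A.mulVec (φ s)) j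
    have h2 := hpert s
    simp only [Real.norm_eq_abs] at this
    calc |g s j| ≤ ‖deriv φ s - A.mulVec (φ s)‖ := this
      _ ≤ ε := h2
  have hgmeas : ∀ j, Measurable (fun s => g s j) := by
    intro j
    have h1 : Measurable (fun s => deriv φ s j) :=
      (measurable_pi_apply j).comp (measurable_deriv φ)
    have h2 : Continuous (fun s => A.mulVec (φ s) j) := by
      simp only [Matrix.mulVec, dotProduct, Fin.sum_univ_two]
      exact ((continuous_const.mul ((continuous_apply (0:Fin 2)).comp hφ.continuous)).add
        (continuous_const.mul ((continuous_apply (1:Fin 2)).comp hφ.continuous)))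
    exact h1.sub h2.measurable
  -- the function w
  set w : ℝ → Fin 2 → ℝ := fun s => (NormedSpace.exp ((-s) • A)).mulVec (g s) with hw
  have hcont11 : Continuous p11 := by rw [hp11]; fun_prop
  have hcont12 : Continuous p12 := by rw [hp12]; fun_prop
  have hcont21 : Continuous p21 := by rw [hp21]; fun_prop
  have hcont22 : Continuous p22 := by rw [hp22]; fun_prop
  have hw0 : ∀ s, w s 0 = p11 (-s) * g s 0 + p12 (-s) * g s 1 := by
    intro s
    simp only [hw]
    rw [hexpM (-s)]
    simp [Matrix.mulVec, dotProduct, Fin.sum_univ_two]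
  have hw1 : ∀ s, w s 1 = p21 (-s) * g s 0 + p22 (-s) * g s 1 := by
    intro s
    simp only [hw]
    rw [hexpM (-s)]
    simp [Matrix.mulVec, dotProduct, Fin.sum_univ_two]
  have hwmeas : ∀ j, Measurable (fun s => w s j) := by
    intro j
    fin_cases j
    · show Measurable fun s => w s 0
      simp only [hw0]
      exact (((hcont11.comp continuous_neg).measurable).mul (hgmeas 0)).add
        (((hcont12.comp continuous_neg).measurable).mul (hgmeas 1))
    · show Measurable fun s => w s 1
      simp only [hw1]
      exact (((hcont21.comp continuous_neg).measurable).mul (hgmeas 0)).add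
        (((hcont22.comp continuous_neg).measurable).mul (hgmeas 1))
  -- uniform bound on w
  set C : ℝ := ((lam1-a) + (lam2-a) + |b| + |c|)/(lam1-lam2) with hCdef
  set S : ℝ → ℝ := fun s => Real.exp (lam1*(0-s)) + Real.exp (lam2*(0-s)) with hSdef
  have hSpos : ∀ s : ℝ, 0 < S s := fun s => by rw [hSdef]; positivity
  have key : ∀ (q1 q2 s : ℝ), |(q1*Real.exp (lam1*(-s)) + q2*Real.exp (lam2*(-s)))/(lam1-lam2)|
      ≤ (|q1| + |q2|)/(lam1-lam2) * S s := by
    intro q1 q2 s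
    have he1 : (0:ℝ) < Real.exp (lam1*(-s)) := Real.exp_pos _
    have he2 : (0:ℝ) < Real.exp (lam2*(-s)) := Real.exp_pos _
    have h0 : ∀ lam : ℝ, lam * ((0:ℝ) - s) = lam * (-s) := by intro lam; ring
    have hN : |q1*Real.exp (lam1*(-s)) + q2*Real.exp (lam2*(-s))|
        ≤ (|q1|+|q2|)*(Real.exp (lam1*(-s)) + Real.exp (lam2*(-s))) := by
      nlinarith [abs_add_le (q1*Real.exp (lam1*(-s))) (q2*Real.exp (lam2*(-s))),
        abs_mul q1 (Real.exp (lam1*(-s))), abs_mul q2 (Real.exp (lam2*(-s))),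
        abs_of_pos he1, abs_of_pos he2, abs_nonneg q1, abs_nonneg q2, he1.le, he2.le,
        mul_nonneg (abs_nonneg q1) he2.le, mul_nonneg (abs_nonneg q2) he1.le]
    rw [hSdef]
    simp only [h0]
    rw [abs_div, abs_of_pos hμ]
    calc |q1*Real.exp (lam1*(-s)) + q2*Real.exp (lam2*(-s))|/(lam1-lam2)
        ≤ ((|q1|+|q2|)*(Real.exp (lam1*(-s)) + Real.exp (lam2*(-s))))/(lam1-lam2) := by gcongr
      _ = (|q1|+|q2|)/(lam1-lam2)*(Real.exp (lam1*(-s)) + Real.exp (lam2*(-s))) := by ring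
  have habs1 : |a - lam2| = lam2 - a := by rw [abs_sub_comm, abs_of_pos h2a']
  have habs2 : |lam1 - a| = lam1 - a := abs_of_pos h1a'
  have kb11 : ∀ s : ℝ, |p11 (-s)| ≤ ((lam2-a)+(lam1-a))/(lam1-lam2) * S s := by
    intro s
    have := key (a-lam2) (lam1-a) s
    rw [habs1, habs2] at this
    exact this
  have kb22 : ∀ s : ℝ, |p22 (-s)| ≤ ((lam1-a)+(lam2-a))/(lam1-lam2) * S s := by
    intro s
    have := key (lam1-a) (a-lam2) s
    rw [habs1, habs2] at this
    exact this
  have kbmul : ∀ (q s : ℝ), |q*(Real.exp (lam1*(-s)) - Real.exp (lam2*(-s)))/(lam1-lam2)|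
      ≤ |q|/(lam1-lam2) * S s := by
    intro q s
    have he1 : (0:ℝ) < Real.exp (lam1*(-s)) := Real.exp_pos _
    have he2 : (0:ℝ) < Real.exp (lam2*(-s)) := Real.exp_pos _
    have h0 : ∀ lam : ℝ, lam * ((0:ℝ) - s) = lam * (-s) := by intro lam; ring
    rw [hSdef]
    simp only [h0]
    rw [abs_div, abs_of_pos hμ, abs_mul]
    have hd : |Real.exp (lam1*(-s)) - Real.exp (lam2*(-s))|
        ≤ Real.exp (lam1*(-s)) + Real.exp (lam2*(-s)) := by
      refine (abs_sub _ _).trans ?_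
      rw [abs_of_pos he1, abs_of_pos he2]
    calc |q| * |Real.exp (lam1*(-s)) - Real.exp (lam2*(-s))| / (lam1-lam2)
        ≤ |q| * (Real.exp (lam1*(-s)) + Real.exp (lam2*(-s))) / (lam1-lam2) := by gcongr
      _ = |q|/(lam1-lam2) * (Real.exp (lam1*(-s)) + Real.exp (lam2*(-s))) := by ring
  have kb12 : ∀ s : ℝ, |p12 (-s)| ≤ |b|/(lam1-lam2) * S s := by
    intro s
    rw [hp12]
    exact kbmul b s
  have kb21 : ∀ s : ℝ, |p21 (-s)| ≤ |c|/(lam1-lam2) * S s := by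
    intro s
    rw [hp21]
    exact kbmul c s
  have hwbdd : ∀ (j : Fin 2) (s : ℝ), |w s j| ≤ ε * C * S s := by
    intro j s
    have hg0 := hgbdd s 0
    have hg1 := hgbdd s 1
    have hS := hSpos s
    have hεn : (0:ℝ) ≤ ε := hε.le
    have hCb : ((lam2-a)+(lam1-a))/(lam1-lam2) + |b|/(lam1-lam2) ≤ C := by
      rw [hCdef, ← add_div, div_le_div_iff₀ hμ hμ]
      nlinarith [abs_nonneg b, abs_nonneg c]
    have hCc : |c|/(lam1-lam2) + ((lam1-a)+(lam2-a))/(lam1-lam2) ≤ C := by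
      rw [hCdef, ← add_div, div_le_div_iff₀ hμ hμ]
      nlinarith [abs_nonneg b, abs_nonneg c]
    fin_cases j
    · show |w s 0| ≤ _
      rw [hw0 s]
      have k1 := kb11 s
      have k2 := kb12 s
      calc |p11 (-s) * g s 0 + p12 (-s) * g s 1|
          ≤ |p11 (-s)| * |g s 0| + |p12 (-s)| * |g s 1| := by
            refine (abs_add_le _ _).trans ?_
            rw [abs_mul, abs_mul]
        _ ≤ |p11 (-s)| * ε + |p12 (-s)| * ε :=
            add_le_add (mul_le_mul_of_nonneg_left hg0 (abs_nonneg _))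
              (mul_le_mul_of_nonneg_left hg1 (abs_nonneg _))
        _ = (|p11 (-s)| + |p12 (-s)|) * ε := by ring
        _ ≤ (((lam2-a)+(lam1-a))/(lam1-lam2) * S s + |b|/(lam1-lam2) * S s) * ε :=
            mul_le_mul_of_nonneg_right (add_le_add k1 k2) hεn
        _ = ((((lam2-a)+(lam1-a))/(lam1-lam2) + |b|/(lam1-lam2)) * S s) * ε := by ring
        _ ≤ (C * S s) * ε :=
            mul_le_mul_of_nonneg_right (mul_le_mul_of_nonneg_right hCb hS.le) hεn
        _ = ε * C * S s := by ring
    · show |w s 1| ≤ _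
      rw [hw1 s]
      have k1 := kb21 s
      have k2 := kb22 s
      calc |p21 (-s) * g s 0 + p22 (-s) * g s 1|
          ≤ |p21 (-s)| * |g s 0| + |p22 (-s)| * |g s 1| := by
            refine (abs_add_le _ _).trans ?_
            rw [abs_mul, abs_mul]
        _ ≤ |p21 (-s)| * ε + |p22 (-s)| * ε :=
            add_le_add (mul_le_mul_of_nonneg_left hg0 (abs_nonneg _))
              (mul_le_mul_of_nonneg_left hg1 (abs_nonneg _))
        _ = (|p21 (-s)| + |p22 (-s)|) * ε := by ring
        _ ≤ (|c|/(lam1-lam2) * S s + ((lam1-a)+(lam2-a))/(lam1-lam2) * S s) * ε :=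
            mul_le_mul_of_nonneg_right (add_le_add k1 k2) hεn
        _ = ((|c|/(lam1-lam2) + ((lam1-a)+(lam2-a))/(lam1-lam2)) * S s) * ε := by ring
        _ ≤ (C * S s) * ε :=
            mul_le_mul_of_nonneg_right (mul_le_mul_of_nonneg_right hCc hS.le) hεn
        _ = ε * C * S s := by ring
  have hwint : ∀ (t : ℝ) (j : Fin 2), IntegrableOn (fun s => w s j) (Ioi t) := by
    intro t j
    have hmaj : IntegrableOn (fun s => ε * C * S s) (Ioi t) := by
      have := ((integrableOn_exp_shift t 0 lam1 h1).add (integrableOn_exp_shift t 0 lam2 h2)).const_mul (ε*C)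
      simpa [hSdef, mul_add, IntegrableOn] using this
    refine Integrable.mono' hmaj ((hwmeas j).aestronglyMeasurable.restrict) ?_
    exact ae_of_all _ fun s => by simpa [Real.norm_eq_abs] using hwbdd j s
  -- the candidate solution
  set x₀ : Fin 2 → ℝ := fun j => φ 0 j + ∫ s in Ioi 0, w s j with hx₀def
  refine ⟨x₀, fun t => ?_⟩
  -- derivative of ψ componentwise
  have hψd : ∀ (j : Fin 2) (s : ℝ),
      HasDerivAt (fun u => (NormedSpace.exp ((-u) • A)).mulVec (φ u) j) (w s j) s := by
    intro j s
    have h := psi_deriv A φ hφ s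
    have h2 := (ContinuousLinearMap.proj (R := ℝ) (φ := fun _ : Fin 2 => ℝ) j).hasFDerivAt.comp_hasDerivAt s h
    exact h2
  have hwinterval : ∀ (j : Fin 2) (t' : ℝ), IntervalIntegrable (fun s => w s j) volume 0 t' := by
    intro j t'
    rw [intervalIntegrable_iff]
    exact (hwint (min 0 t') j).mono_set Ioc_subset_Ioi_self
  have hFTC : ∀ (j : Fin 2) (t' : ℝ), (∫ s in (0:ℝ)..t', w s j)
      = (NormedSpace.exp ((-t') • A)).mulVec (φ t') j
        - (NormedSpace.exp ((-(0:ℝ)) • A)).mulVec (φ 0) j := by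
    intro j t'
    exact intervalIntegral.integral_eq_sub_of_hasDerivAt (fun x _ => hψd j x) (hwinterval j t')
  have hψ0 : ∀ j : Fin 2, (NormedSpace.exp ((-(0:ℝ)) • A)).mulVec (φ 0) j = φ 0 j := by
    intro j
    rw [show ((-(0:ℝ)) • A) = (0 : Matrix (Fin 2) (Fin 2) ℝ) by simp, NormedSpace.exp_zero,
      Matrix.one_mulVec]
  have hkey : ∀ (j : Fin 2), x₀ j = (NormedSpace.exp ((-t) • A)).mulVec (φ t) j
      + ∫ s in Ioi t, w s j := by
    intro j
    have hsplit := integral_split (fun s => w s j) t (hwint (min 0 t) j)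
    have hftc := hFTC j t
    rw [hψ0 j] at hftc
    rw [hx₀def]
    simp only []
    rw [hsplit, hftc]
    ring
  -- representation of the error
  set Et : Matrix (Fin 2) (Fin 2) ℝ := NormedSpace.exp (t • A) with hEt
  have hinv : Et.mulVec ((NormedSpace.exp ((-t) • A)).mulVec (φ t)) = φ t := by
    rw [hEt, Matrix.mulVec_mulVec, hmul_exp t (-t)]
    rw [show (t + -t) = (0:ℝ) by ring]
    rw [show ((0:ℝ) • A) = (0 : Matrix (Fin 2) (Fin 2) ℝ) by simp, NormedSpace.exp_zero,
      Matrix.one_mulVec]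
  have hrep : ∀ i : Fin 2, (φ t - Et.mulVec x₀) i
      = -(Et i 0 * (∫ s in Ioi t, w s 0) + Et i 1 * (∫ s in Ioi t, w s 1)) := by
    intro i
    have hx : x₀ = fun j => (NormedSpace.exp ((-t) • A)).mulVec (φ t) j
        + ∫ s in Ioi t, w s j := funext hkey
    have hEtv : Et.mulVec x₀ i
        = Et.mulVec ((NormedSpace.exp ((-t) • A)).mulVec (φ t)) i
          + (Et i 0 * (∫ s in Ioi t, w s 0) + Et i 1 * (∫ s in Ioi t, w s 1)) := by
      rw [hx]
      simp [Matrix.mulVec, dotProduct, Fin.sum_univ_two]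
      ring
    rw [Pi.sub_apply, hEtv, hinv]
    ring
  have hq : ∀ i : Fin 2, Et i 0 * (∫ s in Ioi t, w s 0) + Et i 1 * (∫ s in Ioi t, w s 1)
      = ∫ s in Ioi t, (Et i 0 * w s 0 + Et i 1 * w s 1) := by
    intro i
    rw [← MeasureTheory.integral_const_mul, ← MeasureTheory.integral_const_mul,
      ← integral_add ((hwint t 0).const_mul _) ((hwint t 1).const_mul _)]
  have hqint : ∀ i : Fin 2, IntegrableOn (fun s => Et i 0 * w s 0 + Et i 1 * w s 1) (Ioi t) :=
    fun i => ((hwint t 0).const_mul _).add ((hwint t 1).const_mul _)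
  have hpoint : ∀ (s : ℝ) (i : Fin 2), Et i 0 * w s 0 + Et i 1 * w s 1
      = (NormedSpace.exp ((t - s) • A)).mulVec (g s) i := by
    intro s i
    have h1 : Et * NormedSpace.exp ((-s) • A) = NormedSpace.exp ((t - s) • A) := by
      rw [hEt, hmul_exp t (-s), show (t + -s) = t - s by ring]
    calc Et i 0 * w s 0 + Et i 1 * w s 1 = (Et.mulVec (w s)) i := by
          simp [Matrix.mulVec, dotProduct, Fin.sum_univ_two]
      _ = ((Et * NormedSpace.exp ((-s) • A)).mulVec (g s)) i := by
          simp only [hw, Matrix.mulVec_mulVec]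
      _ = (NormedSpace.exp ((t - s) • A)).mulVec (g s) i := by rw [h1]
  -- nonnegativity of the constant
  have hK1pos : (0:ℝ) < (lam1 + lam2 + |b| - a) / (lam1 * lam2) := by
    apply div_pos ?_ (mul_pos h1 h2)
    nlinarith [abs_nonneg b]
  have hKnn : (0:ℝ) ≤ max ((lam1 + lam2 + |b| - a) / (lam1 * lam2))
      ((a + |c| + 2 * (lam2 - a) * ((lam1 - a) / (lam2 - a)) ^ (-lam2 / (lam1 - lam2)))
        / (lam1 * lam2)) * ε :=
    mul_nonneg (le_trans hK1pos.le (le_max_left _ _)) hε.le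
  rw [pi_norm_le_iff_of_nonneg hKnn]
  intro i
  rw [Real.norm_eq_abs, hrep i, hq i, abs_neg]
  fin_cases i
  · -- first component
    show |∫ s in Ioi t, (Et 0 0 * w s 0 + Et 0 1 * w s 1)| ≤ _
    have hq0eq : ∀ s : ℝ, Et 0 0 * w s 0 + Et 0 1 * w s 1
        = p11 (t-s) * g s 0 + p12 (t-s) * g s 1 := by
      intro s
      rw [hpoint s 0, hexpM (t-s)]
      simp [Matrix.mulVec, dotProduct, Fin.sum_univ_two]
    simp only [hq0eq]
    have hint0 : IntegrableOn (fun s => p11 (t-s) * g s 0 + p12 (t-s) * g s 1) (Ioi t) :=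
      (hqint 0).congr_fun (fun s _ => hq0eq s) measurableSet_Ioi
    set ρ0 : ℝ → ℝ := fun s => ε * (((lam1-a+|b|)*Real.exp (lam2*(t-s))
      - (lam2-a+|b|)*Real.exp (lam1*(t-s)))/(lam1-lam2)) with hρ0
    have hρ0int : IntegrableOn ρ0 (Ioi t) := by
      have heq : ρ0 = fun s => (ε*(lam1-a+|b|)/(lam1-lam2)) * Real.exp (lam2*(t-s))
          - (ε*(lam2-a+|b|)/(lam1-lam2)) * Real.exp (lam1*(t-s)) := by
        funext s; rw [hρ0]; ring
      rw [heq]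
      exact ((integrableOn_exp_shift t t lam2 h2).const_mul _).sub
        ((integrableOn_exp_shift t t lam1 h1).const_mul _)
    have hbound0 : ∀ s ∈ Ioi t, |p11 (t-s) * g s 0 + p12 (t-s) * g s 1| ≤ ρ0 s := by
      intro s hs
      have hts : t - s < 0 := by simp at hs; linarith
      have hE12 : Real.exp (lam1*(t-s)) ≤ Real.exp (lam2*(t-s)) := by
        apply Real.exp_le_exp.mpr
        nlinarith
      have hE1 : (0:ℝ) < Real.exp (lam1*(t-s)) := Real.exp_pos _
      have hE2 : (0:ℝ) < Real.exp (lam2*(t-s)) := Real.exp_pos _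
      have hp11abs : |p11 (t-s)| = ((lam1-a)*Real.exp (lam2*(t-s))
          - (lam2-a)*Real.exp (lam1*(t-s)))/(lam1-lam2) := by
        rw [hp11]
        simp only []
        rw [abs_div, abs_of_pos hμ, abs_of_nonneg (by nlinarith)]
        ring_nf
      have hp12abs : |p12 (t-s)| = |b| * (Real.exp (lam2*(t-s))
          - Real.exp (lam1*(t-s)))/(lam1-lam2) := by
        rw [hp12]
        simp only []
        rw [abs_div, abs_of_pos hμ, abs_mul, abs_sub_comm, abs_of_nonneg (sub_nonneg.mpr hE12)]
      have hg0 := hgbdd s 0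
      have hg1 := hgbdd s 1
      calc |p11 (t-s) * g s 0 + p12 (t-s) * g s 1|
          ≤ |p11 (t-s)| * |g s 0| + |p12 (t-s)| * |g s 1| := by
            refine (abs_add_le _ _).trans ?_
            rw [abs_mul, abs_mul]
        _ ≤ |p11 (t-s)| * ε + |p12 (t-s)| * ε :=
            add_le_add (mul_le_mul_of_nonneg_left hg0 (abs_nonneg _))
              (mul_le_mul_of_nonneg_left hg1 (abs_nonneg _))
        _ ≤ ρ0 s := by
            rw [hp11abs, hp12abs, hρ0]
            have : ((lam1-a)*Real.exp (lam2*(t-s)) - (lam2-a)*Real.exp (lam1*(t-s)))/(lam1-lam2) * ε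
                + |b| * (Real.exp (lam2*(t-s)) - Real.exp (lam1*(t-s)))/(lam1-lam2) * ε
                = ε * (((lam1-a+|b|)*Real.exp (lam2*(t-s))
                  - (lam2-a+|b|)*Real.exp (lam1*(t-s)))/(lam1-lam2)) := by ring
            linarith [this.le]
    calc |∫ s in Ioi t, (p11 (t-s) * g s 0 + p12 (t-s) * g s 1)|
        ≤ ∫ s in Ioi t, |p11 (t-s) * g s 0 + p12 (t-s) * g s 1| := by
          simpa [Real.norm_eq_abs] using norm_integral_le_integral_norm
            (μ := volume.restrict (Ioi t)) (fun s => p11 (t-s) * g s 0 + p12 (t-s) * g s 1)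
      _ ≤ ∫ s in Ioi t, ρ0 s := setIntegral_mono_on hint0.abs hρ0int measurableSet_Ioi hbound0
      _ = (lam1 + lam2 + |b| - a) / (lam1 * lam2) * ε := by
          have heq : ρ0 = fun s => (ε*(lam1-a+|b|)/(lam1-lam2)) * Real.exp (lam2*(t-s))
              - (ε*(lam2-a+|b|)/(lam1-lam2)) * Real.exp (lam1*(t-s)) := by
            funext s; rw [hρ0]; ring
          rw [heq, integral_sub ((integrableOn_exp_shift t t lam2 h2).const_mul _)
            ((integrableOn_exp_shift t t lam1 h1).const_mul _),
            MeasureTheory.integral_const_mul, MeasureTheory.integral_const_mul,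
            integral_exp_shift_Ioi t t lam2 h2, integral_exp_shift_Ioi t t lam1 h1]
          rw [show (t - t : ℝ) = 0 by ring]
          simp only [mul_zero, Real.exp_zero]
          field_simp
          ring
      _ ≤ max ((lam1 + lam2 + |b| - a) / (lam1 * lam2))
            ((a + |c| + 2 * (lam2 - a) * ((lam1 - a) / (lam2 - a)) ^ (-lam2 / (lam1 - lam2)))
              / (lam1 * lam2)) * ε :=
          mul_le_mul_of_nonneg_right (le_max_left _ _) hε.le
  · -- second component
    show |∫ s in Ioi t, (Et 1 0 * w s 0 + Et 1 1 * w s 1)| ≤ _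
    have hq1eq : ∀ s : ℝ, Et 1 0 * w s 0 + Et 1 1 * w s 1
        = p21 (t-s) * g s 0 + p22 (t-s) * g s 1 := by
      intro s
      rw [hpoint s 1, hexpM (t-s)]
      simp [Matrix.mulVec, dotProduct, Fin.sum_univ_two]
    simp only [hq1eq]
    have hint1 : IntegrableOn (fun s => p21 (t-s) * g s 0 + p22 (t-s) * g s 1) (Ioi t) :=
      (hqint 1).congr_fun (fun s _ => hq1eq s) measurableSet_Ioi
    -- setup for the sign change of p22
    set r' : ℝ := (lam1 - a) / (lam2 - a) with hr'
    have hr'pos : 0 < r' := div_pos h1a' h2a'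
    have hr'1 : 1 ≤ r' := (one_le_div h2a').mpr (by linarith)
    set us : ℝ := Real.log r' / (lam1 - lam2) with hus
    have husnn : 0 ≤ us := div_nonneg (Real.log_nonneg hr'1) hμ.le
    set T : ℝ := t + us with hT
    have htT : t ≤ T := by rw [hT]; linarith
    set X2 : ℝ := r' ^ (-lam2 / (lam1 - lam2)) with hX2def
    have hX2eq : Real.exp (lam2 * (t - T)) = X2 := by
      rw [hX2def, Real.rpow_def_of_pos hr'pos]
      congr 1
      rw [hT, hus]
      field_simp
      ring
    have hX1eq : Real.exp (lam1 * (t - T)) = X2 / r' := by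
      have hsplit : lam1 * (t - T) = lam2 * (t - T) + (-(Real.log r')) := by
        rw [hT, hus]; field_simp; ring
      rw [hsplit, Real.exp_add, hX2eq, Real.exp_neg, Real.exp_log hr'pos, div_eq_mul_inv]
    have hX1v : Real.exp (lam1 * (t - T)) = (lam2-a)*X2/(lam1-a) := by
      rw [hX1eq, hr']
      field_simp
    -- factorization of p22
    have hfact : ∀ s : ℝ, p22 (t-s)
        = Real.exp (lam2*(t-s)) * ((lam1-a)*Real.exp ((lam1-lam2)*(t-s)) - (lam2-a))
          / (lam1-lam2) := by
      intro s
      rw [hp22]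
      simp only []
      rw [show lam1*(t-s) = lam2*(t-s) + (lam1-lam2)*(t-s) by ring, Real.exp_add]
      ring
    have hsign1 : ∀ s : ℝ, s ≤ T → 0 ≤ p22 (t-s) := by
      intro s hsT
      have hx : Real.exp (-(Real.log r')) ≤ Real.exp ((lam1-lam2)*(t-s)) := by
        apply Real.exp_le_exp.mpr
        have : (s - t) * (lam1-lam2) ≤ Real.log r' := by
          have h' : s - t ≤ Real.log r' / (lam1-lam2) := by rw [hT, hus] at hsT; linarith
          exact (le_div_iff₀ hμ).mp h'
        nlinarith
      rw [Real.exp_neg, Real.exp_log hr'pos] at hx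
      have hxin : (lam2-a) ≤ (lam1-a)*Real.exp ((lam1-lam2)*(t-s)) := by
        have h'' : (lam2-a)/(lam1-a) ≤ Real.exp ((lam1-lam2)*(t-s)) := by
          rw [hr'] at hx
          rw [inv_div] at hx
          exact hx
        calc (lam2-a) = (lam1-a) * ((lam2-a)/(lam1-a)) := by field_simp
          _ ≤ (lam1-a) * Real.exp ((lam1-lam2)*(t-s)) :=
            mul_le_mul_of_nonneg_left h'' h1a'.le
      rw [hfact s]
      apply div_nonneg _ hμ.le
      exact mul_nonneg (Real.exp_pos _).le (by linarith)
    have hsign2 : ∀ s : ℝ, T ≤ s → p22 (t-s) ≤ 0 := by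
      intro s hsT
      have hx : Real.exp ((lam1-lam2)*(t-s)) ≤ Real.exp (-(Real.log r')) := by
        apply Real.exp_le_exp.mpr
        have : Real.log r' ≤ (s - t) * (lam1-lam2) := by
          have h' : Real.log r' / (lam1-lam2) ≤ s - t := by rw [hT, hus] at hsT; linarith
          exact (div_le_iff₀ hμ).mp h'
        nlinarith
      rw [Real.exp_neg, Real.exp_log hr'pos] at hx
      have hxin : (lam1-a)*Real.exp ((lam1-lam2)*(t-s)) ≤ (lam2-a) := by
        have h'' : Real.exp ((lam1-lam2)*(t-s)) ≤ (lam2-a)/(lam1-a) := by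
          rw [hr', inv_div] at hx
          exact hx
        calc (lam1-a) * Real.exp ((lam1-lam2)*(t-s))
            ≤ (lam1-a) * ((lam2-a)/(lam1-a)) := mul_le_mul_of_nonneg_left h'' h1a'.le
          _ = (lam2-a) := by field_simp
      rw [hfact s]
      apply div_nonpos_of_nonpos_of_nonneg _ hμ.le
      exact mul_nonpos_of_nonneg_of_nonpos (Real.exp_pos _).le (by linarith)
    -- integrability of p22 (t - ·)
    have hfun22 : ∀ v : ℝ, (fun s => p22 (t-s))
        = fun s => ((lam1-a)/(lam1-lam2)) * Real.exp (lam1*(t-s))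
          + ((a-lam2)/(lam1-lam2)) * Real.exp (lam2*(t-s)) := by
      intro v
      funext s
      rw [hp22]
      simp only []
      ring
    have hfint : ∀ v : ℝ, IntegrableOn (fun s => p22 (t-s)) (Ioi v) := by
      intro v
      rw [hfun22 v]
      exact ((integrableOn_exp_shift v t lam1 h1).const_mul _).add
        ((integrableOn_exp_shift v t lam2 h2).const_mul _)
    -- the key integral of |p22 (t-·)|
    have hIp22 : ∫ s in Ioi t, |p22 (t-s)| = (a + 2*((lam2-a)*X2))/(lam1*lam2) := by
      have hunion : Ioc t T ∪ Ioi T = Ioi t := Ioc_union_Ioi_eq_Ioi htT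
      have hi1 : IntegrableOn (fun s => |p22 (t-s)|) (Ioc t T) :=
        (((hfint t).mono_set Ioc_subset_Ioi_self)).abs
      have hi2 : IntegrableOn (fun s => |p22 (t-s)|) (Ioi T) := (hfint T).abs
      rw [← hunion, setIntegral_union (Ioc_disjoint_Ioi le_rfl) measurableSet_Ioi hi1 hi2]
      have e1 : ∫ s in Ioc t T, |p22 (t-s)| = ∫ s in Ioc t T, p22 (t-s) :=
        setIntegral_congr_fun measurableSet_Ioc (fun s hs => abs_of_nonneg (hsign1 s hs.2))
      have e2 : ∫ s in Ioi T, |p22 (t-s)| = ∫ s in Ioi T, -(p22 (t-s)) :=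
        setIntegral_congr_fun measurableSet_Ioi (fun s hs => abs_of_nonpos (hsign2 s (le_of_lt hs)))
      rw [e1, e2, integral_neg]
      have v1 : ∫ s in Ioc t T, p22 (t-s)
          = ((lam1-a)/(lam1-lam2)) * ((1 - Real.exp (lam1*(t-T)))/lam1)
            + ((a-lam2)/(lam1-lam2)) * ((1 - Real.exp (lam2*(t-T)))/lam2) := by
        have hci1 : IntervalIntegrable
            (fun s => ((lam1-a)/(lam1-lam2)) * Real.exp (lam1*(t-s))) volume t T :=
          Continuous.intervalIntegrable (by fun_prop) t T
        have hci2 : IntervalIntegrable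
            (fun s => ((a-lam2)/(lam1-lam2)) * Real.exp (lam2*(t-s))) volume t T :=
          Continuous.intervalIntegrable (by fun_prop) t T
        rw [← intervalIntegral.integral_of_le htT, hfun22 t,
          intervalIntegral.integral_add hci1 hci2,
          intervalIntegral.integral_const_mul, intervalIntegral.integral_const_mul,
          integral_exp_shift_interval t T t lam1 h1.ne', integral_exp_shift_interval t T t lam2 h2.ne']
        rw [show (t - t : ℝ) = 0 by ring]
        simp only [mul_zero, Real.exp_zero]
      have v2 : ∫ s in Ioi T, p22 (t-s)
          = ((lam1-a)/(lam1-lam2)) * (Real.exp (lam1*(t-T))/lam1)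
            + ((a-lam2)/(lam1-lam2)) * (Real.exp (lam2*(t-T))/lam2) := by
        rw [hfun22 T, integral_add ((integrableOn_exp_shift T t lam1 h1).const_mul _)
            ((integrableOn_exp_shift T t lam2 h2).const_mul _),
          MeasureTheory.integral_const_mul, MeasureTheory.integral_const_mul,
          integral_exp_shift_Ioi T t lam1 h1, integral_exp_shift_Ioi T t lam2 h2]
      rw [v1, v2, hX1v, hX2eq]
      field_simp
      ring
    -- pointwise bound
    set ρ1 : ℝ → ℝ := fun s => ε * (|c| * (Real.exp (lam2*(t-s)) - Real.exp (lam1*(t-s)))/(lam1-lam2))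
      + ε * |p22 (t-s)| with hρ1
    have hi1c : IntegrableOn
        (fun s => ε * (|c| * (Real.exp (lam2*(t-s)) - Real.exp (lam1*(t-s)))/(lam1-lam2)))
        (Ioi t) := by
      have heq : (fun s => ε * (|c| * (Real.exp (lam2*(t-s)) - Real.exp (lam1*(t-s)))/(lam1-lam2)))
          = fun s => (ε*|c|/(lam1-lam2)) * Real.exp (lam2*(t-s))
            - (ε*|c|/(lam1-lam2)) * Real.exp (lam1*(t-s)) := by
        funext s; ring
      rw [heq]
      exact ((integrableOn_exp_shift t t lam2 h2).const_mul _).sub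
        ((integrableOn_exp_shift t t lam1 h1).const_mul _)
    have hρ1int : IntegrableOn ρ1 (Ioi t) := by
      rw [hρ1]
      exact hi1c.add (((hfint t).abs).const_mul ε)
    have hbound1 : ∀ s ∈ Ioi t, |p21 (t-s) * g s 0 + p22 (t-s) * g s 1| ≤ ρ1 s := by
      intro s hs
      have hts : t - s < 0 := by simp at hs; linarith
      have hE12 : Real.exp (lam1*(t-s)) ≤ Real.exp (lam2*(t-s)) := by
        apply Real.exp_le_exp.mpr
        nlinarith
      have hp21abs : |p21 (t-s)| = |c| * (Real.exp (lam2*(t-s))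
          - Real.exp (lam1*(t-s)))/(lam1-lam2) := by
        rw [hp21]
        simp only []
        rw [abs_div, abs_of_pos hμ, abs_mul, abs_sub_comm, abs_of_nonneg (sub_nonneg.mpr hE12)]
      have hg0 := hgbdd s 0
      have hg1 := hgbdd s 1
      calc |p21 (t-s) * g s 0 + p22 (t-s) * g s 1|
          ≤ |p21 (t-s)| * |g s 0| + |p22 (t-s)| * |g s 1| := by
            refine (abs_add_le _ _).trans ?_
            rw [abs_mul, abs_mul]
        _ ≤ |p21 (t-s)| * ε + |p22 (t-s)| * ε :=
            add_le_add (mul_le_mul_of_nonneg_left hg0 (abs_nonneg _))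
              (mul_le_mul_of_nonneg_left hg1 (abs_nonneg _))
        _ ≤ ρ1 s := by
            rw [hp21abs, hρ1]
            nlinarith [abs_nonneg (p22 (t-s))]
    calc |∫ s in Ioi t, (p21 (t-s) * g s 0 + p22 (t-s) * g s 1)|
        ≤ ∫ s in Ioi t, |p21 (t-s) * g s 0 + p22 (t-s) * g s 1| := by
          simpa [Real.norm_eq_abs] using norm_integral_le_integral_norm
            (μ := volume.restrict (Ioi t)) (fun s => p21 (t-s) * g s 0 + p22 (t-s) * g s 1)
      _ ≤ ∫ s in Ioi t, ρ1 s := setIntegral_mono_on hint1.abs hρ1int measurableSet_Ioi hbound1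
      _ = (a + |c| + 2 * (lam2 - a) * ((lam1 - a) / (lam2 - a)) ^ (-lam2 / (lam1 - lam2)))
            / (lam1 * lam2) * ε := by
          have heq : (fun s => ε * (|c| * (Real.exp (lam2*(t-s)) - Real.exp (lam1*(t-s)))/(lam1-lam2)))
              = fun s => (ε*|c|/(lam1-lam2)) * Real.exp (lam2*(t-s))
                - (ε*|c|/(lam1-lam2)) * Real.exp (lam1*(t-s)) := by
            funext s; ring
          have hsplitint : ∫ s in Ioi t, ρ1 s
              = (∫ s in Ioi t, ε * (|c| * (Real.exp (lam2*(t-s)) - Real.exp (lam1*(t-s)))/(lam1-lam2)))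
                + ∫ s in Ioi t, ε * |p22 (t-s)| := by
            rw [hρ1]
            exact integral_add hi1c (((hfint t).abs).const_mul ε)
          rw [hsplitint, heq,
            integral_sub ((integrableOn_exp_shift t t lam2 h2).const_mul _)
              ((integrableOn_exp_shift t t lam1 h1).const_mul _),
            MeasureTheory.integral_const_mul, MeasureTheory.integral_const_mul,
            MeasureTheory.integral_const_mul,
            integral_exp_shift_Ioi t t lam2 h2, integral_exp_shift_Ioi t t lam1 h1, hIp22]
          rw [show (t - t : ℝ) = 0 by ring]
          simp only [mul_zero, Real.exp_zero]
          rw [hX2def, hr']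
          field_simp
          ring
      _ ≤ max ((lam1 + lam2 + |b| - a) / (lam1 * lam2))
            ((a + |c| + 2 * (lam2 - a) * ((lam1 - a) / (lam2 - a)) ^ (-lam2 / (lam1 - lam2)))
              / (lam1 * lam2)) * ε :=
          mul_le_mul_of_nonneg_right (le_max_right _ _) hε.le

end

theorem stmt_7 (a b c lam1 lam2 : ℝ)
    (h12 : lam1 > lam2) (h2 : lam2 > 0) (h2a : lam2 > a)
    (hbc : b * c = (lam1 - a) * (a - lam2))
    (A : Matrix (Fin 2) (Fin 2) ℝ) (hA : A = !![a, b; c, lam1 + lam2 - a]) :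
    ∀ ε > (0:ℝ), ∀ φ : ℝ → (Fin 2 → ℝ), Differentiable ℝ φ →
      (∀ t : ℝ, ‖deriv φ t - A.mulVec (φ t)‖ ≤ ε) →
      ∃ x₀ : Fin 2 → ℝ, ∀ t : ℝ,
        ‖φ t - (NormedSpace.exp (t • A)).mulVec x₀‖ ≤
          max ((lam1 + lam2 + |b| - a) / (lam1 * lam2))
              ((a + |c| + 2 * (lam2 - a) *
                ((lam1 - a) / (lam2 - a)) ^ (-lam2 / (lam1 - lam2)))
                / (lam1 * lam2)) * ε := by
  exact stmt_7_aux a b c lam1 lam2 h12 h2 h2a hbc A hA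
end

section
/- Let A be a 2×2 real matrix with distinct nonzero real eigenvalues λ₁ > λ₂ (of arbitrary signs), written A = [[a, b],[c, λ₁+λ₂−a]] with bc = (λ₁−a)(a−λ₂). Then x' = Ax is Hyers-Ulam stable on ℝ with constant K = (|λ₂|·max{|a−λ₂|+|b|, |c|+|λ₁−a|} + |λ₁|·max{|λ₁−a|+|b|, |c|+|a−λ₂|}) / (|λ₁λ₂|(λ₁−λ₂)). -/
open Matrix

open Set MeasureTheory Filter Topology NormedSpace in
private lemma exp_idem_aux {𝔸 : Type*} [NormedRing 𝔸] [NormedAlgebra ℝ 𝔸] [CompleteSpace 𝔸]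
    (P : 𝔸) (hP : P * P = P) (s : ℝ) :
    exp (s • P) = 1 + (Real.exp s - 1) • P := by
  have hPn : ∀ n : ℕ, P ^ (n + 1) = P := by
    intro n; induction n with
    | zero => simp
    | succ k ih => rw [pow_succ, ih, hP]
  have hsum : Summable (fun n : ℕ => ((n.factorial : ℝ)⁻¹) • (s • P) ^ n) :=
    expSeries_summable' (𝕂 := ℝ) (s • P)
  have hre : Real.exp s = ∑' n : ℕ, s ^ n / (n.factorial : ℝ) := by
    rw [Real.exp_eq_exp_ℝ, exp_eq_tsum_div]
  have hsum2 : Summable (fun n : ℕ => s ^ n / (n.factorial : ℝ)) :=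
    Real.summable_pow_div_factorial s
  rw [exp_eq_tsum ℝ]
  beta_reduce
  rw [Summable.tsum_eq_zero_add hsum]
  have h0 : (((0:ℕ).factorial : ℝ))⁻¹ • (s • P) ^ 0 = 1 := by simp
  rw [h0]
  congr 1
  have hterm : ∀ n : ℕ, (((n+1).factorial : ℝ)⁻¹) • (s • P) ^ (n+1)
      = (s ^ (n+1) / ((n+1).factorial : ℝ)) • P := by
    intro n
    rw [smul_pow, hPn, smul_smul, div_eq_mul_inv, mul_comm]
  calc ∑' n : ℕ, (((n+1).factorial : ℝ)⁻¹) • (s • P) ^ (n+1)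
      = ∑' n : ℕ, (s ^ (n+1) / ((n+1).factorial : ℝ)) • P := by simp_rw [hterm]
    _ = (∑' n : ℕ, s ^ (n+1) / ((n+1).factorial : ℝ)) • P := by
        refine Summable.tsum_smul_const ?_ P
        exact ((summable_nat_add_iff 1).mpr hsum2)
    _ = (Real.exp s - 1) • P := by
        congr 1
        rw [hre, Summable.tsum_eq_zero_add hsum2]
        simp

open NormedSpace in
private lemma matrix_exp_idem (P : Matrix (Fin 2) (Fin 2) ℝ) (hP : P * P = P) (s : ℝ) :
    exp (s • P) = 1 + (Real.exp s - 1) • P := by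
  letI : SeminormedRing (Matrix (Fin 2) (Fin 2) ℝ) := Matrix.linftyOpSemiNormedRing
  letI : NormedRing (Matrix (Fin 2) (Fin 2) ℝ) := Matrix.linftyOpNormedRing
  letI : NormedAlgebra ℝ (Matrix (Fin 2) (Fin 2) ℝ) := Matrix.linftyOpNormedAlgebra
  exact exp_idem_aux P hP s

open NormedSpace in
private lemma exp_decomp_aux (lam1 lam2 t : ℝ) (A P1 P2 : Matrix (Fin 2) (Fin 2) ℝ)
    (hsum : P1 + P2 = 1) (h11 : P1 * P1 = P1) (h22 : P2 * P2 = P2)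
    (h12 : P1 * P2 = 0) (h21 : P2 * P1 = 0)
    (hA : lam1 • P1 + lam2 • P2 = A) :
    exp (t • A) = Real.exp (lam1 * t) • P1 + Real.exp (lam2 * t) • P2 := by
  have hta : t • A = (lam1 * t) • P1 + (lam2 * t) • P2 := by
    rw [← hA, smul_add, smul_smul, smul_smul, mul_comm t lam1, mul_comm t lam2]
  have hcomm : Commute ((lam1 * t) • P1) ((lam2 * t) • P2) := by
    unfold Commute SemiconjBy
    rw [smul_mul_smul_comm, smul_mul_smul_comm, h12, h21, smul_zero, smul_zero]
  rw [hta, Matrix.exp_add_of_commute _ _ hcomm, matrix_exp_idem _ h11, matrix_exp_idem _ h22]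
  set x := Real.exp (lam1 * t) - 1
  set y := Real.exp (lam2 * t) - 1
  have expand : (1 + x • P1) * (1 + y • P2) = 1 + x • P1 + y • P2 + (x * y) • (P1 * P2) := by
    rw [mul_add, add_mul, add_mul, one_mul, one_mul, mul_one, smul_mul_smul_comm]
    abel
  rw [expand, h12, smul_zero, add_zero]
  have : Real.exp (lam1 * t) • P1 + Real.exp (lam2 * t) • P2
      = (P1 + P2) + x • P1 + y • P2 := by
    simp only [x, y, sub_smul, one_smul]
    abel
  rw [this, hsum]

open Set MeasureTheory Filter Topology in
private lemma expbInt {b : ℝ} (hb : 0 < b) (t : ℝ) :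
    IntegrableOn (fun s => Real.exp (b * s)) (Set.Iic t) := by
  have h1 : IntegrableOn (fun x => Real.exp (-b * x)) (Ioi (-t)) :=
    exp_neg_integrableOn_Ioi _ hb
  have h2 := (MeasurePreserving.integrableOn_comp_preimage
    (Measure.measurePreserving_neg (volume : Measure ℝ))
    (Homeomorph.neg ℝ).measurableEmbedding).2 h1
  have h3 : (Neg.neg ⁻¹' Ioi (-t) : Set ℝ) = Iio t := by
    ext x; simp [neg_lt]
  rw [h3] at h2
  have h4 : ((fun x => Real.exp (-b * x)) ∘ Neg.neg) = fun s => Real.exp (b * s) := by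
    ext x; simp [Function.comp]
  rw [h4] at h2
  rw [integrableOn_Iic_iff_integrableOn_Iio]
  exact h2

open Set MeasureTheory Filter Topology in
private lemma expbVal {b : ℝ} (hb : 0 < b) (t : ℝ) :
    ∫ s in Iic t, Real.exp (b * s) = Real.exp (b * t) / b := by
  have hderiv : ∀ x ∈ Iic t, HasDerivAt (fun s => Real.exp (b * s) / b) (Real.exp (b * x)) x := by
    intro x _
    have h := ((hasDerivAt_id x).const_mul b).exp
    have h2 := h.div_const b
    simpa [mul_comm, mul_div_assoc, mul_div_cancel_left₀ _ hb.ne'] using h2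
  have htend : Tendsto (fun s => Real.exp (b * s) / b) atBot (𝓝 0) := by
    have : Tendsto (fun s : ℝ => b * s) atBot atBot :=
      (tendsto_const_mul_atBot_of_pos hb).2 tendsto_id
    have := (Real.tendsto_exp_atBot.comp this).div_const b
    simpa using this
  have := MeasureTheory.integral_Iic_of_hasDerivAt_of_tendsto' hderiv (expbInt hb t) htend
  rw [this]; simp

open Set MeasureTheory Filter Topology in
private lemma hus_neg {lam δ : ℝ} (hlam : lam < 0) (y : ℝ → Fin 2 → ℝ)
    (hy : Differentiable ℝ y) (hbd : ∀ t, ‖deriv y t - lam • y t‖ ≤ δ) :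
    ∃ c : Fin 2 → ℝ, (∀ t, ‖y t - Real.exp (lam * t) • c‖ ≤ δ / |lam|) ∧
      (∀ M : Matrix (Fin 2) (Fin 2) ℝ, (∀ t, M.mulVec (y t) = y t) → M.mulVec c = c) := by
  have hδ : 0 ≤ δ := le_trans (norm_nonneg _) (hbd 0)
  set b : ℝ := -lam with hbdef
  have hb : 0 < b := by simp [hbdef]; linarith
  set u : ℝ → Fin 2 → ℝ := fun t => Real.exp (b * t) • y t with hudef
  set g : ℝ → Fin 2 → ℝ := fun t => Real.exp (b * t) • (deriv y t - lam • y t) with hgdef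
  have hu : ∀ t, HasDerivAt u (g t) t := by
    intro t
    have h1 : HasDerivAt (fun s : ℝ => b * s) b t := by
      simpa using (hasDerivAt_id t).const_mul b
    have h2 := h1.exp
    have h4 := h2.smul (hy t).hasDerivAt
    refine h4.congr_deriv (Eq.symm ?_)
    simp only [hgdef]
    rw [smul_sub, smul_smul]
    have : Real.exp (b * t) * lam = -(Real.exp (b * t) * b) := by
      rw [hbdef]; ring
    rw [this]
    module
  have hgsm : StronglyMeasurable g := by
    have h5 : StronglyMeasurable (deriv y) := stronglyMeasurable_deriv y
    have h6 : Continuous fun t => Real.exp (b * t) :=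
      Real.continuous_exp.comp (continuous_const.mul continuous_id)
    exact h6.stronglyMeasurable.smul
      (h5.sub ((hy.continuous.stronglyMeasurable).const_smul lam))
  have hgnorm : ∀ s, ‖g s‖ ≤ δ * Real.exp (b * s) := by
    intro s
    rw [hgdef]
    simp only []
    rw [norm_smul, Real.norm_eq_abs, abs_of_pos (Real.exp_pos _)]
    rw [mul_comm]
    exact mul_le_mul_of_nonneg_right (hbd s) (Real.exp_pos _).le
  have hgi : ∀ T : ℝ, IntegrableOn g (Iic T) := by
    intro T
    refine Integrable.mono' ((expbInt hb T).const_mul δ) hgsm.aestronglyMeasurable ?_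
    exact ae_of_all _ hgnorm
  have hm : Tendsto u atBot (𝓝 (limUnder atBot u)) :=
    tendsto_limUnder_of_hasDerivAt_of_integrableOn_Iic (fun x _ => hu x) (hgi 0)
  set m := limUnder atBot u with hmdef
  have hint : ∀ T : ℝ, ∫ s in Iic T, g s = u T - m := fun T =>
    integral_Iic_of_hasDerivAt_of_tendsto' (fun x _ => hu x) (hgi T) hm
  have hbound : ∀ T : ℝ, ‖u T - m‖ ≤ δ * (Real.exp (b * T) / b) := by
    intro T
    rw [← hint T]
    calc ‖∫ s in Iic T, g s‖ ≤ ∫ s in Iic T, δ * Real.exp (b * s) :=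
          norm_integral_le_of_norm_le ((expbInt hb T).const_mul δ) (ae_of_all _ hgnorm)
      _ = δ * (Real.exp (b * T) / b) := by rw [integral_const_mul, expbVal hb]
  refine ⟨m, ?_, ?_⟩
  · intro t
    have heq : y t - Real.exp (lam * t) • m = Real.exp (-(b * t)) • (u t - m) := by
      rw [smul_sub, hudef]
      simp only []
      rw [smul_smul, ← Real.exp_add, neg_add_cancel, Real.exp_zero, one_smul]
      have : lam * t = -(b * t) := by rw [hbdef]; ring
      rw [this]
    rw [heq, norm_smul, Real.norm_eq_abs, abs_of_pos (Real.exp_pos _)]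
    have h7 := hbound t
    have h8 : Real.exp (-(b * t)) * ‖u t - m‖
        ≤ Real.exp (-(b * t)) * (δ * (Real.exp (b * t) / b)) :=
      mul_le_mul_of_nonneg_left h7 (Real.exp_pos _).le
    have h9 : Real.exp (-(b * t)) * (δ * (Real.exp (b * t) / b)) = δ / b := by
      rw [Real.exp_neg]
      field_simp
    have h10 : |lam| = b := by rw [abs_of_neg hlam]
    rw [h10]
    linarith
  · intro M hM
    have hMu : (fun t => M.mulVec (u t)) = u := by
      funext t
      rw [hudef]
      simp only []
      rw [Matrix.mulVec_smul, hM t]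
    have hcont : Continuous (fun v : Fin 2 → ℝ => M.mulVec v) :=
      LinearMap.continuous_of_finiteDimensional (Matrix.mulVecLin M)
    have h7 : Tendsto (fun t => M.mulVec (u t)) atBot (𝓝 (M.mulVec m)) :=
      ((hcont.tendsto m).comp hm)
    rw [hMu] at h7
    exact tendsto_nhds_unique h7 hm

open Set MeasureTheory Filter Topology in
private lemma hus_key {lam δ : ℝ} (hlam : lam ≠ 0) (y : ℝ → Fin 2 → ℝ)
    (hy : Differentiable ℝ y) (hbd : ∀ t, ‖deriv y t - lam • y t‖ ≤ δ) :
    ∃ c : Fin 2 → ℝ, (∀ t, ‖y t - Real.exp (lam * t) • c‖ ≤ δ / |lam|) ∧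
      (∀ M : Matrix (Fin 2) (Fin 2) ℝ, (∀ t, M.mulVec (y t) = y t) → M.mulVec c = c) := by
  rcases lt_or_gt_of_ne hlam with h | h
  · exact hus_neg h y hy hbd
  · set z : ℝ → Fin 2 → ℝ := fun t => y (-t) with hzdef
    have hz : Differentiable ℝ z := hy.comp differentiable_neg
    have hzd : ∀ t, deriv z t = -deriv y (-t) := fun t => deriv_comp_neg y t
    have hbd' : ∀ t, ‖deriv z t - (-lam) • z t‖ ≤ δ := by
      intro t
      rw [hzd t, hzdef]
      simp only []
      have : -deriv y (-t) - (-lam) • y (-t) = -(deriv y (-t) - lam • y (-t)) := by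
        rw [neg_smul]; abel
      rw [this, norm_neg]
      exact hbd (-t)
    obtain ⟨c, hc1, hc2⟩ := hus_neg (by linarith : -lam < 0) z hz hbd'
    refine ⟨c, ?_, ?_⟩
    · intro t
      have := hc1 (-t)
      rw [hzdef] at this
      simp only [neg_neg] at this
      rw [abs_neg] at this
      have heq : -lam * -t = lam * t := by ring
      rwa [heq] at this
    · intro M hM
      exact hc2 M (fun t => hM (-t))

private lemma mulVec_norm_le (M : Matrix (Fin 2) (Fin 2) ℝ) (v : Fin 2 → ℝ) :
    ‖M.mulVec v‖ ≤ max (|M 0 0| + |M 0 1|) (|M 1 0| + |M 1 1|) * ‖v‖ := by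
  have h0 : |v 0| ≤ ‖v‖ := by simpa [Real.norm_eq_abs] using norm_le_pi_norm v 0
  have h1 : |v 1| ≤ ‖v‖ := by simpa [Real.norm_eq_abs] using norm_le_pi_norm v 1
  have key : ∀ p q : ℝ, |p * v 0 + q * v 1| ≤ (|p| + |q|) * ‖v‖ := by
    intro p q
    calc |p * v 0 + q * v 1| ≤ |p * v 0| + |q * v 1| := abs_add_le _ _
      _ = |p| * |v 0| + |q| * |v 1| := by rw [abs_mul, abs_mul]
      _ ≤ |p| * ‖v‖ + |q| * ‖v‖ := by gcongr
      _ = (|p| + |q|) * ‖v‖ := by ring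
  have hnn : 0 ≤ max (|M 0 0| + |M 0 1|) (|M 1 0| + |M 1 1|) * ‖v‖ := by positivity
  refine (pi_norm_le_iff_of_nonneg hnn).2 ?_
  intro i
  fin_cases i
  · simp only [Matrix.mulVec, dotProduct, Fin.sum_univ_two, Real.norm_eq_abs]
    exact le_trans (key _ _) (mul_le_mul_of_nonneg_right (le_max_left _ _) (norm_nonneg v))
  · simp only [Matrix.mulVec, dotProduct, Fin.sum_univ_two, Real.norm_eq_abs]
    exact le_trans (key _ _) (mul_le_mul_of_nonneg_right (le_max_right _ _) (norm_nonneg v))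

theorem stmt_8 (a b c lam1 lam2 : ℝ)
    (h12 : lam1 > lam2) (h1 : lam1 ≠ 0) (h2 : lam2 ≠ 0)
    (hbc : b * c = (lam1 - a) * (a - lam2))
    (A : Matrix (Fin 2) (Fin 2) ℝ) (hA : A = !![a, b; c, lam1 + lam2 - a]) :
    ∀ ε > (0:ℝ), ∀ φ : ℝ → (Fin 2 → ℝ), Differentiable ℝ φ →
      (∀ t : ℝ, ‖deriv φ t - A.mulVec (φ t)‖ ≤ ε) →
      ∃ x₀ : Fin 2 → ℝ, ∀ t : ℝ,
        ‖φ t - (NormedSpace.exp (t • A)).mulVec x₀‖ ≤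
          ((|lam2| * max (|a - lam2| + |b|) (|c| + |lam1 - a|) +
            |lam1| * max (|lam1 - a| + |b|) (|c| + |a - lam2|)) /
            (|lam1 * lam2| * (lam1 - lam2))) * ε := by
  intro ε hε φ hφ hq
  set d : ℝ := lam1 - lam2 with hddef
  have hd : 0 < d := by simp only [hddef]; linarith
  have hdne : d ≠ 0 := hd.ne'
  set M1 : Matrix (Fin 2) (Fin 2) ℝ := !![a - lam2, b; c, lam1 - a] with hM1
  set M2 : Matrix (Fin 2) (Fin 2) ℝ := !![lam1 - a, -b; -c, a - lam2] with hM2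
  have msum : M1 + M2 = d • 1 := by
    ext i j
    fin_cases i <;> fin_cases j <;>
      simp [hM1, hM2, Matrix.one_apply] <;>
      first
      | ring1
      | linear_combination hbc
      | linear_combination -hbc
  have m11 : M1 * M1 = d • M1 := by
    ext i j
    fin_cases i <;> fin_cases j <;>
      simp [hM1, Matrix.mul_apply, Fin.sum_univ_two] <;>
      first
      | ring1
      | linear_combination hbc
      | linear_combination -hbc
  have m22 : M2 * M2 = d • M2 := by
    ext i j
    fin_cases i <;> fin_cases j <;>
      simp [hM2, Matrix.mul_apply, Fin.sum_univ_two] <;>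
      first
      | ring1
      | linear_combination hbc
      | linear_combination -hbc
  have m12 : M1 * M2 = 0 := by
    ext i j
    fin_cases i <;> fin_cases j <;>
      simp [hM1, hM2, Matrix.mul_apply, Fin.sum_univ_two] <;>
      first
      | ring1
      | linear_combination hbc
      | linear_combination -hbc
  have m21 : M2 * M1 = 0 := by
    ext i j
    fin_cases i <;> fin_cases j <;>
      simp [hM1, hM2, Matrix.mul_apply, Fin.sum_univ_two] <;>
      first
      | ring1
      | linear_combination hbc
      | linear_combination -hbc
  have mA1 : M1 * A = lam1 • M1 := by
    ext i j
    fin_cases i <;> fin_cases j <;>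
      simp [hM1, hA, Matrix.mul_apply, Fin.sum_univ_two] <;>
      first
      | ring1
      | linear_combination hbc
      | linear_combination -hbc
  have mA2 : M2 * A = lam2 • M2 := by
    ext i j
    fin_cases i <;> fin_cases j <;>
      simp [hM2, hA, Matrix.mul_apply, Fin.sum_univ_two] <;>
      first
      | ring1
      | linear_combination hbc
      | linear_combination -hbc
  have mAP : lam1 • M1 + lam2 • M2 = d • A := by
    ext i j
    fin_cases i <;> fin_cases j <;>
      simp [hM1, hM2, hA] <;> ring
  set P1 : Matrix (Fin 2) (Fin 2) ℝ := d⁻¹ • M1 with hP1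
  set P2 : Matrix (Fin 2) (Fin 2) ℝ := d⁻¹ • M2 with hP2
  have hsum : P1 + P2 = 1 := by
    rw [hP1, hP2, ← smul_add, msum, smul_smul, inv_mul_cancel₀ hdne, one_smul]
  have h11 : P1 * P1 = P1 := by
    rw [hP1, Matrix.smul_mul, Matrix.mul_smul, m11, smul_smul, smul_smul]
    congr 1
    field_simp
  have h22 : P2 * P2 = P2 := by
    rw [hP2, Matrix.smul_mul, Matrix.mul_smul, m22, smul_smul, smul_smul]
    congr 1
    field_simp
  have hz12 : P1 * P2 = 0 := by
    rw [hP1, hP2, Matrix.smul_mul, Matrix.mul_smul, m12, smul_zero, smul_zero]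
  have hz21 : P2 * P1 = 0 := by
    rw [hP1, hP2, Matrix.smul_mul, Matrix.mul_smul, m21, smul_zero, smul_zero]
  have hA1 : P1 * A = lam1 • P1 := by
    rw [hP1, Matrix.smul_mul, mA1, smul_comm]
  have hA2 : P2 * A = lam2 • P2 := by
    rw [hP2, Matrix.smul_mul, mA2, smul_comm]
  have hAP : lam1 • P1 + lam2 • P2 = A := by
    rw [hP1, hP2, smul_comm lam1, smul_comm lam2, ← smul_add, mAP, smul_smul,
      inv_mul_cancel₀ hdne, one_smul]
  clear_value P1 P2
  -- the two projected solutions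
  set q : ℝ → Fin 2 → ℝ := fun t => deriv φ t - A.mulVec (φ t) with hqdef
  set mx1 : ℝ := max (|a - lam2| + |b|) (|c| + |lam1 - a|) with hmx1
  set mx2 : ℝ := max (|lam1 - a| + |b|) (|c| + |a - lam2|) with hmx2
  have hmx1nn : 0 ≤ mx1 := le_trans (by positivity) (le_max_left _ _)
  have hmx2nn : 0 ≤ mx2 := le_trans (by positivity) (le_max_left _ _)
  have main : ∀ (P : Matrix (Fin 2) (Fin 2) ℝ) (lam mx : ℝ), lam ≠ 0 →
      P * P = P → P * A = lam • P →
      (max (|P 0 0| + |P 0 1|) (|P 1 0| + |P 1 1|) ≤ d⁻¹ * mx) → 0 ≤ mx →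
      ∃ cc : Fin 2 → ℝ, (∀ t, ‖P.mulVec (φ t) - Real.exp (lam * t) • cc‖ ≤ d⁻¹ * mx * ε / |lam|)
        ∧ P.mulVec cc = cc := by
    intro P lam mx hlamne hPP hPA hrow hmxnn
    set L : (Fin 2 → ℝ) →L[ℝ] (Fin 2 → ℝ) :=
      LinearMap.toContinuousLinearMap (Matrix.mulVecLin P) with hLdef
    have hLa : ∀ v, L v = P.mulVec v := fun v => rfl
    set y : ℝ → Fin 2 → ℝ := fun t => P.mulVec (φ t) with hydef
    have hy : Differentiable ℝ y := by
      have : Differentiable ℝ (fun t => L (φ t)) := L.differentiable.comp hφ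
      exact this
    have hyd : ∀ t, deriv y t = P.mulVec (deriv φ t) := by
      intro t
      have h := (L.hasFDerivAt.comp_hasDerivAt t (hφ t).hasDerivAt)
      simp only [Function.comp_def, hLa] at h
      exact h.deriv
    have hbd : ∀ t, ‖deriv y t - lam • y t‖ ≤ d⁻¹ * mx * ε := by
      intro t
      rw [hyd t, hydef]
      simp only []
      have e1 : lam • P.mulVec (φ t) = P.mulVec (A.mulVec (φ t)) := by
        rw [Matrix.mulVec_mulVec, hPA, Matrix.smul_mulVec]
      rw [e1, ← Matrix.mulVec_sub]
      calc ‖P.mulVec (deriv φ t - A.mulVec (φ t))‖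
          ≤ max (|P 0 0| + |P 0 1|) (|P 1 0| + |P 1 1|) * ‖deriv φ t - A.mulVec (φ t)‖ :=
            mulVec_norm_le P _
        _ ≤ (d⁻¹ * mx) * ε := by
            apply mul_le_mul hrow (hq t) (norm_nonneg _)
            positivity
    obtain ⟨cc, hcc1, hcc2⟩ := hus_key hlamne y hy hbd
    refine ⟨cc, fun t => hcc1 t, ?_⟩
    refine hcc2 P (fun t => ?_)
    rw [hydef]
    simp only []
    rw [Matrix.mulVec_mulVec, hPP]
  have hrow1 : max (|P1 0 0| + |P1 0 1|) (|P1 1 0| + |P1 1 1|) ≤ d⁻¹ * mx1 := by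
    have e00 : P1 0 0 = d⁻¹ * (a - lam2) := by simp [hP1, hM1]
    have e01 : P1 0 1 = d⁻¹ * b := by simp [hP1, hM1]
    have e10 : P1 1 0 = d⁻¹ * c := by simp [hP1, hM1]
    have e11 : P1 1 1 = d⁻¹ * (lam1 - a) := by simp [hP1, hM1]
    have hdi : (0:ℝ) < d⁻¹ := inv_pos.2 hd
    rw [e00, e01, e10, e11, abs_mul, abs_mul, abs_mul, abs_mul, abs_of_pos hdi]
    apply max_le
    · rw [← mul_add]
      exact mul_le_mul_of_nonneg_left (le_max_left _ _) hdi.le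
    · rw [← mul_add]
      exact mul_le_mul_of_nonneg_left (le_max_right _ _) hdi.le
  have hrow2 : max (|P2 0 0| + |P2 0 1|) (|P2 1 0| + |P2 1 1|) ≤ d⁻¹ * mx2 := by
    have e00 : P2 0 0 = d⁻¹ * (lam1 - a) := by simp [hP2, hM2]
    have e01 : P2 0 1 = d⁻¹ * (-b) := by simp [hP2, hM2]
    have e10 : P2 1 0 = d⁻¹ * (-c) := by simp [hP2, hM2]
    have e11 : P2 1 1 = d⁻¹ * (a - lam2) := by simp [hP2, hM2]
    have hdi : (0:ℝ) < d⁻¹ := inv_pos.2 hd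
    rw [e00, e01, e10, e11, abs_mul, abs_mul, abs_mul, abs_mul, abs_of_pos hdi,
      abs_neg, abs_neg]
    apply max_le
    · rw [← mul_add]
      exact mul_le_mul_of_nonneg_left (le_max_left _ _) hdi.le
    · rw [← mul_add]
      exact mul_le_mul_of_nonneg_left (le_max_right _ _) hdi.le
  obtain ⟨c1, hc1, hP1c1⟩ := main P1 lam1 mx1 h1 h11 hA1 hrow1 hmx1nn
  obtain ⟨c2, hc2, hP2c2⟩ := main P2 lam2 mx2 h2 h22 hA2 hrow2 hmx2nn
  refine ⟨c1 + c2, fun t => ?_⟩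
  have hPx1 : P1.mulVec (c1 + c2) = c1 := by
    rw [Matrix.mulVec_add, hP1c1, ← hP2c2, Matrix.mulVec_mulVec, hz12,
      Matrix.zero_mulVec, add_zero]
  have hPx2 : P2.mulVec (c1 + c2) = c2 := by
    rw [Matrix.mulVec_add, hP2c2, ← hP1c1, Matrix.mulVec_mulVec, hz21,
      Matrix.zero_mulVec, zero_add]
  have hexp : (NormedSpace.exp (t • A)).mulVec (c1 + c2)
      = Real.exp (lam1 * t) • c1 + Real.exp (lam2 * t) • c2 := by
    rw [exp_decomp_aux lam1 lam2 t A P1 P2 hsum h11 h22 hz12 hz21 hAP,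
      Matrix.add_mulVec, Matrix.smul_mulVec, Matrix.smul_mulVec, hPx1, hPx2]
  have hsplit : φ t = P1.mulVec (φ t) + P2.mulVec (φ t) := by
    rw [← Matrix.add_mulVec, hsum, Matrix.one_mulVec]
  have hdiff : φ t - (NormedSpace.exp (t • A)).mulVec (c1 + c2)
      = (P1.mulVec (φ t) - Real.exp (lam1 * t) • c1)
        + (P2.mulVec (φ t) - Real.exp (lam2 * t) • c2) := by
    rw [hexp]
    nth_rewrite 1 [hsplit]
    abel
  rw [hdiff]
  have hb1 := hc1 t
  have hb2 := hc2 t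
  have htot : ‖(P1.mulVec (φ t) - Real.exp (lam1 * t) • c1)
        + (P2.mulVec (φ t) - Real.exp (lam2 * t) • c2)‖
      ≤ d⁻¹ * mx1 * ε / |lam1| + d⁻¹ * mx2 * ε / |lam2| :=
    le_trans (norm_add_le _ _) (add_le_add hb1 hb2)
  refine le_trans htot (le_of_eq ?_)
  have ha1 : (0:ℝ) < |lam1| := abs_pos.2 h1
  have ha2 : (0:ℝ) < |lam2| := abs_pos.2 h2
  rw [abs_mul]
  field_simp
end

section
/- Let A be a 2×2 real matrix with eigenvalues α ± iβ, α ≠ 0, β > 0. Then x' = Ax is Hyers-Ulam stable on ℝ with constant K = √(β² + (|a−α| + max{|b|,|c|})²) / (|α|β), where a, b, c are the entries of A = [[a, b],[c, 2α−a]]. -/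
open Matrix NormedSpace MeasureTheory Filter

/-! ### Powers and exponential of a matrix with `B^2 = -β² • 1` -/

private theorem HU_Bpow_even (beta : ℝ) (B : Matrix (Fin 2) (Fin 2) ℝ)
    (hB : B * B = (-(beta^2)) • 1) (k : ℕ) :
    B ^ (2*k) = ((-(beta^2))^k) • (1 : Matrix (Fin 2) (Fin 2) ℝ) := by
  induction k with
  | zero => simp
  | succ n ih =>
    rw [Nat.mul_succ, pow_add, ih, pow_two B, hB, smul_mul_assoc, one_mul, smul_smul, pow_succ]
    ring_nf

private theorem HU_Bpow_odd (beta : ℝ) (B : Matrix (Fin 2) (Fin 2) ℝ)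
    (hB : B * B = (-(beta^2)) • 1) (k : ℕ) :
    B ^ (2*k+1) = ((-(beta^2))^k) • B := by
  rw [pow_succ, HU_Bpow_even beta B hB, smul_mul_assoc, one_mul]

private theorem HU_exp_smul_of_sq (beta : ℝ) (hbeta : beta ≠ 0) (B : Matrix (Fin 2) (Fin 2) ℝ)
    (hB : B * B = (-(beta^2)) • 1) (t : ℝ) :
    exp (t • B) = Real.cos (beta*t) • (1 : Matrix (Fin 2) (Fin 2) ℝ)
      + (Real.sin (beta*t)/beta) • B := by
  letI : NormedRing (Matrix (Fin 2) (Fin 2) ℝ) := Matrix.linftyOpNormedRing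
  letI : NormedAlgebra ℝ (Matrix (Fin 2) (Fin 2) ℝ) := Matrix.linftyOpNormedAlgebra
  rw [exp_eq_tsum ℝ]
  refine HasSum.tsum_eq ?_
  refine HasSum.even_add_odd ?_ ?_
  · have h := (Real.hasSum_cos (beta*t)).smul_const (1 : Matrix (Fin 2) (Fin 2) ℝ)
    convert h using 2 with k
    · rfl
    rw [smul_pow, HU_Bpow_even beta B hB, smul_smul, smul_smul]
    congr 1
    rw [neg_pow (beta^2), ← pow_mul, mul_pow]
    field_simp
  · have h := ((Real.hasSum_sin (beta*t)).div_const beta).smul_const B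
    convert h using 2 with k
    · rfl
    rw [smul_pow, HU_Bpow_odd beta B hB, smul_smul, smul_smul]
    congr 1
    rw [neg_pow (beta^2), ← pow_mul, mul_pow]
    field_simp
    ring

private theorem HU_sqB (a b c alpha beta : ℝ)
    (h : (alpha - a)^2 + b*c + beta^2 = 0)
    (A : Matrix (Fin 2) (Fin 2) ℝ) (hA : A = !![a, b; c, 2 * alpha - a]) :
    (A - alpha • 1) * (A - alpha • 1) = (-(beta^2)) • 1 := by
  subst hA
  ext i j
  fin_cases i <;> fin_cases j <;>
    simp [Matrix.mul_apply, Fin.sum_univ_two, Matrix.one_apply] <;> nlinarith [h]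

private theorem HU_expA (a b c alpha beta : ℝ) (hbeta : beta ≠ 0)
    (h : (alpha - a)^2 + b*c + beta^2 = 0)
    (A : Matrix (Fin 2) (Fin 2) ℝ) (hA : A = !![a, b; c, 2 * alpha - a]) (u : ℝ) :
    exp (u • A) = Real.exp (alpha*u) •
      (Real.cos (beta*u) • (1 : Matrix (Fin 2) (Fin 2) ℝ)
        + (Real.sin (beta*u)/beta) • (A - alpha • 1)) := by
  have hsplit : u • A = (u*alpha) • (1 : Matrix (Fin 2) (Fin 2) ℝ) + u • (A - alpha • 1) := by
    module
  have hc : Commute ((u*alpha) • (1 : Matrix (Fin 2) (Fin 2) ℝ)) (u • (A - alpha • 1)) :=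
    (Commute.one_left _).smul_left _
  rw [hsplit, Matrix.exp_add_of_commute _ _ hc,
    HU_exp_smul_of_sq beta hbeta _ (HU_sqB a b c alpha beta h A hA)]
  have h1 : exp ((u*alpha) • (1 : Matrix (Fin 2) (Fin 2) ℝ))
      = Real.exp (alpha*u) • (1 : Matrix (Fin 2) (Fin 2) ℝ) := by
    rw [Matrix.smul_one_eq_diagonal, Matrix.exp_diagonal, Pi.exp_def]
    rw [Matrix.smul_one_eq_diagonal]
    funext i
    rw [← Real.exp_eq_exp_ℝ, mul_comm]
  rw [h1, smul_mul_assoc, one_mul]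

/-! ### The operator norm estimate -/

private theorem HU_key_scalar (θ p q β : ℝ) (hβ : 0 < β) :
    |β * Real.cos θ + p * Real.sin θ| + |q| * |Real.sin θ|
      ≤ Real.sqrt (β^2 + (|p|+|q|)^2) := by
  refine Real.le_sqrt_of_sq_le ?_
  have h1 : |β * Real.cos θ + p * Real.sin θ| ≤ β * |Real.cos θ| + |p| * |Real.sin θ| := by
    calc |β * Real.cos θ + p * Real.sin θ| ≤ |β * Real.cos θ| + |p * Real.sin θ| := abs_add_le _ _
    _ = β * |Real.cos θ| + |p| * |Real.sin θ| := by rw [abs_mul, abs_mul, abs_of_pos hβ]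
  have h2 := Real.sin_sq_add_cos_sq θ
  nlinarith [abs_nonneg (Real.sin θ), abs_nonneg (Real.cos θ), abs_nonneg p, abs_nonneg q,
    sq_abs (Real.sin θ), sq_abs (Real.cos θ),
    sq_nonneg (β * |Real.sin θ| - (|p|+|q|) * |Real.cos θ|),
    abs_nonneg (β * Real.cos θ + p * Real.sin θ), hβ.le,
    mul_nonneg (abs_nonneg q) (abs_nonneg (Real.sin θ))]

private theorem HU_row_bound (θ p q β m : ℝ) (hβ : 0 < β) (hm : |p| + |q| ≤ m) :
    |Real.cos θ + p * Real.sin θ / β| + |q * Real.sin θ / β|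
      ≤ Real.sqrt (β^2 + m^2) / β := by
  have e1 : Real.cos θ + p * Real.sin θ / β = (β * Real.cos θ + p * Real.sin θ) / β := by
    field_simp
  have e2 : q * Real.sin θ / β = (q * Real.sin θ) / β := by ring
  rw [e1, e2, abs_div, abs_div, abs_of_pos hβ, ← add_div, div_le_div_iff_of_pos_right hβ]
  calc |β * Real.cos θ + p * Real.sin θ| + |q * Real.sin θ|
      = |β * Real.cos θ + p * Real.sin θ| + |q| * |Real.sin θ| := by rw [abs_mul]
    _ ≤ Real.sqrt (β^2 + (|p|+|q|)^2) := HU_key_scalar θ p q β hβ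
    _ ≤ Real.sqrt (β^2 + m^2) := Real.sqrt_le_sqrt (by nlinarith [abs_nonneg p, abs_nonneg q])

private theorem HU_abs_comb (X Y x y C D : ℝ) (hx : |x| ≤ D) (hy : |y| ≤ D) (hD : 0 ≤ D)
    (hXY : |X| + |Y| ≤ C) : |X * x + Y * y| ≤ C * D := by
  calc |X * x + Y * y| ≤ |X| * |x| + |Y| * |y| := by
        refine (abs_add_le _ _).trans ?_; rw [abs_mul, abs_mul]
    _ ≤ |X| * D + |Y| * D :=
        add_le_add (mul_le_mul_of_nonneg_left hx (abs_nonneg _))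
          (mul_le_mul_of_nonneg_left hy (abs_nonneg _))
    _ = (|X| + |Y|) * D := by ring
    _ ≤ C * D := mul_le_mul_of_nonneg_right hXY hD

private theorem HU_hop (a b c alpha beta : ℝ) (hbeta : 0 < beta)
    (h : (alpha - a)^2 + b*c + beta^2 = 0)
    (A : Matrix (Fin 2) (Fin 2) ℝ) (hA : A = !![a, b; c, 2 * alpha - a])
    (u : ℝ) (v : Fin 2 → ℝ) :
    ‖(exp (u • A)).mulVec v‖ ≤
      Real.exp (alpha*u) * (Real.sqrt (beta^2 + (|a - alpha| + max |b| |c|)^2) / beta) * ‖v‖ := by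
  have hv0 : |v 0| ≤ ‖v‖ := by simpa [Real.norm_eq_abs] using norm_le_pi_norm v 0
  have hv1 : |v 1| ≤ ‖v‖ := by simpa [Real.norm_eq_abs] using norm_le_pi_norm v 1
  set m := |a - alpha| + max |b| |c| with hmdef
  have hm0 : 0 ≤ m := by positivity
  rw [HU_expA a b c alpha beta hbeta.ne' h A hA u, Matrix.smul_mulVec, norm_smul,
    Real.norm_eq_abs, Real.abs_exp, mul_assoc]
  refine mul_le_mul_of_nonneg_left ?_ (Real.exp_nonneg _)
  have hC : (0:ℝ) ≤ Real.sqrt (beta^2+m^2)/beta * ‖v‖ := by positivity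
  rw [pi_norm_le_iff_of_nonneg hC]
  intro i
  subst hA
  fin_cases i <;>
    simp only [Matrix.mulVec, dotProduct, Fin.sum_univ_two, Matrix.add_apply,
      Matrix.smul_apply, Matrix.sub_apply, Matrix.one_apply, smul_eq_mul,
      Fin.mk_zero, Fin.mk_one, Fin.isValue, Matrix.of_apply,
      Matrix.cons_val', Matrix.cons_val_zero, Matrix.cons_val_one,
      Matrix.empty_val', Matrix.cons_val_fin_one, Matrix.head_cons, Matrix.head_fin_const,
      Real.norm_eq_abs,
      one_ne_zero, zero_ne_one, if_true, if_false, ite_true, ite_false, mul_one, mul_zero,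
      sub_zero, add_zero, zero_add] <;>
    refine HU_abs_comb _ _ _ _ _ _ hv0 hv1 (norm_nonneg v) ?_
  · have hr := HU_row_bound (beta*u) (a - alpha) b beta m hbeta
      (add_le_add_right (le_max_left |b| |c|) _)
    have e1 : Real.cos (beta*u) + Real.sin (beta*u) / beta * (a - alpha)
        = Real.cos (beta*u) + (a - alpha) * Real.sin (beta*u) / beta := by ring
    have e2 : Real.sin (beta*u) / beta * b = b * Real.sin (beta*u) / beta := by ring
    rw [e1, e2]; exact hr
  · have hr := HU_row_bound (beta*u) (alpha - a) c beta m hbeta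
      (by rw [abs_sub_comm]; exact add_le_add_right (le_max_right |b| |c|) _)
    have e1 : Real.cos (beta*u) + Real.sin (beta*u) / beta * (2*alpha - a - alpha)
        = Real.cos (beta*u) + (alpha - a) * Real.sin (beta*u) / beta := by ring
    have e2 : Real.sin (beta*u) / beta * c = c * Real.sin (beta*u) / beta := by ring
    rw [e1, e2, add_comm]; exact hr

/-! ### scalar derivative helper -/

private theorem HU_scalar_deriv (al be C D : ℝ) (hbe : be ≠ 0) (u : ℝ) :
    HasDerivAt (fun t => Real.exp (al*t) * (Real.cos (be*t) * C + Real.sin (be*t)/be * D))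
      (Real.exp (al*u) * ((al * Real.cos (be*u) - be * Real.sin (be*u)) * C
        + (al * Real.sin (be*u)/be + Real.cos (be*u)) * D)) u := by
  have h1 : HasDerivAt (fun t : ℝ => al*t) al u := by
    simpa using (hasDerivAt_id u).const_mul al
  have h2 : HasDerivAt (fun t : ℝ => be*t) be u := by
    simpa using (hasDerivAt_id u).const_mul be
  have hd := (h1.exp).mul (((h2.cos).mul_const C).add (((h2.sin).div_const be).mul_const D))
  refine hd.congr_deriv ?_
  simp only [Pi.add_apply, mul_div_assoc, div_self hbe]
  ring

/-! ### main auxiliary statement, case `0 < alpha` -/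

private theorem HU_aux (a b c alpha beta : ℝ) (halpha : 0 < alpha) (hbeta : beta > 0)
    (h : (alpha - a) ^ 2 + b * c + beta ^ 2 = 0)
    (A : Matrix (Fin 2) (Fin 2) ℝ) (hA : A = !![a, b; c, 2 * alpha - a])
    (ε : ℝ) (hε : ε > 0) (φ : ℝ → Fin 2 → ℝ) (hφ : Differentiable ℝ φ)
    (hbdd : ∀ t : ℝ, ‖deriv φ t - A.mulVec (φ t)‖ ≤ ε) :
    ∃ x₀ : Fin 2 → ℝ, ∀ t : ℝ,
      ‖φ t - (exp (t • A)).mulVec x₀‖ ≤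
        (Real.sqrt (beta ^ 2 + (|a - alpha| + max |b| |c|) ^ 2) / (|alpha| * beta)) * ε := by
  set m := |a - alpha| + max |b| |c| with hmdef
  set K : ℝ := Real.sqrt (beta^2 + m^2) / beta with hKdef
  have hK0 : 0 < K := by
    apply div_pos _ hbeta
    exact Real.sqrt_pos.2 (by positivity)
  set B := A - alpha • (1 : Matrix (Fin 2) (Fin 2) ℝ) with hBdef
  set E : ℝ → Matrix (Fin 2) (Fin 2) ℝ := fun u => Real.exp (alpha*u) •
      (Real.cos (beta*u) • (1 : Matrix (Fin 2) (Fin 2) ℝ) + (Real.sin (beta*u)/beta) • B)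
    with hEdef
  have hE : ∀ u, exp (u • A) = E u := fun u => HU_expA a b c alpha beta hbeta.ne' h A hA u
  have hop' : ∀ u (v : Fin 2 → ℝ), ‖(E u).mulVec v‖ ≤ Real.exp (alpha*u) * K * ‖v‖ := by
    intro u v
    rw [← hE, hKdef, hmdef]
    exact HU_hop a b c alpha beta hbeta h A hA u v
  have hEmul : ∀ u v, E u * E v = E (u+v) := by
    intro u v
    rw [← hE, ← hE, ← hE,
      ← Matrix.exp_add_of_commute _ _ (((Commute.refl A).smul_left u).smul_right v),
      ← add_smul]
  have hE0 : E 0 = 1 := by rw [← hE, zero_smul, exp_zero]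
  have hB2 : B * B = (-(beta^2)) • 1 := by
    rw [hBdef]; exact HU_sqB a b c alpha beta h A hA
  have hAeq : A = alpha • 1 + B := by rw [hBdef]; module
  have hAB : A * B = (-(beta^2)) • 1 + alpha • B := by
    conv_lhs => rw [hAeq]
    rw [add_mul, Matrix.smul_mul, one_mul, hB2, add_comm]
  have hcommBA : A * B = B * A := by
    rw [hBdef]
    exact ((Commute.refl A).sub_right ((Commute.one_right A).smul_right alpha)).eq
  have hcommA : ∀ u, A * E u = E u * A := by
    intro u
    simp only [hEdef]
    rw [Matrix.mul_smul, Matrix.smul_mul, mul_add, add_mul,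
      Matrix.mul_smul, Matrix.smul_mul, Matrix.mul_smul, Matrix.smul_mul,
      mul_one, one_mul, hcommBA]
  -- the derivative of `A ↦ E u` entrywise
  have hF : ∀ u, A * E u = Real.exp (alpha*u) •
      ((alpha*Real.cos (beta*u) - beta*Real.sin (beta*u)) • (1 : Matrix (Fin 2) (Fin 2) ℝ)
        + (alpha*Real.sin (beta*u)/beta + Real.cos (beta*u)) • B) := by
    intro u
    simp only [hEdef]
    rw [Matrix.mul_smul, mul_add, Matrix.mul_smul, Matrix.mul_smul, mul_one, hAB]
    conv_lhs => rw [hAeq]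
    match_scalars <;> field_simp <;> ring
  have hEder : ∀ u i j, HasDerivAt (fun t => E t i j) ((A * E u) i j) u := by
    intro u i j
    have hfun : (fun t => E t i j) = fun t => Real.exp (alpha*t) *
        (Real.cos (beta*t) * (1 : Matrix (Fin 2) (Fin 2) ℝ) i j + Real.sin (beta*t)/beta * B i j) := by
      funext t
      simp only [hEdef, Matrix.smul_apply, Matrix.add_apply, smul_eq_mul]
    rw [hfun, hF u]
    have := HU_scalar_deriv alpha beta ((1 : Matrix (Fin 2) (Fin 2) ℝ) i j) (B i j) hbeta.ne' u
    convert this using 1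
    all_goals simp [Matrix.smul_apply, Matrix.add_apply, smul_eq_mul]
  set y : ℝ → Fin 2 → ℝ := fun t => deriv φ t - A.mulVec (φ t) with hydef
  set ψ : ℝ → Fin 2 → ℝ := fun t => (E (-t)).mulVec (φ t) with hψdef
  set g : ℝ → Fin 2 → ℝ := fun t => (E (-t)).mulVec (y t) with hgdef
  have hψ0 : ψ 0 = φ 0 := by rw [hψdef]; simp only [neg_zero, hE0, Matrix.one_mulVec]
  -- derivative of ψ
  have hψder : ∀ t, HasDerivAt ψ (g t) t := by
    intro t
    have hφ' : HasDerivAt φ (deriv φ t) t := (hφ t).hasDerivAt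
    have hcomp : ∀ i j, HasDerivAt (fun s => E (-s) i j) (-((A * E (-t)) i j)) t := by
      intro i j
      have h1 := (hEder (-t) i j).comp t (hasDerivAt_neg t)
      simpa [mul_comm, Function.comp_def] using h1
    have hgt : g t = fun i => ∑ j : Fin 2,
        (-((A * E (-t)) i j) * φ t j + E (-t) i j * deriv φ t j) := by
      have e1 : g t = (E (-t)).mulVec (deriv φ t) - (A * E (-t)).mulVec (φ t) := by
        rw [hgdef, hydef]
        simp only
        rw [Matrix.mulVec_sub, Matrix.mulVec_mulVec, ← hcommA]
      funext i
      rw [e1]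
      simp only [Matrix.mulVec, dotProduct, Fin.sum_univ_two, Pi.sub_apply]
      ring
    rw [hasDerivAt_pi]
    intro i
    have hsum := HasDerivAt.sum (u := Finset.univ) (fun j _ =>
      (hcomp i j).mul (hasDerivAt_pi.1 hφ' j))
    have hψfun : (fun s => ψ s i) = fun s => ∑ j : Fin 2, E (-s) i j * φ s j := by
      funext s
      simp only [hψdef, Matrix.mulVec, dotProduct]
    rw [hψfun, hgt]
    exact hsum
  -- norm bound on g
  have hgbound : ∀ s, ‖g s‖ ≤ Real.exp (alpha * (-s)) * K * ε := by
    intro s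
    calc ‖g s‖ ≤ Real.exp (alpha * (-s)) * K * ‖y s‖ := hop' (-s) (y s)
      _ ≤ Real.exp (alpha * (-s)) * K * ε := by
          refine mul_le_mul_of_nonneg_left (hbdd s) ?_
          positivity
  -- measurability
  have hEcont : ∀ i j, Continuous (fun s : ℝ => E (-s) i j) := by
    intro i j
    simp only [hEdef, Matrix.smul_apply, Matrix.add_apply, smul_eq_mul]
    fun_prop
  have hymeas : Measurable y := by
    have h1 : Measurable (deriv φ) := measurable_deriv φ
    have h2 : Measurable fun t => A.mulVec (φ t) :=
      ((LinearMap.toContinuousLinearMap (Matrix.mulVecLin A)).continuous.measurable).comp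
        hφ.continuous.measurable
    exact h1.sub h2
  have hgmeas : Measurable g := by
    refine measurable_pi_lambda _ fun i => ?_
    have hfun : (fun s => g s i) = fun s => ∑ j : Fin 2, E (-s) i j * y s j := by
      funext s
      simp only [hgdef, Matrix.mulVec, dotProduct]
    rw [hfun]
    exact Finset.measurable_sum _ fun j _ =>
      ((hEcont i j).measurable).mul ((measurable_pi_apply j).comp hymeas)
  -- integrability on Ioi t
  have hint : ∀ t : ℝ, IntegrableOn g (Set.Ioi t) := by
    intro t
    have hdom : IntegrableOn (fun s => Real.exp (-alpha * s) * (K*ε)) (Set.Ioi t) :=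
      (exp_neg_integrableOn_Ioi t halpha).mul_const (K*ε)
    refine Integrable.mono' hdom (hgmeas.aestronglyMeasurable.restrict) ?_
    refine MeasureTheory.ae_of_all _ fun s => ?_
    calc ‖g s‖ ≤ Real.exp (alpha * (-s)) * K * ε := hgbound s
      _ = Real.exp (-alpha * s) * (K*ε) := by ring_nf
  -- interval integrability
  have hii : ∀ t₀ t₁ : ℝ, IntervalIntegrable g MeasureTheory.volume t₀ t₁ := by
    intro t₀ t₁
    rw [intervalIntegrable_iff]
    refine (hint (min t₀ t₁ - 1)).mono_set fun x hx => ?_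
    exact lt_of_lt_of_le (sub_one_lt _) (le_of_lt hx.1)
  -- FTC
  have hFTC : ∀ t : ℝ, ∫ s in (0:ℝ)..t, g s = ψ t - ψ 0 := fun t =>
    intervalIntegral.integral_eq_sub_of_hasDerivAt (fun s _ => hψder s) (hii 0 t)
  -- splitting of the improper integral
  have hsplit : ∀ t : ℝ, (∫ s in Set.Ioi (0:ℝ), g s) - (∫ s in (0:ℝ)..t, g s)
      = ∫ s in Set.Ioi t, g s := by
    intro t
    rcases le_or_gt 0 t with h0 | h0
    · rw [intervalIntegral.integral_of_le h0]
      have hu : Set.Ioc 0 t ∪ Set.Ioi t = Set.Ioi (0:ℝ) := Set.Ioc_union_Ioi_eq_Ioi h0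
      rw [← hu, MeasureTheory.setIntegral_union (Set.Ioc_disjoint_Ioi le_rfl)
        measurableSet_Ioi ((hint 0).mono_set Set.Ioc_subset_Ioi_self) (hint t)]
      abel
    · rw [intervalIntegral.integral_symm, intervalIntegral.integral_of_le h0.le, sub_neg_eq_add]
      have hu : Set.Ioc t 0 ∪ Set.Ioi 0 = Set.Ioi t := Set.Ioc_union_Ioi_eq_Ioi h0.le
      rw [← hu, MeasureTheory.setIntegral_union (Set.Ioc_disjoint_Ioi le_rfl)
        measurableSet_Ioi ((hint t).mono_set Set.Ioc_subset_Ioi_self) (hint 0)]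
      abel
  -- pulling mulVec through the integral
  have hpull : ∀ t : ℝ, (E t).mulVec (∫ s in Set.Ioi t, g s)
      = ∫ s in Set.Ioi t, (E t).mulVec (g s) := by
    intro t
    have := ContinuousLinearMap.integral_comp_comm
      (LinearMap.toContinuousLinearMap (Matrix.mulVecLin (E t))) (hint t)
    simpa [Matrix.mulVecLin_apply] using this.symm
  -- the exponential integral
  have hexpint : ∀ t : ℝ, ∫ s in Set.Ioi t, Real.exp (alpha * (t + -s)) = 1/alpha := by
    intro t
    have hderiv : ∀ s ∈ Set.Ioi t, HasDerivAt
        (fun s => -(1/alpha) * Real.exp (alpha * (t + -s)))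
        (Real.exp (alpha * (t + -s))) s := by
      intro s _
      have hinner : HasDerivAt (fun s : ℝ => alpha * (t + -s)) (-alpha) s := by
        have := ((hasDerivAt_id s).neg.const_add t).const_mul alpha
        simpa using this
      have := (hinner.exp).const_mul (-(1/alpha))
      refine this.congr_deriv ?_
      field_simp
    have hcont : ContinuousWithinAt (fun s => -(1/alpha) * Real.exp (alpha * (t + -s)))
        (Set.Ici t) t := by
      have : Continuous fun s : ℝ => -(1/alpha) * Real.exp (alpha * (t + -s)) := by fun_prop
      exact this.continuousWithinAt
    have hintexp : IntegrableOn (fun s => Real.exp (alpha * (t + -s))) (Set.Ioi t) := by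
      have h1 : IntegrableOn (fun x => Real.exp (alpha*t) * Real.exp (-alpha * x))
          (Set.Ioi t) := (exp_neg_integrableOn_Ioi t halpha).const_mul _
      refine h1.congr_fun (fun s _ => ?_) measurableSet_Ioi
      beta_reduce
      rw [← Real.exp_add]
      congr 1
      ring
    have htend : Tendsto (fun s => -(1/alpha) * Real.exp (alpha * (t + -s))) atTop (nhds 0) := by
      have h1 : Tendsto (fun s : ℝ => alpha * (t + -s)) atTop atBot := by
        apply Tendsto.const_mul_atBot halpha
        apply tendsto_atBot_add_const_left
        exact tendsto_neg_atTop_atBot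
      have h2 := Real.tendsto_exp_atBot.comp h1
      have := h2.const_mul (-(1/alpha))
      simpa using this
    have := MeasureTheory.integral_Ioi_of_hasDerivAt_of_tendsto hcont hderiv hintexp htend
    rw [this]
    simp
  -- define x₀ and conclude
  refine ⟨φ 0 + ∫ s in Set.Ioi (0:ℝ), g s, fun t => ?_⟩
  have key : φ t - (exp (t • A)).mulVec (φ 0 + ∫ s in Set.Ioi (0:ℝ), g s)
      = -∫ s in Set.Ioi t, (E t).mulVec (g s) := by
    rw [hE, ← hpull]
    have h1 : (E t).mulVec (ψ t) = φ t := by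
      rw [hψdef]
      simp only
      rw [Matrix.mulVec_mulVec, hEmul, add_neg_cancel, hE0, Matrix.one_mulVec]
    have h2 : ψ t - (φ 0 + ∫ s in Set.Ioi (0:ℝ), g s) = -∫ s in Set.Ioi t, g s := by
      rw [← hψ0, ← hsplit t, hFTC t]
      abel
    calc φ t - (E t).mulVec (φ 0 + ∫ s in Set.Ioi (0:ℝ), g s)
        = (E t).mulVec (ψ t - (φ 0 + ∫ s in Set.Ioi (0:ℝ), g s)) := by
          rw [Matrix.mulVec_sub, h1]
      _ = -(E t).mulVec (∫ s in Set.Ioi t, g s) := by rw [h2, Matrix.mulVec_neg]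
  rw [key, norm_neg]
  have hptwise : ∀ s, ‖(E t).mulVec (g s)‖ ≤ Real.exp (alpha * (t + -s)) * (K * ε) := by
    intro s
    have e1 : (E t).mulVec (g s) = (E (t + -s)).mulVec (y s) := by
      rw [hgdef]
      simp only
      rw [Matrix.mulVec_mulVec, hEmul]
    rw [e1]
    calc ‖(E (t + -s)).mulVec (y s)‖ ≤ Real.exp (alpha * (t + -s)) * K * ‖y s‖ :=
          hop' (t + -s) (y s)
      _ ≤ Real.exp (alpha * (t + -s)) * (K * ε) := by
          rw [mul_assoc]
          refine mul_le_mul_of_nonneg_left ?_ (Real.exp_nonneg _)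
          exact mul_le_mul_of_nonneg_left (hbdd s) hK0.le
  have hbint : Integrable (fun s => Real.exp (alpha * (t + -s)) * (K * ε))
      ((MeasureTheory.volume : Measure ℝ).restrict (Set.Ioi t)) := by
    refine Integrable.mul_const ?_ _
    have h1 : IntegrableOn (fun x => Real.exp (alpha*t) * Real.exp (-alpha * x))
        (Set.Ioi t) := (exp_neg_integrableOn_Ioi t halpha).const_mul _
    refine h1.congr_fun (fun s _ => ?_) measurableSet_Ioi
    beta_reduce
    rw [← Real.exp_add]
    congr 1
    ring
  calc ‖∫ s in Set.Ioi t, (E t).mulVec (g s)‖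
      ≤ ∫ s in Set.Ioi t, Real.exp (alpha * (t + -s)) * (K * ε) :=
        MeasureTheory.norm_integral_le_of_norm_le hbint
          (MeasureTheory.ae_of_all _ fun s => hptwise s)
    _ = (∫ s in Set.Ioi t, Real.exp (alpha * (t + -s))) * (K * ε) := by
        rw [MeasureTheory.integral_mul_const]
    _ = (1/alpha) * (K * ε) := by rw [hexpint t]
    _ = Real.sqrt (beta ^ 2 + m ^ 2) / (|alpha| * beta) * ε := by
        rw [hKdef, abs_of_pos halpha]
        field_simp

theorem stmt_10 (a b c alpha beta : ℝ)
    (halpha : alpha ≠ 0) (hbeta : beta > 0)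
    (h : (alpha - a) ^ 2 + b * c + beta ^ 2 = 0)
    (A : Matrix (Fin 2) (Fin 2) ℝ) (hA : A = !![a, b; c, 2 * alpha - a]) :
    ∀ ε > (0:ℝ), ∀ φ : ℝ → (Fin 2 → ℝ), Differentiable ℝ φ →
      (∀ t : ℝ, ‖deriv φ t - A.mulVec (φ t)‖ ≤ ε) →
      ∃ x₀ : Fin 2 → ℝ, ∀ t : ℝ,
        ‖φ t - (NormedSpace.exp (t • A)).mulVec x₀‖ ≤
          (Real.sqrt (beta ^ 2 + (|a - alpha| + max |b| |c|) ^ 2) / (|alpha| * beta)) * ε := by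
  intro ε hε φ hφ hbdd
  rcases lt_or_gt_of_ne halpha with hneg | hpos
  · -- alpha < 0 : reverse time
    have h' : ((-alpha) - (-a)) ^ 2 + (-b) * (-c) + beta ^ 2 = 0 := by nlinarith [h]
    have hA' : -A = !![-a, -b; -c, 2 * (-alpha) - (-a)] := by
      rw [hA]; ext i j; fin_cases i <;> fin_cases j <;> simp <;> ring
    have hφ' : Differentiable ℝ (fun t => φ (-t)) := hφ.comp differentiable_neg
    have hderiv' : ∀ t, deriv (fun s => φ (-s)) t = -(deriv φ (-t)) := by
      intro t
      have h1 : HasDerivAt (fun s => φ (-s)) ((-1 : ℝ) • deriv φ (-t)) t :=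
        HasDerivAt.scomp t ((hφ (-t)).hasDerivAt) (hasDerivAt_neg t)
      simpa using h1.deriv
    have hbdd' : ∀ t, ‖deriv (fun s => φ (-s)) t - (-A).mulVec (φ (-t))‖ ≤ ε := by
      intro t
      rw [hderiv', Matrix.neg_mulVec]
      have e : -(deriv φ (-t)) - -(A.mulVec (φ (-t)))
          = -(deriv φ (-t) - A.mulVec (φ (-t))) := by abel
      rw [e, norm_neg]
      exact hbdd (-t)
    obtain ⟨x₀, hx₀⟩ := HU_aux (-a) (-b) (-c) (-alpha) beta (by linarith) hbeta h' (-A) hA'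
      ε hε (fun t => φ (-t)) hφ' hbdd'
    refine ⟨x₀, fun t => ?_⟩
    have h2 := hx₀ (-t)
    rw [neg_neg, neg_smul_neg] at h2
    have hconst : |(-a) - (-alpha)| = |a - alpha| := by
      rw [show (-a) - (-alpha) = -(a - alpha) by ring, abs_neg]
    rw [hconst, abs_neg, abs_neg, abs_neg] at h2
    exact h2
  · exact HU_aux a b c alpha beta hpos hbeta h A hA ε hε φ hφ hbdd
end

section
/- Let A be a 2×2 real matrix having 0 as an eigenvalue. Then the system x'(t) = Ax(t) is not Hyers-Ulam stable on ℝ: there exists ε > 0 and a differentiable φ: ℝ → ℝ² with ‖φ'(t) − Aφ(t)‖_∞ ≤ ε for all t, such that for every solution x of x' = Ax, sup_{t∈ℝ} ‖φ(t) − x(t)‖_∞ = ∞. -/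
open Matrix

attribute [local instance] Matrix.linftyOpNormedRing Matrix.linftyOpNormedAlgebra

private lemma vecMul_smulMat (w : Fin 2 → ℝ) (c : ℝ) (M : Matrix (Fin 2) (Fin 2) ℝ) :
    w ᵥ* (c • M) = c • (w ᵥ* M) := by
  ext i
  simp [Matrix.vecMul, dotProduct, Fin.sum_univ_two]
  ring

private lemma vecMul_expAux (A : Matrix (Fin 2) (Fin 2) ℝ) (w : Fin 2 → ℝ)
    (hw : w ᵥ* A = 0) (t : ℝ) : w ᵥ* NormedSpace.exp (t • A) = w := by
  have hpow : ∀ n : ℕ, n ≠ 0 → w ᵥ* (t • A) ^ n = 0 := by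
    intro n hn
    obtain ⟨m, rfl⟩ := Nat.exists_eq_succ_of_ne_zero hn
    rw [pow_succ', smul_mul_assoc, vecMul_smulMat, ← Matrix.vecMul_vecMul, hw,
      Matrix.zero_vecMul, smul_zero]
  let L : Matrix (Fin 2) (Fin 2) ℝ →ₗ[ℝ] (Fin 2 → ℝ) :=
    { toFun := fun M => w ᵥ* M
      map_add' := fun M N => Matrix.vecMul_add M N w
      map_smul' := fun c M => vecMul_smulMat w c M }
  have hsum := NormedSpace.expSeries_summable' (𝕂 := ℝ) (t • A)
  have hmap : L (NormedSpace.exp (t • A)) = ∑' n : ℕ, L ((n.factorial⁻¹ : ℝ) • (t • A) ^ n) := by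
    rw [NormedSpace.exp_eq_tsum ℝ]
    exact (L.toContinuousLinearMap.map_tsum hsum)
  have : L (NormedSpace.exp (t • A)) = w := by
    rw [hmap, tsum_eq_single 0]
    · simp [L]
    · intro n hn
      simp [L, hpow n hn, vecMul_smulMat]
  exact this

theorem stmt_11 (A : Matrix (Fin 2) (Fin 2) ℝ) (hdet : A.det = 0) :
    ∃ ε > (0:ℝ), ∃ φ : ℝ → (Fin 2 → ℝ), Differentiable ℝ φ ∧
      (∀ t : ℝ, ‖deriv φ t - A.mulVec (φ t)‖ ≤ ε) ∧
      ∀ x₀ : Fin 2 → ℝ, ∀ C : ℝ, ∃ t : ℝ,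
        ‖φ t - (NormedSpace.exp (t • A)).mulVec x₀‖ > C := by
  -- right kernel vector v
  obtain ⟨v, hv0, hAv⟩ := Matrix.exists_mulVec_eq_zero_iff.2 hdet
  -- left kernel vector w
  have hdetT : Aᵀ.det = 0 := by rw [Matrix.det_transpose]; exact hdet
  obtain ⟨w, hw0, hATw⟩ := Matrix.exists_mulVec_eq_zero_iff.2 hdetT
  have hwA : w ᵥ* A = 0 := by
    rw [← Matrix.mulVec_transpose]; exact hATw
  have hwne : w 0 ≠ 0 ∨ w 1 ≠ 0 := by
    by_contra h
    push_neg at h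
    exact hw0 (funext fun i => by fin_cases i <;> simp [h.1, h.2])
  -- construct u with A (A u) = 0 and w ⬝ᵥ u ≠ 0
  have hkey : ∃ u : Fin 2 → ℝ, A.mulVec (A.mulVec u) = 0 ∧ w ⬝ᵥ u ≠ 0 := by
    by_cases hwv : w ⬝ᵥ v = 0
    · refine ⟨w, ?_, ?_⟩
      · -- y := A.mulVec w is orthogonal to w, hence parallel to v, hence in ker A
        set y := A.mulVec w with hy
        have hwy : w ⬝ᵥ y = 0 := by
          rw [hy, Matrix.dotProduct_mulVec, hwA, zero_dotProduct]
        have hwv' : w 0 * v 0 + w 1 * v 1 = 0 := by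
          simpa [dotProduct, Fin.sum_univ_two] using hwv
        have hwy' : w 0 * y 0 + w 1 * y 1 = 0 := by
          simpa [dotProduct, Fin.sum_univ_two] using hwy
        have hcross : y 0 * v 1 - y 1 * v 0 = 0 := by
          rcases hwne with h | h
          · have : (y 0 * v 1 - y 1 * v 0) * w 0 = 0 := by
              linear_combination v 1 * hwy' - y 1 * hwv'
            exact (mul_eq_zero.1 this).resolve_right h
          · have : (y 0 * v 1 - y 1 * v 0) * w 1 = 0 := by
              linear_combination y 0 * hwv' - v 0 * hwy'
            exact (mul_eq_zero.1 this).resolve_right h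
        have hvne : v 0 ≠ 0 ∨ v 1 ≠ 0 := by
          by_contra h
          push_neg at h
          exact hv0 (funext fun i => by fin_cases i <;> simp [h.1, h.2])
        rcases hvne with h | h
        · have hyv : y = (y 0 / v 0) • v := by
            funext i
            fin_cases i
            · simp [smul_eq_mul]; field_simp
            · show y 1 = (y 0 / v 0) * v 1
              field_simp
              nlinarith [hcross]
          show A.mulVec y = 0
          rw [hyv, Matrix.mulVec_smul, hAv, smul_zero]
        · have hyv : y = (y 1 / v 1) • v := by
            funext i
            fin_cases i
            · show y 0 = (y 1 / v 1) * v 0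
              field_simp
              nlinarith [hcross]
            · simp [smul_eq_mul]; field_simp
          show A.mulVec y = 0
          rw [hyv, Matrix.mulVec_smul, hAv, smul_zero]
      · -- w ⬝ᵥ w ≠ 0
        intro h
        have h' : w 0 * w 0 + w 1 * w 1 = 0 := by
          simpa [dotProduct, Fin.sum_univ_two] using h
        rcases hwne with h0 | h0 <;> nlinarith [h', mul_self_pos.mpr h0, mul_self_nonneg (w 0), mul_self_nonneg (w 1)]
    · exact ⟨v, by rw [hAv, Matrix.mulVec_zero], hwv⟩
  obtain ⟨u, hAAu, hwu⟩ := hkey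
  have hu0 : u ≠ 0 := fun h => hwu (by simp [h])
  have hεpos : (0:ℝ) < ‖u‖ := norm_pos_iff.2 hu0
  set b := A.mulVec u with hb
  -- the perturbed trajectory
  set φ : ℝ → (Fin 2 → ℝ) := fun t => t • u + (t ^ 2 / 2) • b with hφ
  have hderiv : ∀ t : ℝ, HasDerivAt φ (u + t • b) t := by
    intro t
    have h1 : HasDerivAt (fun s : ℝ => s • u) ((1:ℝ) • u) t :=
      (hasDerivAt_id t).smul_const u
    have h2 : HasDerivAt (fun s : ℝ => (s ^ 2 / 2) • b) ((2 * t ^ 1 / 2) • b) t :=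
      ((hasDerivAt_pow 2 t).div_const 2).smul_const b
    have h3 := h1.add h2
    have he : (1:ℝ) • u + (2 * t ^ 1 / 2) • b = u + t • b := by
      rw [one_smul]
      congr 1
      congr 1
      ring
    rw [he] at h3
    exact h3
  refine ⟨‖u‖, hεpos, φ, ?_, ?_, ?_⟩
  · exact fun t => (hderiv t).differentiableAt
  · intro t
    have hd : deriv φ t = u + t • b := (hderiv t).deriv
    have heq : deriv φ t - A.mulVec (φ t) = u := by
      rw [hd, hφ]
      simp only [Matrix.mulVec_add, Matrix.mulVec_smul, ← hb, hAAu, smul_zero, add_zero]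
      abel
    rw [heq]
  · intro x₀ C
    set S := |w 0| + |w 1| with hS
    have hSpos : 0 < S := by
      rcases hwne with h | h
      · have := abs_pos.2 h; have := abs_nonneg (w 1); linarith
      · have := abs_pos.2 h; have := abs_nonneg (w 0); linarith
    have hdotle : ∀ z : Fin 2 → ℝ, |w ⬝ᵥ z| ≤ S * ‖z‖ := by
      intro z
      have h0 : |z 0| ≤ ‖z‖ := by
        simpa [Real.norm_eq_abs] using norm_le_pi_norm z 0
      have h1 : |z 1| ≤ ‖z‖ := by
        simpa [Real.norm_eq_abs] using norm_le_pi_norm z 1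
      have : w ⬝ᵥ z = w 0 * z 0 + w 1 * z 1 := by
        simp [dotProduct, Fin.sum_univ_two]
      rw [this, hS]
      calc |w 0 * z 0 + w 1 * z 1| ≤ |w 0 * z 0| + |w 1 * z 1| := abs_add_le _ _
        _ = |w 0| * |z 0| + |w 1| * |z 1| := by rw [abs_mul, abs_mul]
        _ ≤ |w 0| * ‖z‖ + |w 1| * ‖z‖ := by
            gcongr <;> assumption
        _ = (|w 0| + |w 1|) * ‖z‖ := by ring
    -- choose t
    set t := (w ⬝ᵥ x₀ + (|C| + 1) * S) / (w ⬝ᵥ u) with ht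
    refine ⟨t, ?_⟩
    have hwb : w ⬝ᵥ b = 0 := by
      rw [hb, Matrix.dotProduct_mulVec, hwA, zero_dotProduct]
    have hwφ : w ⬝ᵥ φ t = t * (w ⬝ᵥ u) := by
      rw [hφ]
      simp only [dotProduct_add, dotProduct_smul, hwb, smul_eq_mul, mul_zero,
        add_zero]
    have hwx : w ⬝ᵥ ((NormedSpace.exp (t • A)).mulVec x₀) = w ⬝ᵥ x₀ := by
      rw [Matrix.dotProduct_mulVec, vecMul_expAux A w hwA t]
    have hdiff : w ⬝ᵥ (φ t - (NormedSpace.exp (t • A)).mulVec x₀) = (|C| + 1) * S := by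
      rw [dotProduct_sub, hwφ, hwx, ht, div_mul_cancel₀ _ hwu]
      ring
    have hle := hdotle (φ t - (NormedSpace.exp (t • A)).mulVec x₀)
    rw [hdiff] at hle
    have habs : |(|C| + 1) * S| = (|C| + 1) * S := by
      apply abs_of_pos
      positivity
    rw [habs] at hle
    have hCS : C * S < (|C| + 1) * S := by
      have : C ≤ |C| := le_abs_self C
      nlinarith
    by_contra hcon
    push_neg at hcon
    have : S * ‖φ t - (NormedSpace.exp (t • A)).mulVec x₀‖ ≤ S * C :=
      mul_le_mul_of_nonneg_left hcon (le_of_lt hSpos)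
    nlinarith
end

section
/- Let A = [[a, b],[c, −a]] be a 2×2 real matrix with a² + bc + β² = 0 for some β > 0 (so A has purely imaginary eigenvalues ±iβ). Then the system x'(t) = Ax(t) is not Hyers-Ulam stable on ℝ. -/
open Matrix

attribute [local instance] Matrix.linftyOpNormedRing Matrix.linftyOpNormedAlgebra

lemma expFormula (beta : ℝ) (hbeta : beta > 0) (M : Matrix (Fin 2) (Fin 2) ℝ)
    (hM : M * M = (-(beta ^ 2)) • (1 : Matrix (Fin 2) (Fin 2) ℝ)) (t : ℝ) :
    NormedSpace.exp (t • M) = Real.cos (beta * t) • (1 : Matrix (Fin 2) (Fin 2) ℝ)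
      + (Real.sin (beta * t) / beta) • M := by
  set g : ℝ → Matrix (Fin 2) (Fin 2) ℝ :=
    fun t => Real.cos (beta * t) • (1 : Matrix (Fin 2) (Fin 2) ℝ)
      + (Real.sin (beta * t) / beta) • M with hg
  have hb : beta ≠ 0 := ne_of_gt hbeta
  have hgd : ∀ s : ℝ, HasDerivAt g
      ((-(beta * Real.sin (beta * s))) • (1 : Matrix (Fin 2) (Fin 2) ℝ)
        + Real.cos (beta * s) • M) s := by
    intro s
    have hc : HasDerivAt (fun u : ℝ => Real.cos (beta * u)) (-(beta * Real.sin (beta * s))) s := by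
      have := (Real.hasDerivAt_cos (beta * s)).comp s ((hasDerivAt_id s).const_mul beta)
      simpa [mul_comm, Function.comp_def] using this
    have hs : HasDerivAt (fun u : ℝ => Real.sin (beta * u) / beta) (Real.cos (beta * s)) s := by
      have := ((Real.hasDerivAt_sin (beta * s)).comp s
        ((hasDerivAt_id s).const_mul beta)).div_const beta
      refine this.congr_deriv ?_
      field_simp
    exact (hc.smul_const _).add (hs.smul_const M)
  have hMg : ∀ s : ℝ, M * g s = (-(beta * Real.sin (beta * s))) • (1 : Matrix (Fin 2) (Fin 2) ℝ)
      + Real.cos (beta * s) • M := by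
    intro s
    rw [hg]
    rw [mul_add, Matrix.mul_smul, Matrix.mul_smul, mul_one, hM, smul_smul]
    rw [add_comm]
    congr 1
    congr 1
    field_simp
  set f : ℝ → Matrix (Fin 2) (Fin 2) ℝ := fun s => NormedSpace.exp (s • (-M)) * g s with hf
  have hfd : ∀ s : ℝ, HasDerivAt f 0 s := by
    intro s
    have he : HasDerivAt (fun u : ℝ => NormedSpace.exp (u • (-M)))
        (NormedSpace.exp (s • (-M)) * (-M)) s := hasDerivAt_exp_smul_const (-M) s
    have := (he.mul (hgd s))
    refine this.congr_deriv ?_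
    rw [← hMg s]
    noncomm_ring
  have hconst : f t = f 0 :=
    is_const_of_deriv_eq_zero (fun s => (hfd s).differentiableAt)
      (fun s => (hfd s).deriv) t 0
  have hf0 : f 0 = 1 := by
    simp [hf, hg]
  have hinv : NormedSpace.exp (t • M) * NormedSpace.exp (t • (-M)) = 1 := by
    have hcomm : Commute (t • M) (t • (-M)) :=
      ((Commute.refl M).neg_right.smul_left t).smul_right t
    erw [← NormedSpace.exp_add_of_commute hcomm]
    simp
  calc NormedSpace.exp (t • M) = NormedSpace.exp (t • M) * f t := by
        rw [hconst, hf0, mul_one]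
    _ = (NormedSpace.exp (t • M) * NormedSpace.exp (t • (-M))) * g t := by
        rw [hf]; noncomm_ring
    _ = g t := by rw [hinv, one_mul]

set_option maxHeartbeats 1000000 in
theorem stmt_12 (a b c beta : ℝ) (hbeta : beta > 0)
    (h : a ^ 2 + b * c + beta ^ 2 = 0)
    (A : Matrix (Fin 2) (Fin 2) ℝ) (hA : A = !![a, b; c, -a]) :
    ¬ ∃ K : ℝ, ∀ ε > (0:ℝ), ∀ φ : ℝ → (Fin 2 → ℝ), Differentiable ℝ φ →
      (∀ t : ℝ, ‖deriv φ t - A.mulVec (φ t)‖ ≤ ε) →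
      ∃ x₀ : Fin 2 → ℝ, ∀ t : ℝ,
        ‖φ t - (NormedSpace.exp (t • A)).mulVec x₀‖ ≤ K * ε := by
  have hb : beta ≠ 0 := ne_of_gt hbeta
  have hmulVec : ∀ x : Fin 2 → ℝ,
      A.mulVec x = ![a * x 0 + b * x 1, c * x 0 + (-a) * x 1] := by
    intro x; rw [hA]; funext i
    fin_cases i <;> simp [Matrix.mulVec, dotProduct, Fin.sum_univ_two]
  have hA2 : A * A = (-(beta ^ 2)) • (1 : Matrix (Fin 2) (Fin 2) ℝ) := by
    rw [hA]; funext i j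
    fin_cases i <;> fin_cases j <;>
      simp [Matrix.mul_apply, Fin.sum_univ_two, Matrix.one_apply] <;> nlinarith [h]
  have hformula := expFormula beta hbeta A hA2
  have hc0 : c ≠ 0 := by
    intro h0; rw [h0] at h; nlinarith
  rintro ⟨K, hK⟩
  -- constants
  set M : ℝ := 1 + (|a| + |b| + |c|) / beta with hMdef
  have hMpos : 0 < M := by positivity
  have hM1 : 1 ≤ M := by
    rw [hMdef]
    have : 0 ≤ (|a| + |b| + |c|) / beta := by positivity
    linarith
  set d : ℝ := 1 / M with hd
  have hdpos : 0 < d := by positivity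
  -- the functions
  set w : ℝ → Fin 2 → ℝ := fun t =>
    ![Real.cos (beta * t) + a / beta * Real.sin (beta * t),
      c / beta * Real.sin (beta * t)] with hw
  set w' : ℝ → Fin 2 → ℝ := fun t =>
    ![-(beta * Real.sin (beta * t)) + a * Real.cos (beta * t),
      c * Real.cos (beta * t)] with hw'
  set φ : ℝ → Fin 2 → ℝ := fun t => (d * t) • w t with hφ
  -- derivative of φ
  have hderiv : ∀ t : ℝ, HasDerivAt φ (d • w t + (d * t) • w' t) t := by
    intro t
    rw [hasDerivAt_pi]
    have hdt : HasDerivAt (fun s : ℝ => d * s) d t := by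
      simpa using (hasDerivAt_id t).const_mul d
    have hcos : HasDerivAt (fun s : ℝ => Real.cos (beta * s))
        (-(beta * Real.sin (beta * t))) t := by
      have := (Real.hasDerivAt_cos (beta * t)).comp t ((hasDerivAt_id t).const_mul beta)
      simpa [mul_comm, Function.comp_def] using this
    have hsin : HasDerivAt (fun s : ℝ => Real.sin (beta * s))
        (beta * Real.cos (beta * t)) t := by
      have := (Real.hasDerivAt_sin (beta * t)).comp t ((hasDerivAt_id t).const_mul beta)
      simpa [mul_comm, Function.comp_def] using this
    intro i
    fin_cases i
    · have hw0 : HasDerivAt (fun s : ℝ => Real.cos (beta * s) + a / beta * Real.sin (beta * s))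
          (-(beta * Real.sin (beta * t)) + a * Real.cos (beta * t)) t := by
        have := hcos.add (hsin.const_mul (a / beta))
        refine this.congr_deriv ?_
        field_simp
        try ring
      have h0 := hdt.mul hw0
      simp only [hφ, hw, hw', Pi.add_apply, Pi.smul_apply, smul_eq_mul,
        Matrix.cons_val_zero]
      exact h0
    · have hw1 : HasDerivAt (fun s : ℝ => c / beta * Real.sin (beta * s))
          (c * Real.cos (beta * t)) t := by
        have := hsin.const_mul (c / beta)
        refine this.congr_deriv ?_
        field_simp
        try ring
      have h1 := hdt.mul hw1
      simp only [hφ, hw, hw', Pi.add_apply, Pi.smul_apply, smul_eq_mul,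
        Matrix.cons_val_one, Matrix.head_cons]
      exact h1
  have hφdiff : Differentiable ℝ φ := fun t => (hderiv t).differentiableAt
  -- A (w t) = w' t
  have hAw : ∀ t : ℝ, A.mulVec (w t) = w' t := by
    intro t
    rw [hmulVec]
    funext i
    fin_cases i
    · simp only [hw, hw', Fin.zero_eta, Fin.mk_one, Matrix.cons_val_zero, Matrix.cons_val_one,
        Matrix.head_cons]
      have e : beta ^ 2 * beta⁻¹ = beta := by rw [sq, mul_assoc, mul_inv_cancel₀ hb, mul_one]
      linear_combination (Real.sin (beta * t) / beta) * h - Real.sin (beta * t) * e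
    · simp only [hw, hw', Fin.zero_eta, Fin.mk_one, Matrix.cons_val_zero, Matrix.cons_val_one,
        Matrix.head_cons]
      ring
  -- forcing term
  have hforce : ∀ t : ℝ, deriv φ t - A.mulVec (φ t) = d • w t := by
    intro t
    rw [(hderiv t).deriv]
    have : A.mulVec (φ t) = (d * t) • w' t := by
      rw [hφ]
      simp only [Matrix.mulVec_smul, hAw t]
    rw [this, add_sub_cancel_right]
  -- norm bound on w
  have hwb : ∀ t : ℝ, ‖w t‖ ≤ M := by
    intro t
    rw [pi_norm_le_iff_of_nonneg (le_of_lt hMpos)]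
    intro i
    have hs1 := Real.abs_sin_le_one (beta * t)
    have hc1 := Real.abs_cos_le_one (beta * t)
    have hab : |a / beta| = |a| / beta := by
      rw [abs_div, abs_of_pos hbeta]
    have hcb : |c / beta| = |c| / beta := by
      rw [abs_div, abs_of_pos hbeta]
    have h1 : 0 ≤ |a| / beta := by positivity
    have h2 : 0 ≤ |b| / beta := by positivity
    have h3 : 0 ≤ |c| / beta := by positivity
    fin_cases i
    · simp only [hw, Real.norm_eq_abs, Matrix.cons_val_zero]
      calc |Real.cos (beta * t) + a / beta * Real.sin (beta * t)|
          ≤ |Real.cos (beta * t)| + |a / beta| * |Real.sin (beta * t)| := by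
            rw [← abs_mul]; exact abs_add_le _ _
        _ ≤ 1 + |a| / beta * 1 := by
            rw [hab]; gcongr
        _ ≤ M := by
            rw [mul_one]
            have := (div_le_div_iff_of_pos_right hbeta).mpr
              (show |a| ≤ |a| + |b| + |c| by nlinarith [abs_nonneg b, abs_nonneg c])
            linarith
    · simp only [hw, Real.norm_eq_abs, Matrix.cons_val_one, Matrix.head_cons]
      calc |c / beta * Real.sin (beta * t)| = |c / beta| * |Real.sin (beta * t)| := abs_mul _ _
        _ ≤ |c| / beta * 1 := by rw [hcb]; gcongr
        _ ≤ M := by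
            rw [mul_one]
            have := (div_le_div_iff_of_pos_right hbeta).mpr
              (show |c| ≤ |a| + |b| + |c| by nlinarith [abs_nonneg a, abs_nonneg b])
            linarith
  have hforce_norm : ∀ t : ℝ, ‖deriv φ t - A.mulVec (φ t)‖ ≤ 1 := by
    intro t
    rw [hforce t, norm_smul, Real.norm_eq_abs, abs_of_pos hdpos]
    calc d * ‖w t‖ ≤ d * M := by gcongr; exact hwb t
      _ = 1 := by rw [hd]; field_simp
  obtain ⟨x₀, hx₀⟩ := hK 1 one_pos φ hφdiff hforce_norm
  -- at t = 0
  have hX0 : (NormedSpace.exp ((0:ℝ) • A)).mulVec x₀ = x₀ := by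
    simp
  have hφ0 : φ 0 = 0 := by
    simp [hφ]
  have hx0K : ‖x₀‖ ≤ K := by
    have := hx₀ 0
    rw [hX0, hφ0, zero_sub, norm_neg, mul_one] at this
    exact this
  have hKnn : 0 ≤ K := le_trans (norm_nonneg _) hx0K
  -- bound on exact solution
  have hXb : ∀ t : ℝ, ‖(NormedSpace.exp (t • A)).mulVec x₀‖ ≤ M * K := by
    intro t
    rw [hformula t, Matrix.add_mulVec, Matrix.smul_mulVec, Matrix.smul_mulVec,
      Matrix.one_mulVec]
    rw [pi_norm_le_iff_of_nonneg (by positivity)]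
    intro i
    have hs1 := Real.abs_sin_le_one (beta * t)
    have hc1 := Real.abs_cos_le_one (beta * t)
    have hxi : ∀ j : Fin 2, |x₀ j| ≤ K := by
      intro j
      refine le_trans ?_ hx0K
      simpa [Real.norm_eq_abs] using norm_le_pi_norm x₀ j
    have hAv : ∀ j : Fin 2, |(A.mulVec x₀) j| ≤ (|a| + |b| + |c|) * K := by
      intro j
      rw [hmulVec]
      fin_cases j
      · simp only [Matrix.cons_val_zero]
        calc |a * x₀ 0 + b * x₀ 1| ≤ |a| * |x₀ 0| + |b| * |x₀ 1| := by
              simpa [abs_mul] using abs_add_le (a * x₀ 0) (b * x₀ 1)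
          _ ≤ (|a| + |b| + |c|) * K := by
              have h0 := hxi 0; have h1 := hxi 1
              have := abs_nonneg a; have := abs_nonneg b; have := abs_nonneg c
              nlinarith [abs_nonneg (x₀ 0), abs_nonneg (x₀ 1)]
      · simp only [Matrix.cons_val_one, Matrix.head_cons]
        calc |c * x₀ 0 + (-a) * x₀ 1| ≤ |c| * |x₀ 0| + |a| * |x₀ 1| := by
              simpa [abs_mul] using abs_add_le (c * x₀ 0) ((-a) * x₀ 1)
          _ ≤ (|a| + |b| + |c|) * K := by
              have h0 := hxi 0; have h1 := hxi 1
              have := abs_nonneg a; have := abs_nonneg b; have := abs_nonneg c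
              nlinarith [abs_nonneg (x₀ 0), abs_nonneg (x₀ 1)]
    simp only [Pi.add_apply, Pi.smul_apply, smul_eq_mul, Real.norm_eq_abs]
    have b1 : |Real.cos (beta * t)| * |x₀ i| ≤ 1 * K :=
      mul_le_mul hc1 (hxi i) (abs_nonneg _) zero_le_one
    have b2 : |Real.sin (beta * t)| / beta * |(A.mulVec x₀) i|
        ≤ 1 / beta * ((|a| + |b| + |c|) * K) := by
      apply mul_le_mul _ (hAv i) (abs_nonneg _) (by positivity)
      exact (div_le_div_iff_of_pos_right hbeta).mpr hs1
    calc |Real.cos (beta * t) * x₀ i + Real.sin (beta * t) / beta * (A.mulVec x₀) i|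
        ≤ |Real.cos (beta * t) * x₀ i| + |Real.sin (beta * t) / beta * (A.mulVec x₀) i| :=
          abs_add_le _ _
      _ = |Real.cos (beta * t)| * |x₀ i| + |Real.sin (beta * t)| / beta * |(A.mulVec x₀) i| := by
          rw [abs_mul, abs_mul, abs_div, abs_of_pos hbeta]
      _ ≤ 1 * K + 1 / beta * ((|a| + |b| + |c|) * K) := by linarith
      _ = M * K := by rw [hMdef]; field_simp
  -- choose large time
  obtain ⟨n, hn⟩ := exists_nat_gt ((K + M * K) * beta ^ 2 * M / (2 * Real.pi * |c|))
  set T : ℝ := (Real.pi / 2 + n * (2 * Real.pi)) / beta with hT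
  have hpi := Real.pi_pos
  have hTpos : 0 < T := by
    rw [hT]
    have : (0:ℝ) ≤ n * (2 * Real.pi) := by positivity
    positivity
  have hT2 : beta * T = Real.pi / 2 + n * (2 * Real.pi) := by
    rw [hT, mul_comm, div_mul_cancel₀ _ hb]
  clear_value T
  clear_value M d w w' φ
  have hsinT : Real.sin (beta * T) = 1 := by
    rw [hT2, Real.sin_add_nat_mul_two_pi, Real.sin_pi_div_two]
  have hcabs : 0 < |c| := abs_pos.mpr hc0
  have hTlarge : (K + M * K) * M * beta < T * |c| := by
    rw [div_lt_iff₀ (by positivity : (0:ℝ) < 2 * Real.pi * |c|)] at hn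
    have h5 : (n:ℝ) * (2 * Real.pi * |c|) ≤ (Real.pi / 2 + n * (2 * Real.pi)) * |c| := by
      nlinarith [hpi, hcabs]
    have h4 : (K + M * K) * beta ^ 2 * M < (beta * T) * |c| := by
      rw [hT2]; linarith
    nlinarith [h4, hbeta]
  have hcontr := hx₀ T
  rw [mul_one] at hcontr
  have hφT1 : φ T 1 = T * c / (M * beta) := by
    simp only [hφ, hw, Pi.smul_apply, smul_eq_mul, Matrix.cons_val_one, Matrix.head_cons,
      hsinT, hd, Matrix.cons_val_zero]
    field_simp
    try ring
  have hφT1abs : |φ T 1| = T * |c| / (M * beta) := by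
    rw [hφT1, abs_div, abs_mul, abs_mul, abs_of_pos hTpos, abs_of_pos hMpos, abs_of_pos hbeta]
  have hlow : |φ T 1| - ‖(NormedSpace.exp (T • A)).mulVec x₀‖
      ≤ ‖φ T - (NormedSpace.exp (T • A)).mulVec x₀‖ := by
    have h1 : |φ T 1 - ((NormedSpace.exp (T • A)).mulVec x₀) 1|
        ≤ ‖φ T - (NormedSpace.exp (T • A)).mulVec x₀‖ := by
      simpa [Real.norm_eq_abs] using
        norm_le_pi_norm (φ T - (NormedSpace.exp (T • A)).mulVec x₀) 1
    have h2 : |((NormedSpace.exp (T • A)).mulVec x₀) 1|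
        ≤ ‖(NormedSpace.exp (T • A)).mulVec x₀‖ := by
      simpa [Real.norm_eq_abs] using norm_le_pi_norm ((NormedSpace.exp (T • A)).mulVec x₀) 1
    have h3 := abs_sub_abs_le_abs_sub (φ T 1) (((NormedSpace.exp (T • A)).mulVec x₀) 1)
    linarith
  have hup : T * |c| / (M * beta) ≤ K + M * K := by
    rw [hφT1abs] at hlow
    linarith [hXb T, hcontr, hlow]
  rw [div_le_iff₀ (by positivity : (0:ℝ) < M * beta)] at hup
  nlinarith [hTlarge, hup]
end
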